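/- arXiv:1006.0508 — 5 statements merged into one kernel-verified Lean document; each statement's English description precedes it below -/
import Mathlib

section
/- There is an injective group homomorphism φ from PSL₂(ℤ) into Thompson's group T with φ(A) = a and φ(B) = b; in particular, the subgroup of T generated by a and b is isomorphic to PSL₂(ℤ). -/
open scoped MatrixGroups

noncomputable section

/-- The circle `ℝ/ℤ`. -/
abbrev UnitCircle := AddCircle (1 : ℝ)

/-- A real number is dyadic if it is of the form `z / 2^n` with `z ∈ ℤ`. -/
def IsDyadic (x : ℝ) : Prop := ∃ (z : ℤ) (n : ℕ), x = (z : ℝ) / 2 ^ n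

/-- `F : ℝ → ℝ` is a lift of an element of Thompson's group `T`. -/
def IsThompsonLift (F : ℝ → ℝ) : Prop :=
  StrictMono F ∧ (∀ x : ℝ, F (x + 1) = F x + 1) ∧
  ∃ B : Finset ℝ, (↑B ⊆ Set.Ico (0 : ℝ) 1) ∧ (∀ x ∈ B, IsDyadic x ∧ IsDyadic (F x)) ∧
    ∀ x ∈ Set.Ico (0 : ℝ) 1, x ∉ B → ∃ (m : ℤ) (ε : ℝ), 0 < ε ∧
      ∀ y : ℝ, |y - x| < ε → F y = F x + (2 : ℝ) ^ m * (y - x)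

/-- A bijection of the circle `ℝ/ℤ` is an element of Thompson's group `T` if it is
induced by a piecewise linear dyadic orientation-preserving lift. -/
def IsThompsonElt (f : Equiv.Perm UnitCircle) : Prop :=
  ∃ F : ℝ → ℝ, IsThompsonLift F ∧
    ∀ x : ℝ, f ((x : UnitCircle)) = ((F x : ℝ) : UnitCircle)

/-- Thompson's group `T`, as a subgroup of the group of bijections of the circle. -/
def ThompsonT : Subgroup (Equiv.Perm UnitCircle) := Subgroup.closure {f | IsThompsonElt f}

/-- The piecewise linear map of `[0,1]` inducing the element `b` of `T`. -/
def bMap (x : ℝ) : ℝ :=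
  if x ≤ 1 / 2 then x / 2 + 3 / 4 else if x ≤ 3 / 4 then 2 * x - 1 else x - 1 / 4

/-- `a` is the rotation `x ↦ x + 1/2` of the circle. -/
def IsRotHalf (a : Equiv.Perm UnitCircle) : Prop :=
  ∀ x : ℝ, a ((x : UnitCircle)) = ((x + 1 / 2 : ℝ) : UnitCircle)

/-- `b` is the element of `T` induced by the piecewise linear map `bMap` of `[0,1]`. -/
def IsBElt (b : Equiv.Perm UnitCircle) : Prop :=
  ∀ x : ℝ, x ∈ Set.Icc (0 : ℝ) 1 → b ((x : UnitCircle)) = ((bMap x : ℝ) : UnitCircle)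

/-- The class `A` of the matrix `[[0,−1],[1,0]]` in `PSL₂(ℤ)`. -/
def Aelt : PSL(2, ℤ) :=
  QuotientGroup.mk (⟨!![0, -1; 1, 0], by norm_num [Matrix.det_fin_two_of]⟩ :
    Matrix.SpecialLinearGroup (Fin 2) ℤ)

/-- The class `B` of the matrix `[[0,−1],[1,1]]` in `PSL₂(ℤ)`. -/
def Belt : PSL(2, ℤ) :=
  QuotientGroup.mk (⟨!![0, -1; 1, 1], by norm_num [Matrix.det_fin_two_of]⟩ :
    Matrix.SpecialLinearGroup (Fin 2) ℤ)

/-! ### Auxiliary material -/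

section Aux

open Matrix ModularGroup Matrix.SpecialLinearGroup

/-- homomorphism from `ZMod n` (multiplicatively) determined by an element with `g ^ n = 1`. -/
def zmodHom (n : ℕ) [NeZero n] {G : Type*} [Group G] (g : G) (hg : g ^ n = 1) :
    Multiplicative (ZMod n) →* G where
  toFun x := g ^ (Multiplicative.toAdd x).val
  map_one' := by simp
  map_mul' x y := by
    show g ^ ((Multiplicative.toAdd x + Multiplicative.toAdd y).val) = _
    rw [ZMod.val_add, ← pow_eq_pow_mod _ hg, pow_add]

lemma zmodHom_apply (n : ℕ) [NeZero n] {G : Type*} [Group G] (g : G) (hg : g ^ n = 1)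
    (x : Multiplicative (ZMod n)) : zmodHom n g hg x = g ^ (Multiplicative.toAdd x).val := rfl

/-- the family of cyclic groups `C2`, `C3`. -/
abbrev Hfam : Bool → Type := fun i => Multiplicative (ZMod (cond i 2 3))

lemma val_of_ne_one_two {h : Multiplicative (ZMod 2)} (hne : h ≠ 1) :
    (Multiplicative.toAdd h).val = 1 := by
  have h0 : (Multiplicative.toAdd h) ≠ 0 := by
    intro hc
    exact hne (by simpa using congrArg Multiplicative.ofAdd hc)
  have h1 : (Multiplicative.toAdd h).val ≠ 0 := fun hc => h0 ((ZMod.val_eq_zero _).mp hc)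
  have h2 : (Multiplicative.toAdd h).val < 2 := ZMod.val_lt _
  omega

lemma val_of_ne_one_three {h : Multiplicative (ZMod 3)} (hne : h ≠ 1) :
    (Multiplicative.toAdd h).val = 1 ∨ (Multiplicative.toAdd h).val = 2 := by
  have h0 : (Multiplicative.toAdd h) ≠ 0 := by
    intro hc
    exact hne (by simpa using congrArg Multiplicative.ofAdd hc)
  have h1 : (Multiplicative.toAdd h).val ≠ 0 := fun hc => h0 ((ZMod.val_eq_zero _).mp hc)
  have h2 : (Multiplicative.toAdd h).val < 3 := ZMod.val_lt _
  omega

/-! #### Generation of `SL(2,ℤ)` by `S` and `T` -/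

lemma entry_ST (q : ℤ) (M : SL(2,ℤ)) :
    ((S * (T ^ (-q) * M)) : SL(2,ℤ)) 1 0 = M 0 0 - q * M 1 0 := by
  simp [coe_mul, coe_T_zpow, ModularGroup.coe_S, Matrix.mul_apply, Fin.sum_univ_succ,
    Matrix.vecMul, dotProduct]
  ring

lemma T_zpow_mem (q : ℤ) : (T ^ q : SL(2,ℤ)) ∈ Subgroup.closure {S, T} :=
  Subgroup.zpow_mem _ (Subgroup.subset_closure (by simp)) q

lemma SL2Z_gen (M : SL(2,ℤ)) : M ∈ Subgroup.closure {S, T} := by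
  have hS : S ∈ Subgroup.closure {S, T} := Subgroup.subset_closure (by simp)
  suffices h : ∀ n : ℕ, ∀ M : SL(2,ℤ), ((M : Matrix (Fin 2) (Fin 2) ℤ) 1 0).natAbs = n →
      M ∈ Subgroup.closure {S, T} from h _ M rfl
  intro n
  induction n using Nat.strong_induction_on with
  | _ n ih =>
    intro M hM
    by_cases hc : (M : Matrix (Fin 2) (Fin 2) ℤ) 1 0 = 0
    · have hdet : (M : Matrix (Fin 2) (Fin 2) ℤ) 0 0 * M 1 1 = 1 := by
        have := M.2
        rw [Matrix.det_fin_two] at this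
        rw [hc] at this; linarith
      rcases Int.mul_eq_one_iff_eq_one_or_neg_one.mp hdet with ⟨h1, h2⟩ | ⟨h1, h2⟩
      · have : M = T ^ ((M : Matrix (Fin 2) (Fin 2) ℤ) 0 1) := by
          apply Subtype.coe_injective
          show (M : Matrix (Fin 2) (Fin 2) ℤ) =
            ((T ^ ((M : Matrix (Fin 2) (Fin 2) ℤ) 0 1) : SL(2,ℤ)) : Matrix (Fin 2) (Fin 2) ℤ)
          rw [coe_T_zpow]
          ext i j
          fin_cases i <;> fin_cases j <;> simp [h1, h2, hc]
        rw [this]; exact T_zpow_mem _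
      · have : M = S * S * T ^ (-((M : Matrix (Fin 2) (Fin 2) ℤ) 0 1)) := by
          apply Subtype.coe_injective
          show (M : Matrix (Fin 2) (Fin 2) ℤ) =
            ((S * S * T ^ (-((M : Matrix (Fin 2) (Fin 2) ℤ) 0 1)) : SL(2,ℤ)) :
              Matrix (Fin 2) (Fin 2) ℤ)
          simp only [coe_mul, coe_T_zpow, ModularGroup.coe_S]
          ext i j
          fin_cases i <;> fin_cases j <;>
            simp [Matrix.mul_apply, Fin.sum_univ_succ, h1, h2, hc]
        rw [this]
        exact Subgroup.mul_mem _ (Subgroup.mul_mem _ hS hS) (T_zpow_mem _)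
    · set c : ℤ := (M : Matrix (Fin 2) (Fin 2) ℤ) 1 0 with hcdef
      set q : ℤ := (M : Matrix (Fin 2) (Fin 2) ℤ) 0 0 / c with hq
      set M₂ : SL(2,ℤ) := S * (T ^ (-q) * M) with hM2
      have hent : (M₂ : Matrix (Fin 2) (Fin 2) ℤ) 1 0
          = (M : Matrix (Fin 2) (Fin 2) ℤ) 0 0 % c := by
        rw [hM2, entry_ST, Int.emod_def]; ring
      have hlt : ((M₂ : Matrix (Fin 2) (Fin 2) ℤ) 1 0).natAbs < n := by
        rw [hent, ← hM]
        have h1 : 0 ≤ (M : Matrix (Fin 2) (Fin 2) ℤ) 0 0 % c := Int.emod_nonneg _ hc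
        have h2 : (M : Matrix (Fin 2) (Fin 2) ℤ) 0 0 % c < |c| := by
          have := Int.emod_lt ((M : Matrix (Fin 2) (Fin 2) ℤ) 0 0) hc
          rw [Int.abs_eq_natAbs]; exact this
        rw [Int.abs_eq_natAbs] at h2
        omega
      have hmem2 : M₂ ∈ Subgroup.closure {S, T} := ih _ hlt M₂ rfl
      have : M = T ^ q * (S⁻¹ * M₂) := by
        rw [hM2]; group
      rw [this]
      exact Subgroup.mul_mem _ (T_zpow_mem _)
        (Subgroup.mul_mem _ (Subgroup.inv_mem _ hS) hmem2)

/-! #### `PSL(2,ℤ)` facts -/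

def Smat : SL(2,ℤ) := ⟨!![0, -1; 1, 0], by norm_num [Matrix.det_fin_two_of]⟩
def Bmat : SL(2,ℤ) := ⟨!![0, -1; 1, 1], by norm_num [Matrix.det_fin_two_of]⟩

lemma Smat_eq_S : Smat = S := by
  apply Subtype.coe_injective; rfl

lemma Aelt_eq : Aelt = QuotientGroup.mk Smat := rfl
lemma Belt_eq : Belt = QuotientGroup.mk Bmat := rfl

lemma neg_one_mem_center : (-1 : SL(2,ℤ)) ∈ Subgroup.center (SL(2,ℤ)) := by
  rw [Matrix.SpecialLinearGroup.mem_center_iff]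
  refine ⟨-1, by norm_num, ?_⟩
  show Matrix.scalar (Fin 2) (-1) = ((-1 : SL(2,ℤ)) : Matrix (Fin 2) (Fin 2) ℤ)
  simp [Matrix.scalar]

lemma Smat_sq : Smat * Smat = -1 := by
  apply Subtype.coe_injective
  show ((Smat : Matrix (Fin 2) (Fin 2) ℤ) * (Smat : Matrix (Fin 2) (Fin 2) ℤ)) =
    ((-1 : SL(2,ℤ)) : Matrix (Fin 2) (Fin 2) ℤ)
  show (!![0, -1; 1, 0] * !![0, -1; 1, 0] : Matrix (Fin 2) (Fin 2) ℤ) = _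
  ext i j
  fin_cases i <;> fin_cases j <;> simp [Matrix.mul_apply, Fin.sum_univ_succ]

lemma Bmat_cube : Bmat * Bmat * Bmat = -1 := by
  apply Subtype.coe_injective
  show ((Bmat : Matrix (Fin 2) (Fin 2) ℤ) * (Bmat : Matrix (Fin 2) (Fin 2) ℤ) *
    (Bmat : Matrix (Fin 2) (Fin 2) ℤ)) = ((-1 : SL(2,ℤ)) : Matrix (Fin 2) (Fin 2) ℤ)
  show (!![0, -1; 1, 1] * !![0, -1; 1, 1] * !![0, -1; 1, 1] : Matrix (Fin 2) (Fin 2) ℤ) = _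
  ext i j
  fin_cases i <;> fin_cases j <;> simp [Matrix.mul_apply, Fin.sum_univ_succ]

lemma Aelt_sq : Aelt ^ 2 = 1 := by
  rw [pow_two, Aelt_eq]
  show QuotientGroup.mk (Smat * Smat) = 1
  rw [Smat_sq, QuotientGroup.eq_one_iff]
  exact neg_one_mem_center

lemma Belt_cube : Belt ^ 3 = 1 := by
  rw [pow_succ, pow_two, Belt_eq]
  show QuotientGroup.mk (Bmat * Bmat * Bmat) = 1
  rw [Bmat_cube, QuotientGroup.eq_one_iff]
  exact neg_one_mem_center

lemma Smat_mul_T : Smat * T = Bmat := by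
  apply Subtype.coe_injective
  show ((Smat : Matrix (Fin 2) (Fin 2) ℤ) * (T : Matrix (Fin 2) (Fin 2) ℤ)) =
    (Bmat : Matrix (Fin 2) (Fin 2) ℤ)
  show (!![0, -1; 1, 0] * !![1, 1; 0, 1] : Matrix (Fin 2) (Fin 2) ℤ) = !![0, -1; 1, 1]
  ext i j
  fin_cases i <;> fin_cases j <;> simp [Matrix.mul_apply, Fin.sum_univ_succ]

lemma closure_Aelt_Belt : Subgroup.closure ({Aelt, Belt} : Set (PSL(2, ℤ))) = ⊤ := by
  rw [Subgroup.eq_top_iff']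
  intro g
  induction g using QuotientGroup.induction_on with
  | H M =>
    have key : Subgroup.closure ({S, T} : Set (SL(2,ℤ))) ≤
        Subgroup.comap (QuotientGroup.mk' (Subgroup.center (SL(2,ℤ))))
          (Subgroup.closure ({Aelt, Belt} : Set (PSL(2, ℤ)))) := by
      rw [Subgroup.closure_le]
      rintro x (rfl | rfl)
      · refine Subgroup.mem_comap.mpr ?_
        rw [QuotientGroup.mk'_apply, ← Smat_eq_S, ← Aelt_eq]
        exact Subgroup.subset_closure (by simp)
      · refine Subgroup.mem_comap.mpr ?_
        rw [QuotientGroup.mk'_apply]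
        have hT : (QuotientGroup.mk T : PSL(2, ℤ)) = Aelt⁻¹ * Belt := by
          rw [Aelt_eq, Belt_eq]
          show _ = (QuotientGroup.mk Smat)⁻¹ * QuotientGroup.mk Bmat
          rw [← QuotientGroup.mk_inv, ← QuotientGroup.mk_mul]
          congr 1
          rw [← Smat_mul_T, ← mul_assoc, inv_mul_cancel, one_mul]
        rw [hT]
        exact Subgroup.mul_mem _
          (Subgroup.inv_mem _ (Subgroup.subset_closure (by simp)))
          (Subgroup.subset_closure (by simp))
    exact key (SL2Z_gen M)

/-! #### action of `PSL(2,ℤ)` on the upper half plane and ping-pong -/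

lemma center_le_ker :
    Subgroup.center (SL(2,ℤ)) ≤ (MulAction.toPermHom (SL(2,ℤ)) UpperHalfPlane).ker := by
  intro g hg
  rw [Matrix.SpecialLinearGroup.mem_center_iff] at hg
  obtain ⟨r, hr, hrg⟩ := hg
  simp only [Fintype.card_fin] at hr
  have hr' : r = 1 ∨ r = -1 := by
    have : (r - 1) * (r + 1) = 0 := by ring_nf; linarith [hr]
    rcases mul_eq_zero.mp this with h | h
    · left; linarith
    · right; linarith
  have hperm : ∀ z : UpperHalfPlane, g • z = z := by
    intro z
    rcases hr' with h | h
    · have : g = 1 := by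
        apply Subtype.coe_injective
        show (g : Matrix (Fin 2) (Fin 2) ℤ) = ((1 : SL(2,ℤ)) : Matrix (Fin 2) (Fin 2) ℤ)
        rw [← hrg, h]
        simp
      rw [this, one_smul]
    · have : g = -1 := by
        apply Subtype.coe_injective
        show (g : Matrix (Fin 2) (Fin 2) ℤ) = ((-1 : SL(2,ℤ)) : Matrix (Fin 2) (Fin 2) ℤ)
        rw [← hrg, h]
        simp [Matrix.scalar]
      rw [this]
      have := ModularGroup.SL_neg_smul 1 z
      rw [this, one_smul]
  rw [MonoidHom.mem_ker]
  exact Equiv.ext fun z => hperm z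

/-- `PSL(2,ℤ) →* Perm ℍ` -/
def pslPerm : PSL(2, ℤ) →* Equiv.Perm UpperHalfPlane :=
  QuotientGroup.lift _ (MulAction.toPermHom (SL(2,ℤ)) UpperHalfPlane) center_le_ker

instance pslAction : MulAction (PSL(2, ℤ)) UpperHalfPlane :=
  MulAction.compHom _ pslPerm

lemma psl_smul (g : SL(2,ℤ)) (z : UpperHalfPlane) :
    (QuotientGroup.mk g : PSL(2, ℤ)) • z = g • z := rfl

lemma S_smul_re {z : UpperHalfPlane} (h : z.re < 0) : 0 < (Smat • z).re := by
  rw [UpperHalfPlane.specialLinearGroup_apply]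
  show (((algebraMap ℤ ℝ (Smat 0 0) : ℂ) * z + (algebraMap ℤ ℝ (Smat 0 1) : ℂ)) /
      ((algebraMap ℤ ℝ (Smat 1 0) : ℂ) * z + (algebraMap ℤ ℝ (Smat 1 1) : ℂ))).re > 0
  have e0 : (Smat 0 0 : ℤ) = 0 := rfl
  have e1 : (Smat 0 1 : ℤ) = -1 := rfl
  have e2 : (Smat 1 0 : ℤ) = 1 := rfl
  have e3 : (Smat 1 1 : ℤ) = 0 := rfl
  rw [e0, e1, e2, e3]
  push_cast
  simp only [zero_mul, zero_add, one_mul, add_zero]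
  rw [Complex.div_re]
  have hn : 0 < Complex.normSq (z : ℂ) := z.normSq_pos
  have hre : ((-1 : ℂ)).re = -1 := by norm_num
  have him : ((-1 : ℂ)).im = 0 := by norm_num
  rw [hre, him, UpperHalfPlane.coe_re, UpperHalfPlane.coe_im]
  rw [zero_mul, zero_div, add_zero]
  have : 0 < -z.re := by linarith
  rw [neg_one_mul]
  exact div_pos this hn

lemma B_smul_re {z : UpperHalfPlane} (h : 0 < z.re) : (Bmat • z).re < 0 := by
  rw [UpperHalfPlane.specialLinearGroup_apply]
  show (((algebraMap ℤ ℝ (Bmat 0 0) : ℂ) * z + (algebraMap ℤ ℝ (Bmat 0 1) : ℂ)) /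
      ((algebraMap ℤ ℝ (Bmat 1 0) : ℂ) * z + (algebraMap ℤ ℝ (Bmat 1 1) : ℂ))).re < 0
  have e0 : (Bmat 0 0 : ℤ) = 0 := rfl
  have e1 : (Bmat 0 1 : ℤ) = -1 := rfl
  have e2 : (Bmat 1 0 : ℤ) = 1 := rfl
  have e3 : (Bmat 1 1 : ℤ) = 1 := rfl
  rw [e0, e1, e2, e3]
  push_cast
  simp only [zero_mul, zero_add, one_mul]
  rw [Complex.div_re]
  have hd : ((z : ℂ) + 1) ≠ 0 := by
    intro hc
    have := congrArg Complex.im hc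
    simp [UpperHalfPlane.coe_im] at this
    exact z.im_ne_zero this
  have hn : 0 < Complex.normSq ((z : ℂ) + 1) := Complex.normSq_pos.mpr hd
  simp only [Complex.neg_re, Complex.one_re, Complex.neg_im, Complex.one_im, Complex.add_re,
    Complex.add_im, UpperHalfPlane.coe_re, UpperHalfPlane.coe_im, neg_zero, zero_mul, zero_div,
    add_zero]
  have hnum : -1 * (z.re + 1) < 0 := by linarith
  calc -1 * (z.re + 1) / Complex.normSq ((z:ℂ) + 1) < 0 := div_neg_of_neg_of_pos hnum hn

lemma B2_smul_re {z : UpperHalfPlane} (h : 0 < z.re) : ((Bmat * Bmat) • z).re < 0 := by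
  have hBB : Bmat * Bmat = id (α := SL(2,ℤ)) ⟨!![-1, -1; 1, 0], by norm_num [Matrix.det_fin_two_of]⟩ := by
    apply Subtype.coe_injective
    show ((Bmat : Matrix (Fin 2) (Fin 2) ℤ) * (Bmat : Matrix (Fin 2) (Fin 2) ℤ)) = _
    show (!![0, -1; 1, 1] * !![0, -1; 1, 1] : Matrix (Fin 2) (Fin 2) ℤ) = _
    norm_num [Matrix.mul_fin_two]
    rfl
  rw [hBB, UpperHalfPlane.specialLinearGroup_apply]
  show ((((-1 : ℤ) : ℝ) * (z:ℂ) + ((-1 : ℤ) : ℝ)) /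
      (((1 : ℤ) : ℝ) * (z:ℂ) + ((0 : ℤ) : ℝ))).re < 0
  push_cast
  simp only [one_mul, add_zero, neg_one_mul]
  rw [Complex.div_re]
  have hn : 0 < Complex.normSq (z : ℂ) := z.normSq_pos
  simp only [Complex.add_re, Complex.add_im, Complex.neg_re, Complex.neg_im, Complex.one_re,
    Complex.one_im, UpperHalfPlane.coe_re, UpperHalfPlane.coe_im, add_zero, neg_zero]
  have him := z.im_pos
  have : (-z.re + -1) * z.re / Complex.normSq (z:ℂ) + -z.im * z.im / Complex.normSq (z:ℂ)
      = (-(z.re * z.re) - z.re - z.im * z.im) / Complex.normSq (z:ℂ) := by ring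
  rw [this]
  apply div_neg_of_neg_of_pos _ hn
  nlinarith

/-! #### circle facts -/

lemma coe_add_int (r : ℝ) (n : ℤ) : ((r + n : ℝ) : UnitCircle) = (r : UnitCircle) := by
  have h0 : ((n : ℝ) : UnitCircle) = 0 := by
    rw [AddCircle.coe_eq_zero_iff]
    exact ⟨n, by simp⟩
  have : ((r + n : ℝ) : UnitCircle) = (r : UnitCircle) + ((n:ℝ) : UnitCircle) := rfl
  rw [this, h0, add_zero]

lemma coe_fract (x : ℝ) : ((Int.fract x : ℝ) : UnitCircle) = (x : UnitCircle) := by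
  have : x = Int.fract x + (⌊x⌋ : ℤ) := by
    rw [Int.fract]; ring
  conv_rhs => rw [this]
  rw [coe_add_int]

lemma coe_eq_coe {x y : ℝ} (hx : x ∈ Set.Ico (0:ℝ) 1) (hy : y ∈ Set.Ico (0:ℝ) 1) :
    (x : UnitCircle) = (y : UnitCircle) ↔ x = y := by
  have := AddCircle.coe_eq_coe_iff_of_mem_Ico (p := (1:ℝ)) (a := 0)
    (x := x) (y := y) (by simpa using hx) (by simpa using hy)
  simpa using this

lemma bMap_mem_Icc {x : ℝ} (h : x ∈ Set.Icc (0:ℝ) 1) : bMap x ∈ Set.Icc (0:ℝ) 1 := by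
  obtain ⟨h0, h1⟩ := h
  unfold bMap
  split_ifs <;> constructor <;> linarith

lemma bMap_eval1 {y : ℝ} (h : y ≤ 1/2) : bMap y = y/2 + 3/4 := if_pos h

lemma bMap_eval2 {y : ℝ} (h1 : ¬ y ≤ 1/2) (h2 : y ≤ 3/4) : bMap y = 2*y - 1 := by
  unfold bMap; rw [if_neg h1, if_pos h2]

lemma bMap_eval3 {y : ℝ} (h1 : ¬ y ≤ 1/2) (h2 : ¬ y ≤ 3/4) : bMap y = y - 1/4 := by
  unfold bMap; rw [if_neg h1, if_neg h2]

lemma bMap_triple {y : ℝ} (h0 : 0 ≤ y) (h1 : y < 1) :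
    bMap (bMap (bMap y)) = y ∨ bMap (bMap (bMap y)) = y + 1 := by
  rcases eq_or_lt_of_le h0 with h0' | h0'
  · right
    rw [← h0']
    have e1 : bMap 0 = 3/4 := by rw [bMap_eval1 (by norm_num)]; norm_num
    have e2 : bMap (3/4 : ℝ) = 1/2 := by rw [bMap_eval2 (by norm_num) (by norm_num)]; norm_num
    have e3 : bMap (1/2 : ℝ) = 1 := by rw [bMap_eval1 (by norm_num)]; norm_num
    rw [e1, e2, e3]; norm_num
  by_cases hA : y ≤ 1/2
  · have e1 : bMap y = y/2 + 3/4 := bMap_eval1 hA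
    have e2 : bMap (y/2 + 3/4) = y/2 + 1/2 := by
      rw [bMap_eval3 (not_le.mpr (by linarith)) (not_le.mpr (by linarith))]; ring
    have e3 : bMap (y/2 + 1/2) = y := by
      rw [bMap_eval2 (not_le.mpr (by linarith)) (by linarith)]; ring
    left; rw [e1, e2, e3]
  have hA' : 1/2 < y := not_le.mp hA
  by_cases hB : y ≤ 3/4
  · have e1 : bMap y = 2*y - 1 := bMap_eval2 hA hB
    have e2 : bMap (2*y - 1) = y + 1/4 := by
      rw [bMap_eval1 (by linarith)]; ring
    have e3 : bMap (y + 1/4) = y := by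
      rw [bMap_eval3 (not_le.mpr (by linarith)) (not_le.mpr (by linarith))]; ring
    left; rw [e1, e2, e3]
  · have hB' : 3/4 < y := not_le.mp hB
    have e1 : bMap y = y - 1/4 := bMap_eval3 hA hB
    have e2 : bMap (y - 1/4) = 2*y - 3/2 := by
      rw [bMap_eval2 (not_le.mpr (by linarith)) (by linarith)]; ring
    have e3 : bMap (2*y - 3/2) = y := by
      rw [bMap_eval1 (by linarith)]; ring
    left; rw [e1, e2, e3]

lemma b_cube {b : Equiv.Perm UnitCircle} (hb : IsBElt b) : b ^ 3 = 1 := by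
  rw [pow_succ, pow_two]
  apply Equiv.ext
  intro z
  induction z using QuotientAddGroup.induction_on with
  | H x =>
    set y := Int.fract x with hy
    have hy0 : 0 ≤ y := Int.fract_nonneg x
    have hy1 : y < 1 := Int.fract_lt_one x
    have hyI : y ∈ Set.Icc (0:ℝ) 1 := ⟨hy0, le_of_lt hy1⟩
    have hcx : ((x : ℝ) : UnitCircle) = ((y : ℝ) : UnitCircle) := (coe_fract x).symm
    simp only [Equiv.Perm.mul_apply, Equiv.Perm.coe_one, id_eq]
    show b (b (b ((x : ℝ) : UnitCircle))) = ((x : ℝ) : UnitCircle)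
    rw [hcx, hb y hyI, hb _ (bMap_mem_Icc hyI), hb _ (bMap_mem_Icc (bMap_mem_Icc hyI))]
    rcases bMap_triple hy0 hy1 with h | h
    · rw [h]
    · rw [h]
      have h2 := coe_add_int y 1
      simpa using h2

lemma a_sq {a : Equiv.Perm UnitCircle} (ha : IsRotHalf a) : a ^ 2 = 1 := by
  rw [pow_two]
  apply Equiv.ext
  intro z
  induction z using QuotientAddGroup.induction_on with
  | H x =>
    show a (a ((x : ℝ) : UnitCircle)) = ((x:ℝ) : UnitCircle)
    rw [ha x, ha _]
    have : x + 1/2 + 1/2 = x + (1:ℤ) := by push_cast; ring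
    rw [this, coe_add_int]

/-! #### Thompson lifts -/

lemma a_thompson {a : Equiv.Perm UnitCircle} (ha : IsRotHalf a) : IsThompsonElt a := by
  refine ⟨fun x => x + 1/2, ⟨fun x y hxy => by simpa using hxy, fun x => by ring, ∅, ?_, ?_, ?_⟩,
    fun x => ha x⟩
  · simp
  · simp
  · intro x _ _
    exact ⟨0, 1, one_pos, fun y _ => by rw [zpow_zero, one_mul]; ring⟩

/-- the branch function of the lift of b on [0,1) -/
def Gfun (t : ℝ) : ℝ := if t ≤ 1/2 then t/2 + 3/4 else if t ≤ 3/4 then 2*t else t + 3/4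

/-- the lift of b -/
def Flift (x : ℝ) : ℝ := ⌊x⌋ + Gfun (Int.fract x)

lemma Gfun_lb {t : ℝ} (h0 : 0 ≤ t) : 3/4 ≤ Gfun t := by
  unfold Gfun; split_ifs <;> linarith

lemma Gfun_ub {t : ℝ} (h1 : t < 1) : Gfun t < 7/4 := by
  unfold Gfun; split_ifs <;> linarith

lemma Gfun_mono {s t : ℝ} (h0 : 0 ≤ s) (h1 : t < 1) (hst : s < t) : Gfun s < Gfun t := by
  unfold Gfun; split_ifs <;> linarith

lemma Flift_strictMono : StrictMono Flift := by
  intro x y hxy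
  unfold Flift
  have hfx := Int.floor_le_floor (le_of_lt hxy)
  rcases eq_or_lt_of_le hfx with he | hlt
  · have hc : (⌊x⌋ : ℝ) = (⌊y⌋ : ℝ) := by exact_mod_cast he
    have hfr : Int.fract x < Int.fract y := by
      unfold Int.fract; linarith
    have := Gfun_mono (Int.fract_nonneg x) (Int.fract_lt_one y) hfr
    linarith
  · have h1 : Gfun (Int.fract x) < 7/4 := Gfun_ub (Int.fract_lt_one x)
    have h2 : 3/4 ≤ Gfun (Int.fract y) := Gfun_lb (Int.fract_nonneg y)
    have : (⌊x⌋ : ℝ) + 1 ≤ (⌊y⌋ : ℝ) := by exact_mod_cast hlt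
    linarith

lemma Flift_add_one (x : ℝ) : Flift (x + 1) = Flift x + 1 := by
  unfold Flift
  rw [Int.fract_add_one, Int.floor_add_one]
  push_cast
  ring

lemma fract_eq_self_of_Ico {y : ℝ} (h : y ∈ Set.Ico (0:ℝ) 1) : Int.fract y = y :=
  Int.fract_eq_self.mpr ⟨h.1, h.2⟩

lemma Flift_eq_of_Ico {y : ℝ} (h : y ∈ Set.Ico (0:ℝ) 1) : Flift y = Gfun y := by
  unfold Flift
  rw [fract_eq_self_of_Ico h, Int.floor_eq_zero_iff.mpr h]
  norm_num

lemma b_thompson {b : Equiv.Perm UnitCircle} (hb : IsBElt b) : IsThompsonElt b := by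
  refine ⟨Flift, ⟨Flift_strictMono, Flift_add_one, {0, 1/2, 3/4}, ?_, ?_, ?_⟩, ?_⟩
  · intro x hx
    simp only [Finset.coe_insert, Set.mem_insert_iff, Finset.coe_singleton,
      Set.mem_singleton_iff] at hx
    rcases hx with rfl | rfl | rfl <;> norm_num
  · intro x hx
    simp only [Finset.mem_insert, Finset.mem_singleton] at hx
    rcases hx with rfl | rfl | rfl
    · refine ⟨⟨0, 0, by norm_num⟩, 3, 2, ?_⟩
      rw [Flift_eq_of_Ico (by norm_num)]
      norm_num [Gfun]
    · refine ⟨⟨1, 1, by norm_num⟩, 1, 0, ?_⟩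
      rw [Flift_eq_of_Ico (by norm_num)]
      norm_num [Gfun]
    · refine ⟨⟨3, 2, by norm_num⟩, 3, 1, ?_⟩
      rw [Flift_eq_of_Ico (by norm_num)]
      norm_num [Gfun]
  · intro x hx hxB
    simp only [Finset.mem_insert, Finset.mem_singleton, not_or] at hxB
    obtain ⟨hx0, hx2, hx3⟩ := hxB
    obtain ⟨hxl, hxu⟩ := hx
    have hx0' : 0 < x := lt_of_le_of_ne hxl (Ne.symm hx0)
    by_cases hA : x < 1/2
    · refine ⟨-1, min x (1/2 - x), lt_min hx0' (by linarith), fun y hy => ?_⟩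
      rw [abs_lt] at hy
      have hy1 : 0 < y := by
        have := min_le_left x (1/2 - x); linarith [hy.1]
      have hy2 : y < 1/2 := by
        have := min_le_right x (1/2 - x); linarith [hy.2]
      rw [Flift_eq_of_Ico ⟨le_of_lt hy1, by linarith⟩, Flift_eq_of_Ico ⟨hxl, by linarith⟩]
      unfold Gfun
      rw [if_pos (le_of_lt hy2), if_pos (by linarith)]
      rw [_root_.zpow_neg_one]
      norm_num
      ring
    · have hA' : 1/2 < x := lt_of_le_of_ne (not_lt.mp hA) (Ne.symm hx2)
      by_cases hB : x < 3/4
      · refine ⟨1, min (x - 1/2) (3/4 - x), lt_min (by linarith) (by linarith),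
          fun y hy => ?_⟩
        rw [abs_lt] at hy
        have hy1 : 1/2 < y := by
          have := min_le_left (x - 1/2) (3/4 - x); linarith [hy.1]
        have hy2 : y < 3/4 := by
          have := min_le_right (x - 1/2) (3/4 - x); linarith [hy.2]
        rw [Flift_eq_of_Ico ⟨by linarith, by linarith⟩, Flift_eq_of_Ico ⟨by linarith, by linarith⟩]
        unfold Gfun
        rw [if_neg (show ¬ (y ≤ 1/2) by push_neg; linarith), if_pos (le_of_lt hy2),
          if_neg (show ¬ (x ≤ 1/2) by push_neg; linarith), if_pos (by linarith)]
        norm_num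
        ring
      · have hB' : 3/4 < x := lt_of_le_of_ne (not_lt.mp hB) (Ne.symm hx3)
        refine ⟨0, min (x - 3/4) (1 - x), lt_min (by linarith) (by linarith), fun y hy => ?_⟩
        rw [abs_lt] at hy
        have hy1 : 3/4 < y := by
          have := min_le_left (x - 3/4) (1 - x); linarith [hy.1]
        have hy2 : y < 1 := by
          have := min_le_right (x - 3/4) (1 - x); linarith [hy.2]
        rw [Flift_eq_of_Ico ⟨by linarith, hy2⟩, Flift_eq_of_Ico ⟨by linarith, hxu⟩]
        unfold Gfun
        rw [if_neg (show ¬ (y ≤ 1/2) by push_neg; linarith),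
          if_neg (show ¬ (y ≤ 3/4) by push_neg; linarith),
          if_neg (show ¬ (x ≤ 1/2) by push_neg; linarith),
          if_neg (show ¬ (x ≤ 3/4) by push_neg; linarith)]
        norm_num
        ring
  · intro x
    have hfr : ((x:ℝ) : UnitCircle) = ((Int.fract x : ℝ) : UnitCircle) := (coe_fract x).symm
    have hIcc : Int.fract x ∈ Set.Icc (0:ℝ) 1 :=
      ⟨Int.fract_nonneg x, le_of_lt (Int.fract_lt_one x)⟩
    rw [hfr, hb _ hIcc]
    have hG : Gfun (Int.fract x) = bMap (Int.fract x) ∨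
        Gfun (Int.fract x) = bMap (Int.fract x) + 1 := by
      unfold Gfun bMap
      split_ifs <;> [left; right; right] <;> ring
    have hF : ((Flift x : ℝ) : UnitCircle) = ((Gfun (Int.fract x) : ℝ) : UnitCircle) := by
      unfold Flift
      rw [add_comm]
      exact coe_add_int _ _
    rw [hF]
    rcases hG with h | h
    · rw [h]
    · rw [h]
      have := coe_add_int (bMap (Int.fract x)) 1
      simpa using this

/-! #### the free product `C2 * C3` and its two realizations -/

open Monoid Pointwise

def fPSL : ∀ i : Bool, Hfam i →* PSL(2, ℤ) := fun i =>
  match i with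
  | true => zmodHom 2 Aelt Aelt_sq
  | false => zmodHom 3 Belt Belt_cube

lemma fPSL_lift_injective : Function.Injective ⇑(CoprodI.lift fPSL) := by
  classical
  apply CoprodI.lift_injective_of_ping_pong fPSL
    (Or.inr ⟨false, by
      rw [show (Cardinal.mk (Hfam false)) = Cardinal.mk (ZMod 3) from rfl,
        Cardinal.mk_fintype, ZMod.card]
      norm_num⟩)
    (fun i => cond i {z : UpperHalfPlane | 0 < z.re} {z : UpperHalfPlane | z.re < 0})
  · -- nonempty
    intro i
    cases i
    · refine ⟨⟨(-1 : ℂ) + Complex.I, by simp⟩, ?_⟩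
      simp only [Bool.cond_false, Set.mem_setOf_eq]
      show ((-1 : ℂ) + Complex.I).re < 0
      simp
    · refine ⟨⟨(1 : ℂ) + Complex.I, by simp⟩, ?_⟩
      simp only [Bool.cond_true, Set.mem_setOf_eq]
      show 0 < ((1 : ℂ) + Complex.I).re
      simp
  · -- disjoint
    intro i j hij
    cases i <;> cases j <;> first
      | exact absurd rfl hij
      | (simp only [Function.onFun, Bool.cond_true, Bool.cond_false]
         rw [Set.disjoint_left]
         intro z hz hz'
         simp only [Set.mem_setOf_eq] at hz hz'
         linarith)
  · -- ping pong
    intro i j hij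
    cases i <;> cases j
    · exact absurd rfl hij
    · -- i = false (B side), j = true
      intro h hne w hw
      obtain ⟨z, hz, rfl⟩ := hw
      simp only [Bool.cond_true, Set.mem_setOf_eq] at hz
      simp only [Bool.cond_false, Set.mem_setOf_eq]
      let h' : Multiplicative (ZMod 3) := h
      have hne' : h' ≠ 1 := hne
      have hfh : fPSL false h = Belt ^ (Multiplicative.toAdd h').val := rfl
      rcases val_of_ne_one_three hne' with hv | hv
      · rw [hfh, hv, pow_one, Belt_eq, psl_smul]
        exact B_smul_re hz
      · rw [hfh, hv, pow_two, Belt_eq, ← QuotientGroup.mk_mul, psl_smul]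
        exact B2_smul_re hz
    · -- i = true (A side), j = false
      intro h hne w hw
      obtain ⟨z, hz, rfl⟩ := hw
      simp only [Bool.cond_false, Set.mem_setOf_eq] at hz
      simp only [Bool.cond_true, Set.mem_setOf_eq]
      let h' : Multiplicative (ZMod 2) := h
      have hne' : h' ≠ 1 := hne
      have hfh : fPSL true h = Aelt ^ (Multiplicative.toAdd h').val := rfl
      rw [hfh, val_of_ne_one_two hne', pow_one, Aelt_eq, psl_smul]
      exact S_smul_re hz
    · exact absurd rfl hij

def fCirc (a b : Equiv.Perm UnitCircle) (ha2 : a ^ 2 = 1) (hb3 : b ^ 3 = 1) :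
    ∀ i : Bool, Hfam i →* Equiv.Perm UnitCircle := fun i =>
  match i with
  | true => zmodHom 2 a ha2
  | false => zmodHom 3 b hb3

lemma fCirc_lift_injective {a b : Equiv.Perm UnitCircle} (ha : IsRotHalf a) (hb : IsBElt b)
    (ha2 : a ^ 2 = 1) (hb3 : b ^ 3 = 1) :
    Function.Injective ⇑(CoprodI.lift (fCirc a b ha2 hb3)) := by
  classical
  apply CoprodI.lift_injective_of_ping_pong (fCirc a b ha2 hb3)
    (Or.inr ⟨false, by
      rw [show (Cardinal.mk (Hfam false)) = Cardinal.mk (ZMod 3) from rfl,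
        Cardinal.mk_fintype, ZMod.card]
      norm_num⟩)
    (fun i => cond i ((fun x : ℝ => (x : UnitCircle)) '' Set.Ioo 0 (1/2))
      ((fun x : ℝ => (x : UnitCircle)) '' Set.Ioo (1/2) 1))
  · intro i
    cases i
    · refine ⟨((3/4 : ℝ) : UnitCircle), ?_⟩
      simp only [Bool.cond_false]
      exact ⟨3/4, by norm_num, rfl⟩
    · refine ⟨((1/4 : ℝ) : UnitCircle), ?_⟩
      simp only [Bool.cond_true]
      exact ⟨1/4, by norm_num, rfl⟩
  · intro i j hij
    have key : Disjoint ((fun x : ℝ => (x : UnitCircle)) '' Set.Ioo 0 (1/2))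
        ((fun x : ℝ => (x : UnitCircle)) '' Set.Ioo (1/2) 1) := by
      rw [Set.disjoint_left]
      rintro z ⟨x, hx, rfl⟩ ⟨y, hy, hyx⟩
      rw [coe_eq_coe ⟨by linarith [hy.1], hy.2⟩ ⟨le_of_lt hx.1, by linarith [hx.2]⟩] at hyx
      rw [hyx] at hy
      linarith [hy.1, hx.2]
    cases i <;> cases j
    · exact absurd rfl hij
    · simpa only [Function.onFun, Bool.cond_true, Bool.cond_false] using key.symm
    · simpa only [Function.onFun, Bool.cond_true, Bool.cond_false] using key
    · exact absurd rfl hij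
  · intro i j hij
    cases i <;> cases j
    · exact absurd rfl hij
    · -- i = false (b side), j = true
      intro h hne w hw
      obtain ⟨z, hz, rfl⟩ := hw
      simp only [Bool.cond_true] at hz
      obtain ⟨x, hx, rfl⟩ := hz
      simp only [Bool.cond_false]
      have hxIcc : x ∈ Set.Icc (0:ℝ) 1 := ⟨le_of_lt hx.1, by linarith [hx.2]⟩
      have hb1 : bMap x = x/2 + 3/4 := bMap_eval1 (by linarith [hx.2])
      let h' : Multiplicative (ZMod 3) := h
      have hne' : h' ≠ 1 := hne
      have hfh : fCirc a b ha2 hb3 false h = b ^ (Multiplicative.toAdd h').val := rfl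
      rcases val_of_ne_one_three hne' with hv | hv
      · rw [hfh, hv, pow_one, Equiv.Perm.smul_def, hb x hxIcc, hb1]
        exact ⟨x/2 + 3/4, ⟨by linarith [hx.1], by linarith [hx.2]⟩, rfl⟩
      · rw [hfh, hv, pow_two, Equiv.Perm.smul_def, Equiv.Perm.mul_apply, hb x hxIcc, hb1,
          hb _ ⟨by linarith [hx.1], by linarith [hx.2]⟩,
          bMap_eval3 (by push_neg; linarith [hx.1]) (by push_neg; linarith [hx.1])]
        exact ⟨x/2 + 3/4 - 1/4, ⟨by linarith [hx.1], by linarith [hx.2]⟩, rfl⟩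
    · -- i = true (a side), j = false
      intro h hne w hw
      obtain ⟨z, hz, rfl⟩ := hw
      simp only [Bool.cond_false] at hz
      obtain ⟨x, hx, rfl⟩ := hz
      simp only [Bool.cond_true]
      let h' : Multiplicative (ZMod 2) := h
      have hne' : h' ≠ 1 := hne
      have hfh : fCirc a b ha2 hb3 true h = a ^ (Multiplicative.toAdd h').val := rfl
      rw [hfh, val_of_ne_one_two hne', pow_one, Equiv.Perm.smul_def, ha x]
      refine ⟨x - 1/2, ⟨by linarith [hx.1], by linarith [hx.2]⟩, ?_⟩
      show ((x - 1/2 : ℝ) : UnitCircle) = ((x + 1/2 : ℝ) : UnitCircle)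
      rw [show (x + 1/2 : ℝ) = (x - 1/2) + ((1 : ℤ) : ℝ) by push_cast; ring, coe_add_int]
    · exact absurd rfl hij

end Aux

/-- There is an injective group homomorphism `φ` from `PSL₂(ℤ)` into Thompson's
group `T` with `φ(A) = a` and `φ(B) = b`; in particular the subgroup of `T`
generated by `a` and `b` is isomorphic to `PSL₂(ℤ)`. -/
theorem psl2_embeds_in_T (a b : Equiv.Perm UnitCircle)
    (ha : IsRotHalf a) (hb : IsBElt b) :
    ∃ φ : PSL(2, ℤ) →* Equiv.Perm UnitCircle,
      Function.Injective φ ∧ φ Aelt = a ∧ φ Belt = b ∧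
      (∀ g : PSL(2, ℤ), φ g ∈ ThompsonT) ∧
      Nonempty (PSL(2, ℤ) ≃* (Subgroup.closure {a, b} : Subgroup (Equiv.Perm UnitCircle))) := by
  classical
  have ha2 : a ^ 2 = 1 := a_sq ha
  have hb3 : b ^ 3 = 1 := b_cube hb
  set L : Monoid.CoprodI Hfam →* Equiv.Perm UnitCircle :=
    Monoid.CoprodI.lift (fCirc a b ha2 hb3) with hL
  set ψ : Monoid.CoprodI Hfam →* PSL(2, ℤ) := Monoid.CoprodI.lift fPSL with hψ
  have hLinj : Function.Injective ⇑L := fCirc_lift_injective ha hb ha2 hb3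
  have hψinj : Function.Injective ⇑ψ := fPSL_lift_injective
  -- the distinguished generators of the free product
  set gA : Monoid.CoprodI Hfam :=
    Monoid.CoprodI.of (i := true) (Multiplicative.ofAdd (1 : ZMod 2)) with hgA
  set gB : Monoid.CoprodI Hfam :=
    Monoid.CoprodI.of (i := false) (Multiplicative.ofAdd (1 : ZMod 3)) with hgB
  have hψA : ψ gA = Aelt := by
    rw [hgA, hψ, Monoid.CoprodI.lift_of]
    show Aelt ^ (Multiplicative.toAdd (Multiplicative.ofAdd (1 : ZMod 2))).val = Aelt
    rw [show (Multiplicative.toAdd (Multiplicative.ofAdd (1 : ZMod 2))).val = 1 from rfl, pow_one]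
  have hψB : ψ gB = Belt := by
    rw [hgB, hψ, Monoid.CoprodI.lift_of]
    show Belt ^ (Multiplicative.toAdd (Multiplicative.ofAdd (1 : ZMod 3))).val = Belt
    rw [show (Multiplicative.toAdd (Multiplicative.ofAdd (1 : ZMod 3))).val = 1 from rfl, pow_one]
  have hLA : L gA = a := by
    rw [hgA, hL, Monoid.CoprodI.lift_of]
    show a ^ (Multiplicative.toAdd (Multiplicative.ofAdd (1 : ZMod 2))).val = a
    rw [show (Multiplicative.toAdd (Multiplicative.ofAdd (1 : ZMod 2))).val = 1 from rfl, pow_one]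
  have hLB : L gB = b := by
    rw [hgB, hL, Monoid.CoprodI.lift_of]
    show b ^ (Multiplicative.toAdd (Multiplicative.ofAdd (1 : ZMod 3))).val = b
    rw [show (Multiplicative.toAdd (Multiplicative.ofAdd (1 : ZMod 3))).val = 1 from rfl, pow_one]
  have hψsurj : Function.Surjective ⇑ψ := by
    rw [← MonoidHom.range_eq_top]
    rw [eq_top_iff, ← closure_Aelt_Belt, Subgroup.closure_le]
    rintro x (rfl | rfl)
    · exact ⟨gA, hψA⟩
    · exact ⟨gB, hψB⟩
  set e : Monoid.CoprodI Hfam ≃* PSL(2, ℤ) := MulEquiv.ofBijective ψ ⟨hψinj, hψsurj⟩ with he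
  have he_apply : ∀ w, e w = ψ w := fun w => rfl
  set φ : PSL(2, ℤ) →* Equiv.Perm UnitCircle := L.comp e.symm.toMonoidHom with hφ
  have hφ_apply : ∀ g, φ g = L (e.symm g) := fun g => rfl
  have hφinj : Function.Injective ⇑φ := by
    have : ⇑φ = ⇑L ∘ ⇑e.symm := rfl
    rw [this]
    exact hLinj.comp e.symm.injective
  have heA : e.symm Aelt = gA := by
    rw [MulEquiv.symm_apply_eq, ← hψA]
    exact (he_apply gA).symm ▸ rfl
  have heB : e.symm Belt = gB := by
    rw [MulEquiv.symm_apply_eq, ← hψB]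
    exact (he_apply gB).symm ▸ rfl
  have hφA : φ Aelt = a := by rw [hφ_apply, heA, hLA]
  have hφB : φ Belt = b := by rw [hφ_apply, heB, hLB]
  have haT : a ∈ ThompsonT := Subgroup.subset_closure (a_thompson ha)
  have hbT : b ∈ ThompsonT := Subgroup.subset_closure (b_thompson hb)
  have hLmem : ∀ w : Monoid.CoprodI Hfam, L w ∈ ThompsonT := by
    intro w
    induction w using Monoid.CoprodI.induction_on with
    | one => rw [map_one]; exact Subgroup.one_mem _
    | of i x =>
      cases i
      · rw [hL, Monoid.CoprodI.lift_of]
        show b ^ (Multiplicative.toAdd x).val ∈ ThompsonT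
        exact Subgroup.pow_mem _ hbT _
      · rw [hL, Monoid.CoprodI.lift_of]
        show a ^ (Multiplicative.toAdd x).val ∈ ThompsonT
        exact Subgroup.pow_mem _ haT _
    | mul x y hx hy =>
      rw [map_mul]
      exact Subgroup.mul_mem _ hx hy
  have hmem : ∀ g : PSL(2, ℤ), φ g ∈ ThompsonT := fun g => hLmem (e.symm g)
  have hrange : φ.range = Subgroup.closure {a, b} := by
    rw [MonoidHom.range_eq_map, ← closure_Aelt_Belt, MonoidHom.map_closure,
      Set.image_insert_eq, Set.image_singleton, hφA, hφB]
  exact ⟨φ, hφinj, hφA, hφB, hmem,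
    ⟨(MonoidHom.ofInjective hφinj).trans (MulEquiv.subgroupCongr hrange)⟩⟩

end
end

section
/- Let k ≥ 1, ε₁, ε₂ ∈ {0,1}, and δ₁,…,δ_k ∈ {−1,1}, and let w = A^{ε₁} B^{δ₁} A B^{δ₂} A ⋯ A B^{δ_k} A^{ε₂} ∈ PSL₂(ℤ). Then the word length of w with respect to the set S = {A, B} equals exactly 2k − 1 + ε₁ + ε₂; in particular w is not the identity. -/
open scoped MatrixGroups

noncomputable section

/-- The word `w = a^{ε₁} b^{δ₁} a b^{δ₂} a ⋯ a b^{δ_k} a^{ε₂}`. -/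
def wordW {G : Type*} [Group G] (a b : G) (ε₁ ε₂ : ℕ) (δ : ℕ → ℤ) (k : ℕ) : G :=
  a ^ ε₁ * ((List.range (k - 1)).map (fun i => b ^ (δ (i + 1)) * a)).prod * b ^ (δ k) * a ^ ε₂

/-- The set of lengths `n` of expressions of `g` as a product of `n` elements of `S ∪ S⁻¹`;
the word length of `g` with respect to `S` is the least element of this set. -/
def wordLengths {G : Type*} [Group G] (S : Set G) (g : G) : Set ℕ :=
  {n | ∃ L : List G, (∀ x ∈ L, x ∈ S ∪ S⁻¹) ∧ L.length = n ∧ L.prod = g}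

namespace PSLAux

open Matrix

abbrev SL2 := Matrix.SpecialLinearGroup (Fin 2) ℤ

instance : Fact (Even (Fintype.card (Fin 2))) := ⟨by simp⟩

def A0 : SL2 := ⟨!![0, -1; 1, 0], by norm_num [Matrix.det_fin_two_of]⟩
def B0 : SL2 := ⟨!![0, -1; 1, 1], by norm_num [Matrix.det_fin_two_of]⟩
def B0i : SL2 := ⟨!![1, 1; -1, 0], by norm_num [Matrix.det_fin_two_of]⟩
def F1 : SL2 := ⟨!![1, 0; -1, 1], by norm_num [Matrix.det_fin_two_of]⟩
def F2 : SL2 := ⟨!![1, -1; 0, 1], by norm_num [Matrix.det_fin_two_of]⟩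

lemma Aelt_eq : Aelt = QuotientGroup.mk A0 := rfl
lemma Belt_eq : Belt = QuotientGroup.mk B0 := rfl

lemma center_sl2 (M : SL2) : M ∈ Subgroup.center SL2 ↔ M = 1 ∨ M = -1 := by
  rw [Matrix.SpecialLinearGroup.mem_center_iff]
  constructor
  · rintro ⟨r, hr, hM⟩
    have hrr : r * r = 1 := by simpa [sq] using hr
    rcases Int.isUnit_iff.mp (IsUnit.of_mul_eq_one r hrr) with h | h
    · left; apply Subtype.ext; rw [← hM, h]; simp
    · right; apply Subtype.ext; rw [← hM, h]
      simp [Matrix.SpecialLinearGroup.coe_neg]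
  · rintro (rfl | rfl)
    · exact ⟨1, by simp, by simp⟩
    · exact ⟨-1, by simp, by simp [Matrix.SpecialLinearGroup.coe_neg]⟩

lemma mk_eq_mk (M N : SL2) :
    (QuotientGroup.mk M : PSL(2,ℤ)) = QuotientGroup.mk N ↔ M = N ∨ M = -N := by
  rw [QuotientGroup.eq, center_sl2]
  constructor
  · rintro (h | h)
    · left; have := congrArg (M * ·) h; simpa [mul_assoc] using this.symm
    · right; have := congrArg (M * ·) h; simp [mul_assoc] at this
      rw [this, neg_neg]
  · rintro (rfl | rfl) <;> simp [mul_neg]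

lemma mk_mul (M N : SL2) :
    (QuotientGroup.mk (M * N) : PSL(2,ℤ)) = QuotientGroup.mk M * QuotientGroup.mk N := rfl

lemma sl2_ext {M N : SL2} (h : M.1 = N.1) : M = N := Subtype.ext h

lemma B0_mul_B0i : B0 * B0i = 1 := by
  apply sl2_ext
  show (B0.1 * B0i.1) = (1 : Matrix (Fin 2) (Fin 2) ℤ)
  rw [show B0.1 = !![0,-1;1,1] from rfl, show B0i.1 = !![1,1;-1,0] from rfl]
  norm_num [Matrix.mul_fin_two]
  ext i j; fin_cases i <;> fin_cases j <;> simp [Matrix.one_apply]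

lemma Belt_inv_eq : Belt⁻¹ = QuotientGroup.mk B0i := by
  rw [Belt_eq, ← QuotientGroup.mk_inv]
  congr 1
  exact inv_eq_of_mul_eq_one_right B0_mul_B0i

lemma A_sq : Aelt * Aelt = 1 := by
  rw [Aelt_eq, ← mk_mul]
  rw [show ((1 : PSL(2,ℤ))) = QuotientGroup.mk (1 : SL2) from rfl, mk_eq_mk]
  right
  apply sl2_ext
  show (A0.1 * A0.1) = -(1 : Matrix (Fin 2) (Fin 2) ℤ)
  rw [show A0.1 = !![0,-1;1,0] from rfl]
  norm_num [Matrix.mul_fin_two]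
  ext i j; fin_cases i <;> fin_cases j <;> simp [Matrix.one_apply]

lemma A_inv : Aelt⁻¹ = Aelt := by
  rw [inv_eq_iff_mul_eq_one, A_sq]

lemma B_mul_B : Belt * Belt = Belt⁻¹ := by
  rw [Belt_inv_eq, Belt_eq, ← mk_mul, mk_eq_mk]
  right
  apply sl2_ext
  show (B0.1 * B0.1) = -(B0i.1)
  rw [show B0.1 = !![0,-1;1,1] from rfl, show B0i.1 = !![1,1;-1,0] from rfl]
  norm_num [Matrix.mul_fin_two]

lemma Bi_mul_Bi : Belt⁻¹ * Belt⁻¹ = Belt := by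
  rw [← _root_.mul_inv_rev, B_mul_B, inv_inv]

/-! ### The alphabet -/

inductive Lam : Type
  | a : Lam
  | b : Lam
  | b' : Lam
  deriving DecidableEq

def Lam.isA : Lam → Bool
  | .a => true
  | _ => false

def ev : Lam → PSL(2,ℤ)
  | .a => Aelt
  | .b => Belt
  | .b' => Belt⁻¹

def evp (L : List Lam) : PSL(2,ℤ) := (L.map ev).prod

@[simp] lemma evp_nil : evp [] = 1 := rfl
@[simp] lemma evp_cons (x : Lam) (t : List Lam) : evp (x :: t) = ev x * evp t := by
  simp [evp]
@[simp] lemma evp_append (l₁ l₂ : List Lam) : evp (l₁ ++ l₂) = evp l₁ * evp l₂ := by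
  simp [evp]

def Alt (L : List Lam) : Prop := L.Chain' (fun x y => x.isA ≠ y.isA)

def linv : Lam → Lam
  | .a => .a
  | .b => .b'
  | .b' => .b

@[simp] lemma isA_linv (x : Lam) : (linv x).isA = x.isA := by cases x <;> rfl

@[simp] lemma ev_linv (x : Lam) : ev (linv x) = (ev x)⁻¹ := by
  cases x <;> simp [linv, ev, A_inv]

def wInv (L : List Lam) : List Lam := (L.map linv).reverse

lemma evp_wInv (L : List Lam) : evp (wInv L) = (evp L)⁻¹ := by
  induction L with
  | nil => simp [wInv]
  | cons x t ih =>
      simp only [wInv, List.map_cons, List.reverse_cons] at *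
      simp [ih, mul_comm]

lemma alt_wInv {L : List Lam} (h : Alt L) : Alt (wInv L) := by
  unfold Alt wInv List.Chain'
  rw [List.isChain_reverse]
  apply List.isChain_map_of_isChain (R := fun x y => x.isA ≠ y.isA)
  · intro x y hxy
    simp [flip]
    simp at hxy
    exact fun h' => hxy h'.symm
  · exact h

lemma getLast?_map (f : Lam → Lam) (L : List Lam) :
    (L.map f).getLast? = L.getLast?.map f := by
  induction L with
  | nil => simp
  | cons x t ih =>
      cases t with
      | nil => simp
      | cons y t' => simpa [List.getLast?_cons_cons] using ih

lemma getLast?_wInv (L : List Lam) : (wInv L).getLast? = L.head?.map linv := by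
  unfold wInv
  rw [List.getLast?_reverse]
  cases L <;> simp

lemma head?_wInv (L : List Lam) : (wInv L).head? = L.getLast?.map linv := by
  unfold wInv
  rw [List.head?_reverse, getLast?_map]

/-! ### Free reduction -/

def push : Lam → List Lam → List Lam
  | .a, .a :: t => t
  | .b, .b :: t => .b' :: t
  | .b, .b' :: t => t
  | .b', .b :: t => t
  | .b', .b' :: t => .b :: t
  | x, t => x :: t

lemma push_evp (x : Lam) (t : List Lam) : evp (push x t) = ev x * evp t := by
  cases x <;> rcases t with _ | ⟨y, t'⟩ <;> try rfl
  all_goals cases y <;>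
    simp [push, ev, ← mul_assoc, A_sq, B_mul_B, Bi_mul_Bi]

lemma push_length (x : Lam) (t : List Lam) : (push x t).length ≤ t.length + 1 := by
  cases x <;> rcases t with _ | ⟨y, t'⟩ <;> try simp [push]
  all_goals cases y <;> simp [push] <;> omega

lemma push_alt (x : Lam) (t : List Lam) (h : Alt t) : Alt (push x t) := by
  rcases t with _ | ⟨y, t'⟩
  · cases x <;> exact List.isChain_singleton _
  · simp only [Alt, List.Chain', List.isChain_cons] at h
    obtain ⟨h1, h2⟩ := h
    have hc : Alt (y :: t') := List.isChain_cons.mpr ⟨h1, h2⟩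
    cases x <;> cases y
    · exact h2
    · exact List.isChain_cons.mpr ⟨fun z hz => by simp at hz; subst hz; simp [Lam.isA], hc⟩
    · exact List.isChain_cons.mpr ⟨fun z hz => by simp at hz; subst hz; simp [Lam.isA], hc⟩
    · exact List.isChain_cons.mpr ⟨fun z hz => by simp at hz; subst hz; simp [Lam.isA], hc⟩
    · exact List.isChain_cons.mpr ⟨h1, h2⟩
    · exact h2
    · exact List.isChain_cons.mpr ⟨fun z hz => by simp at hz; subst hz; simp [Lam.isA], hc⟩
    · exact h2
    · exact List.isChain_cons.mpr ⟨h1, h2⟩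

def reduceW : List Lam → List Lam
  | [] => []
  | x :: t => push x (reduceW t)

lemma reduceW_evp (L : List Lam) : evp (reduceW L) = evp L := by
  induction L with
  | nil => rfl
  | cons x t ih => simp [reduceW, push_evp, ih]

lemma reduceW_length (L : List Lam) : (reduceW L).length ≤ L.length := by
  induction L with
  | nil => simp [reduceW]
  | cons x t ih =>
      calc (push x (reduceW t)).length ≤ (reduceW t).length + 1 := push_length _ _
        _ ≤ t.length + 1 := by omega
        _ = (x :: t).length := by simp

lemma reduceW_alt (L : List Lam) : Alt (reduceW L) := by
  induction L with
  | nil => exact List.isChain_nil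
  | cons x t ih => exact push_alt _ _ ih

/-! ### The positivity invariant -/

def Q (M : SL2) : Prop :=
  1 ≤ M.1 0 0 ∧ 1 ≤ M.1 1 1 ∧ M.1 0 1 ≤ 0 ∧ M.1 1 0 ≤ 0 ∧
    3 ≤ M.1 0 0 + M.1 1 1 - M.1 0 1 - M.1 1 0

lemma coe_mul_apply (X Y : SL2) (i j : Fin 2) :
    (X * Y).1 i j = X.1 i 0 * Y.1 0 j + X.1 i 1 * Y.1 1 j := by
  rw [Matrix.SpecialLinearGroup.coe_mul, Matrix.mul_apply, Fin.sum_univ_two]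

lemma F1_entries : F1.1 0 0 = 1 ∧ F1.1 0 1 = 0 ∧ F1.1 1 0 = -1 ∧ F1.1 1 1 = 1 := by
  refine ⟨rfl, rfl, rfl, rfl⟩

lemma F2_entries : F2.1 0 0 = 1 ∧ F2.1 0 1 = -1 ∧ F2.1 1 0 = 0 ∧ F2.1 1 1 = 1 := by
  refine ⟨rfl, rfl, rfl, rfl⟩

lemma Q_F1 : Q F1 := by unfold Q F1; decide

lemma Q_F2 : Q F2 := by unfold Q F2; decide

lemma Q_mul_F1 {M : SL2} (h : Q M) : Q (F1 * M) := by
  obtain ⟨h1, h2, h3, h4, h5⟩ := h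
  obtain ⟨e1, e2, e3, e4⟩ := F1_entries
  refine ⟨?_, ?_, ?_, ?_, ?_⟩ <;>
    simp only [coe_mul_apply, e1, e2, e3, e4] <;> linarith

lemma Q_mul_F2 {M : SL2} (h : Q M) : Q (F2 * M) := by
  obtain ⟨h1, h2, h3, h4, h5⟩ := h
  obtain ⟨e1, e2, e3, e4⟩ := F2_entries
  refine ⟨?_, ?_, ?_, ?_, ?_⟩ <;>
    simp only [coe_mul_apply, e1, e2, e3, e4] <;> linarith

lemma BA_eq : Belt * Aelt = QuotientGroup.mk F1 := by
  rw [Belt_eq, Aelt_eq, ← mk_mul, mk_eq_mk]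
  right
  apply sl2_ext
  show (B0.1 * A0.1) = -(F1.1)
  rw [show B0.1 = !![0,-1;1,1] from rfl, show A0.1 = !![0,-1;1,0] from rfl,
    show F1.1 = !![1,0;-1,1] from rfl]
  norm_num [Matrix.mul_fin_two]

lemma BiA_eq : Belt⁻¹ * Aelt = QuotientGroup.mk F2 := by
  rw [Belt_inv_eq, Aelt_eq, ← mk_mul, mk_eq_mk]
  left
  apply sl2_ext
  show (B0i.1 * A0.1) = F2.1
  rw [show B0i.1 = !![1,1;-1,0] from rfl, show A0.1 = !![0,-1;1,0] from rfl,
    show F2.1 = !![1,-1;0,1] from rfl]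
  norm_num [Matrix.mul_fin_two]

lemma Q_ne_one {M : SL2} (h : Q M) : (QuotientGroup.mk M : PSL(2,ℤ)) ≠ 1 := by
  intro heq
  rw [show (1 : PSL(2,ℤ)) = QuotientGroup.mk (1 : SL2) from rfl, mk_eq_mk] at heq
  rcases heq with rfl | rfl
  · obtain ⟨h1, h2, h3, h4, h5⟩ := h
    simp [Matrix.SpecialLinearGroup.coe_one, Matrix.one_apply] at h3 h4 h5
  · have h1 := h.1
    simp [Matrix.SpecialLinearGroup.coe_neg, Matrix.SpecialLinearGroup.coe_one,
      Matrix.one_apply] at h1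

lemma Q_ne_A {M : SL2} (h : Q M) : (QuotientGroup.mk M : PSL(2,ℤ)) ≠ Aelt := by
  intro heq
  rw [Aelt_eq, mk_eq_mk] at heq
  rcases heq with rfl | rfl
  · have h1 := h.1
    rw [show A0.1 0 0 = 0 from rfl] at h1
    omega
  · have h1 := h.1
    rw [show (-A0).1 0 0 = 0 from rfl] at h1
    omega

lemma Q_ne_B {M : SL2} (h : Q M) : (QuotientGroup.mk M : PSL(2,ℤ)) ≠ Belt := by
  intro heq
  rw [Belt_eq, mk_eq_mk] at heq
  rcases heq with rfl | rfl
  · have h1 := h.1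
    rw [show B0.1 0 0 = 0 from rfl] at h1
    omega
  · have h1 := h.1
    rw [show (-B0).1 0 0 = 0 from rfl] at h1
    omega

lemma Q_ne_Bi {M : SL2} (h : Q M) : (QuotientGroup.mk M : PSL(2,ℤ)) ≠ Belt⁻¹ := by
  intro heq
  rw [Belt_inv_eq, mk_eq_mk] at heq
  rcases heq with rfl | rfl
  · have h2 := h.2.1
    rw [show B0i.1 1 1 = 0 from rfl] at h2
    omega
  · have h2 := h.2.1
    rw [show (-B0i).1 1 1 = 0 from rfl] at h2
    omega

/-- Words of the shape `b^{δ} a b^{δ} a ⋯ b^{δ} a` have a lift satisfying `Q`. -/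
lemma pair_Q : ∀ n (L : List Lam), L.length ≤ n → Alt L →
    (∀ h ∈ L.head?, Lam.isA h = false) → L.getLast? = some Lam.a →
    ∃ M : SL2, Q M ∧ evp L = QuotientGroup.mk M := by
  intro n
  induction n with
  | zero =>
      intro L hn _ hh hl
      interval_cases hL : L.length
      · rw [List.length_eq_zero_iff] at hL; subst hL; simp at hl
  | succ n ih =>
      intro L hn halt hh hl
      rcases L with _ | ⟨x, t⟩
      · simp at hl
      · have hx : x.isA = false := hh x rfl
        rcases t with _ | ⟨y, t'⟩
        · simp at hl
          subst hl
          simp [Lam.isA] at hx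
        · have hy : y = Lam.a := by
            have := (List.isChain_cons.mp halt).1 y rfl
            cases y <;> simp [Lam.isA] at this hx ⊢ <;> cases x <;> simp_all [Lam.isA]
          subst hy
          have hxa : ev x * Aelt = Belt * Aelt ∨ ev x * Aelt = Belt⁻¹ * Aelt := by
            cases x <;> simp [Lam.isA] at hx <;> [left; right] <;> rfl
          rcases t' with _ | ⟨z, t''⟩
          · -- base case : L = [x, a]
            have hev2 : evp [x, Lam.a] = ev x * Aelt := by
              simp only [evp_cons, evp_nil, mul_one]; rfl
            rcases hxa with hxa | hxa
            · exact ⟨F1, Q_F1, by rw [hev2, hxa, BA_eq]⟩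
            · exact ⟨F2, Q_F2, by rw [hev2, hxa, BiA_eq]⟩
          · -- L = x :: a :: z :: t''
            have htail : Alt (z :: t'') :=
              ((List.isChain_cons.mp (List.isChain_cons.mp halt).2).2)
            have hzh : ∀ h ∈ (z :: t'').head?, Lam.isA h = false := by
              intro h hmem
              simp at hmem
              subst hmem
              have := (List.isChain_cons.mp (List.isChain_cons.mp halt).2).1 z rfl
              simp [Lam.isA] at this ⊢
              cases z <;> simp_all [Lam.isA]
            have hzl : (z :: t'').getLast? = some Lam.a := by
              rw [List.getLast?_cons_cons, List.getLast?_cons_cons] at hl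
              exact hl
            have hlen : (z :: t'').length ≤ n := by
              simp at hn ⊢; omega
            obtain ⟨M, hQM, hev⟩ := ih (z :: t'') hlen htail hzh hzl
            have : evp (x :: Lam.a :: z :: t'') = (ev x * Aelt) * QuotientGroup.mk M := by
              rw [evp_cons, evp_cons, hev, ev, ← mul_assoc]
            rcases hxa with hxa | hxa
            · refine ⟨F1 * M, Q_mul_F1 hQM, ?_⟩
              rw [this, hxa, BA_eq, mk_mul]
            · refine ⟨F2 * M, Q_mul_F2 hQM, ?_⟩
              rw [this, hxa, BiA_eq, mk_mul]

/-! ### Nonempty alternating words are nontrivial -/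

lemma isA_true {z : Lam} (h : z.isA = true) : z = Lam.a := by
  cases z <;> simp [Lam.isA] at h ⊢

lemma Aelt_ne_one : Aelt ≠ 1 := by
  intro h
  rw [Aelt_eq, show (1 : PSL(2,ℤ)) = QuotientGroup.mk (1 : SL2) from rfl, mk_eq_mk] at h
  rcases h with h | h
  · have := congrArg (fun M : SL2 => M.1 1 0) h
    simp [show A0.1 1 0 = 1 from rfl, Matrix.SpecialLinearGroup.coe_one, Matrix.one_apply] at this
  · have := congrArg (fun M : SL2 => M.1 1 0) h
    simp [show A0.1 1 0 = 1 from rfl, Matrix.SpecialLinearGroup.coe_neg,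
      Matrix.SpecialLinearGroup.coe_one, Matrix.one_apply] at this

lemma Belt_ne_one : Belt ≠ 1 := by
  intro h
  rw [Belt_eq, show (1 : PSL(2,ℤ)) = QuotientGroup.mk (1 : SL2) from rfl, mk_eq_mk] at h
  rcases h with h | h
  · have := congrArg (fun M : SL2 => M.1 1 0) h
    simp [show B0.1 1 0 = 1 from rfl, Matrix.SpecialLinearGroup.coe_one, Matrix.one_apply] at this
  · have := congrArg (fun M : SL2 => M.1 1 0) h
    simp [show B0.1 1 0 = 1 from rfl, Matrix.SpecialLinearGroup.coe_neg,
      Matrix.SpecialLinearGroup.coe_one, Matrix.one_apply] at this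

lemma ev_ne_one (x : Lam) : ev x ≠ 1 := by
  cases x
  · exact Aelt_ne_one
  · exact Belt_ne_one
  · simp only [ev, ne_eq, inv_eq_one]; exact Belt_ne_one

/-- The key lemma: a nonempty alternating word is not the identity. -/
lemma alt_ne_one : ∀ (L : List Lam), Alt L → L ≠ [] → evp L ≠ 1 := by
  have paircase : ∀ (L : List Lam) (x : Lam), Alt L → L.head? = some x → x.isA = false →
      L.getLast? = some Lam.a → ∃ M : SL2, Q M ∧ evp L = QuotientGroup.mk M := by
    intro L x halt hh hx hl
    apply pair_Q L.length L le_rfl halt _ hl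
    intro h hmem
    rw [hh] at hmem
    simp at hmem
    subst hmem
    exact hx
  intro L halt hne
  obtain ⟨x, t, rfl⟩ := List.exists_cons_of_ne_nil hne
  obtain ⟨y, hy⟩ : ∃ y, (x :: t).getLast? = some y := ⟨_, List.getLast?_eq_getLast hne⟩
  by_cases hx : x.isA
  · -- head is the letter a
    have hxa := isA_true hx
    subst hxa
    by_cases hyA : y.isA
    · have hya := isA_true hyA
      subst hya
      rcases t with _ | ⟨u, t'⟩
      · -- L = [a]
        simpa [mul_one] using (show ev Lam.a ≠ 1 from ev_ne_one _)
      · -- L = a :: t, t nonempty with last a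
        have htalt : Alt (u :: t') := (List.isChain_cons.mp halt).2
        have hth : (u :: t').head? = some u := rfl
        have huA : u.isA = false := by
          have := (List.isChain_cons.mp halt).1 u rfl
          simp [Lam.isA] at this ⊢
          cases u <;> simp_all [Lam.isA]
        have htl : (u :: t').getLast? = some Lam.a := by
          rwa [List.getLast?_cons_cons] at hy
        obtain ⟨M, hQ, hev⟩ := paircase (u :: t') u htalt hth huA htl
        intro hone
        rw [evp_cons, hev] at hone
        have hMA : (QuotientGroup.mk M : PSL(2,ℤ)) = (ev Lam.a)⁻¹ :=
          eq_inv_of_mul_eq_one_right hone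
        rw [show ev Lam.a = Aelt from rfl, A_inv] at hMA
        exact Q_ne_A hQ hMA
    · -- head a, last b-type : pass to the inverse word
      intro hone
      have h1 : evp (wInv (Lam.a :: t)) = 1 := by rw [evp_wInv, hone, inv_one]
      have halt' : Alt (wInv (Lam.a :: t)) := alt_wInv halt
      have hh' : (wInv (Lam.a :: t)).head? = some (linv y) := by
        rw [head?_wInv, hy]; rfl
      have hl' : (wInv (Lam.a :: t)).getLast? = some Lam.a := by
        rw [getLast?_wInv]; rfl
      have hy' : (linv y).isA = false := by
        rw [isA_linv]; simpa using hyA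
      obtain ⟨M, hQ, hev⟩ := paircase _ _ halt' hh' hy' hl'
      rw [hev] at h1
      exact Q_ne_one hQ h1
  · -- head is b-type
    have hxb : x.isA = false := by simpa using hx
    by_cases hyA : y.isA
    · have hya := isA_true hyA
      subst hya
      obtain ⟨M, hQ, hev⟩ := paircase (x :: t) x halt rfl hxb hy
      rw [hev]
      exact Q_ne_one hQ
    · -- head and last both b-type
      have hyb : y.isA = false := by simpa using hyA
      rcases t with _ | ⟨u, t'⟩
      · -- L = [x]
        have hxy : x = y := by simpa using hy
        subst hxy
        simpa [mul_one] using ev_ne_one x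
      · -- length ≥ 2
        set L := x :: u :: t' with hL
        have hPne : L.dropLast ≠ [] := by
          simp [hL]
        have hdec : L.dropLast ++ [y] = L := by
          have h1 : L.getLast (by simp [hL]) = y := by
            rw [List.getLast?_eq_getLast (by simp [hL] : L ≠ [])] at hy
            exact Option.some_injective _ hy
          rw [← h1]
          exact List.dropLast_append_getLast _
        have hsplit := List.isChain_append.mp (show List.Chain' (fun a b => a.isA ≠ b.isA) (L.dropLast ++ [y]) from by rw [hdec]; exact halt)
        obtain ⟨hP, _, hjun⟩ := hsplit
        obtain ⟨z, hz⟩ : ∃ z, L.dropLast.getLast? = some z :=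
          ⟨_, List.getLast?_eq_getLast hPne⟩
        have hzA : z.isA = true := by
          have := hjun z hz y rfl
          cases z <;> cases y <;> simp_all [Lam.isA]
        have hzl : L.dropLast.getLast? = some Lam.a := by rw [hz, isA_true hzA]
        have hPh : L.dropLast.head? = some x := by
          simp [hL]
        obtain ⟨M, hQ, hev⟩ := paircase L.dropLast x hP hPh hxb hzl
        intro hone
        have hone' : evp L.dropLast * ev y = 1 := by
          have hc := congrArg evp hdec
          rw [evp_append] at hc
          simp only [evp_cons, evp_nil, mul_one] at hc
          rw [hc]
          exact hone
        rw [hev] at hone'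
        have hMinv : (QuotientGroup.mk M : PSL(2,ℤ)) = (ev y)⁻¹ :=
          eq_inv_of_mul_eq_one_left hone'
        cases y
        · simp [Lam.isA] at hyb
        · exact Q_ne_Bi hQ (by rw [hMinv]; rfl)
        · exact Q_ne_B hQ (by rw [hMinv]; simp [ev])

/-! ### Uniqueness of alternating normal forms -/

lemma alt_inj : ∀ (L1 : List Lam), Alt L1 → ∀ L2, Alt L2 → evp L1 = evp L2 → L1 = L2 := by
  intro L1
  induction L1 with
  | nil =>
      intro _ L2 h2 heq
      cases L2 with
      | nil => rfl
      | cons y T2 => exact absurd heq.symm (alt_ne_one _ h2 (List.cons_ne_nil _ _))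
  | cons x T1 ih =>
      intro h1 L2 h2 heq
      cases L2 with
      | nil => exact absurd heq (alt_ne_one _ h1 (List.cons_ne_nil _ _))
      | cons y T2 =>
        obtain ⟨h1h, h1t⟩ := List.isChain_cons.mp h1
        obtain ⟨h2h, h2t⟩ := List.isChain_cons.mp h2
        by_cases hxy : x = y
        · subst hxy
          have hTT : evp T1 = evp T2 := by
            rw [evp_cons, evp_cons] at heq
            exact mul_left_cancel heq
          rw [ih h1t T2 h2t hTT]
        · exfalso
          have hjun : ∀ u ∈ (wInv T1).getLast?, u.isA ≠ x.isA := by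
            intro u hu
            rw [getLast?_wInv] at hu
            rcases T1 with _ | ⟨h, t⟩
            · simp at hu
            · simp at hu
              subst hu
              rw [isA_linv]
              exact fun hc => (h1h h rfl) hc.symm
          by_cases hty : x.isA = y.isA
          · -- same type: both are b-type letters, and x = y⁻¹
            have hsq : ev x * ev x = ev y := by
              cases x <;> cases y <;>
                first
                  | exact absurd rfl hxy
                  | exact B_mul_B
                  | exact Bi_mul_Bi
                  | simp [Lam.isA] at hty
            have hT1 : evp T1 = ev x * evp T2 := by
              rw [evp_cons, evp_cons, ← hsq, mul_assoc] at heq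
              exact mul_left_cancel heq
            have hAlt : Alt (wInv T1 ++ (x :: T2)) := by
              rw [Alt, List.Chain', List.isChain_append]
              refine ⟨alt_wInv h1t, List.isChain_cons.mpr ⟨fun v hv => by
                rw [hty]; exact h2h v hv, h2t⟩, ?_⟩
              intro u hu v hv
              simp at hv
              subst hv
              exact hjun u hu
            have hone : evp (wInv T1 ++ (x :: T2)) = 1 := by
              rw [evp_append, evp_wInv, evp_cons, ← hT1]
              group
            exact alt_ne_one _ hAlt (by simp) hone
          · -- different types
            have hAlt : Alt (wInv T1 ++ (linv x :: y :: T2)) := by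
              rw [Alt, List.Chain', List.isChain_append]
              refine ⟨alt_wInv h1t, List.isChain_cons.mpr ⟨fun v hv => by
                simp at hv; subst hv; rw [isA_linv]; exact hty, List.isChain_cons.mpr ⟨h2h, h2t⟩⟩, ?_⟩
              intro u hu v hv
              simp at hv
              subst hv
              rw [isA_linv]
              exact hjun u hu
            have hyx : ev y * evp T2 = ev x * evp T1 := by
              rw [evp_cons, evp_cons] at heq
              exact heq.symm
            have hone : evp (wInv T1 ++ (linv x :: y :: T2)) = 1 := by
              rw [evp_append, evp_wInv, evp_cons, evp_cons, ev_linv, hyx]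
              group
            exact alt_ne_one _ hAlt (by simp) hone

/-! ### The canonical word -/

def bl (d : ℤ) : Lam := if d = 1 then Lam.b else Lam.b'

lemma isA_bl (d : ℤ) : (bl d).isA = false := by
  unfold bl; split <;> rfl

lemma ev_bl {d : ℤ} (hd : d = -1 ∨ d = 1) : ev (bl d) = Belt ^ d := by
  rcases hd with rfl | rfl
  · rw [show bl (-1) = Lam.b' from by norm_num [bl], show ev Lam.b' = Belt⁻¹ from rfl]
    exact (zpow_neg_one Belt).symm
  · rw [show bl 1 = Lam.b from by norm_num [bl], zpow_one]
    rfl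

/-- The middle part `b^{δ₁} a b^{δ₂} a ⋯ b^{δ_m} a` of the canonical word. -/
def Jn (g : ℕ → ℤ) : ℕ → List Lam
  | 0 => []
  | m + 1 => Jn g m ++ [bl (g (m + 1)), Lam.a]

def W0 (δ : ℕ → ℤ) (k ε₁ ε₂ : ℕ) : List Lam :=
  List.replicate ε₁ Lam.a ++ (Jn δ (k - 1) ++ ([bl (δ k)] ++ List.replicate ε₂ Lam.a))

lemma evp_replicate (n : ℕ) : evp (List.replicate n Lam.a) = Aelt ^ n := by
  induction n with
  | zero => simp
  | succ n ih =>
      rw [List.replicate_succ, evp_cons, ih, show ev Lam.a = Aelt from rfl]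
      rw [pow_succ']

lemma Jn_length (g : ℕ → ℤ) (m : ℕ) : (Jn g m).length = 2 * m := by
  induction m with
  | zero => rfl
  | succ m ih => rw [Jn, List.length_append, ih]; simp; omega

lemma evp_Jn (δ : ℕ → ℤ) : ∀ m, (∀ i, 1 ≤ i → i ≤ m → δ i = -1 ∨ δ i = 1) →
    evp (Jn δ m) = ((List.range m).map (fun i => Belt ^ (δ (i+1)) * Aelt)).prod := by
  intro m
  induction m with
  | zero => intro _; rfl
  | succ m ih =>
      intro h
      rw [Jn, evp_append, ih (fun i h1 h2 => h i h1 (by omega)), List.range_succ,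
        List.map_append, List.prod_append]
      congr 1
      simp only [List.map_cons, List.map_nil, List.prod_cons, List.prod_nil, mul_one,
        evp_cons, evp_nil]
      rw [ev_bl (h (m+1) (by omega) le_rfl)]
      rfl

lemma alt_Jn (g : ℕ → ℤ) :
    ∀ (m : ℕ) (s : List Lam), Alt s → (∀ h ∈ s.head?, Lam.isA h = false) →
      Alt (Jn g m ++ s) := by
  intro m
  induction m with
  | zero => intro s hs _; simpa [Jn] using hs
  | succ m ih =>
      intro s hs hsh
      rw [Jn, List.append_assoc]
      apply ih
      · rw [List.cons_append, List.cons_append, List.nil_append]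
        refine List.isChain_cons.mpr ⟨?_, List.isChain_cons.mpr ⟨?_, hs⟩⟩
        · intro v hv
          simp at hv
          subst hv
          rw [isA_bl]
          simp [Lam.isA]
        · intro v hv
          have hf := hsh v hv
          rw [hf]
          simp [Lam.isA]
      · intro h hmem
        rw [List.cons_append, List.head?_cons, Option.mem_some_iff] at hmem
        subst hmem
        exact isA_bl _

lemma head_Jn (g : ℕ → ℤ) :
    ∀ (m : ℕ) (s : List Lam), (∀ h ∈ s.head?, Lam.isA h = false) →
      ∀ h ∈ (Jn g m ++ s).head?, Lam.isA h = false := by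
  intro m
  induction m with
  | zero => intro s hs; simpa [Jn] using hs
  | succ m ih =>
      intro s hs
      rw [Jn, List.append_assoc]
      apply ih
      intro h hmem
      rw [List.cons_append, List.head?_cons, Option.mem_some_iff] at hmem
      subst hmem
      exact isA_bl _

lemma tail_head_b (δ : ℕ → ℤ) (k ε₂ : ℕ) :
    ∀ h ∈ (Jn δ (k-1) ++ ([bl (δ k)] ++ List.replicate ε₂ Lam.a)).head?, Lam.isA h = false := by
  apply head_Jn
  intro h hmem
  rw [List.cons_append, List.head?_cons, Option.mem_some_iff] at hmem
  subst hmem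
  exact isA_bl _

lemma alt_tail (δ : ℕ → ℤ) (k ε₂ : ℕ) (hε₂ : ε₂ ≤ 1) :
    Alt (Jn δ (k-1) ++ ([bl (δ k)] ++ List.replicate ε₂ Lam.a)) := by
  apply alt_Jn
  · interval_cases ε₂
    · exact List.isChain_singleton _
    · refine List.isChain_cons.mpr ⟨?_, List.isChain_singleton _⟩
      intro v hv
      simp at hv
      subst hv
      rw [isA_bl]
      simp [Lam.isA]
  · intro h hmem
    rw [List.cons_append, List.head?_cons, Option.mem_some_iff] at hmem
    subst hmem
    exact isA_bl _

lemma alt_W0 (δ : ℕ → ℤ) (k ε₁ ε₂ : ℕ) (hε₁ : ε₁ ≤ 1) (hε₂ : ε₂ ≤ 1) :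
    Alt (W0 δ k ε₁ ε₂) := by
  unfold W0
  interval_cases ε₁
  · simpa using alt_tail δ k ε₂ hε₂
  · rw [show List.replicate 1 Lam.a = [Lam.a] from rfl, List.singleton_append]
    refine List.isChain_cons.mpr ⟨?_, alt_tail δ k ε₂ hε₂⟩
    intro v hv
    have hf := tail_head_b δ k ε₂ v hv
    rw [hf]
    simp [Lam.isA]

lemma W0_length (δ : ℕ → ℤ) (k ε₁ ε₂ : ℕ) (hk : 1 ≤ k) :
    (W0 δ k ε₁ ε₂).length = 2 * k - 1 + ε₁ + ε₂ := by
  unfold W0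
  rw [List.length_append, List.length_append, List.length_append, Jn_length,
    List.length_replicate, List.length_replicate, List.length_cons, List.length_nil]
  omega

lemma W0_evp (δ : ℕ → ℤ) (k ε₁ ε₂ : ℕ) (hk : 1 ≤ k)
    (hδ : ∀ i, 1 ≤ i → i ≤ k → δ i = -1 ∨ δ i = 1) :
    evp (W0 δ k ε₁ ε₂) = wordW Aelt Belt ε₁ ε₂ δ k := by
  unfold W0 wordW
  rw [evp_append, evp_append, evp_append, evp_replicate, evp_replicate,
    evp_Jn δ (k-1) (fun i h1 h2 => hδ i h1 (by omega)),
    show evp [bl (δ k)] = ev (bl (δ k)) from by simp,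
    ev_bl (hδ k hk le_rfl)]
  group

/-! ### Translating lists of group elements into words -/

lemma exists_lam_list : ∀ (L : List PSL(2,ℤ)),
    (∀ x ∈ L, x ∈ ({Aelt, Belt} : Set PSL(2,ℤ)) ∪ ({Aelt, Belt} : Set PSL(2,ℤ))⁻¹) →
    ∃ M : List Lam, M.length = L.length ∧ evp M = L.prod := by
  intro L
  induction L with
  | nil => exact fun _ => ⟨[], rfl, rfl⟩
  | cons x t ih =>
      intro h
      obtain ⟨M, hMl, hMe⟩ := ih (fun z hz => h z (List.mem_cons_of_mem _ hz))
      have hx := h x (List.mem_cons_self)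
      simp only [Set.mem_union, Set.mem_insert_iff, Set.mem_singleton_iff, Set.mem_inv] at hx
      have : ∃ l : Lam, ev l = x := by
        rcases hx with (rfl | rfl) | (h' | h')
        · exact ⟨Lam.a, rfl⟩
        · exact ⟨Lam.b, rfl⟩
        · refine ⟨Lam.a, ?_⟩
          have : x = Aelt⁻¹ := by rw [← h']; simp
          rw [this, A_inv]; rfl
        · refine ⟨Lam.b', ?_⟩
          have : x = Belt⁻¹ := by rw [← h']; simp
          rw [this]; rfl
      obtain ⟨l, hl⟩ := this
      exact ⟨l :: M, by simp [hMl], by rw [evp_cons, hl, hMe, List.prod_cons]⟩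

end PSLAux

open PSLAux in
/-- For `k ≥ 1`, `ε₁, ε₂ ∈ {0,1}` and `δ₁,…,δ_k ∈ {−1,1}`, the word length of
`w = A^{ε₁} B^{δ₁} A B^{δ₂} A ⋯ A B^{δ_k} A^{ε₂} ∈ PSL₂(ℤ)` with respect to
`{A, B}` is exactly `2k − 1 + ε₁ + ε₂`; in particular `w ≠ 1`. -/
theorem psl2_word_length (k : ℕ) (hk : 1 ≤ k) (ε₁ ε₂ : ℕ) (hε₁ : ε₁ ≤ 1) (hε₂ : ε₂ ≤ 1)
    (δ : ℕ → ℤ) (hδ : ∀ i, 1 ≤ i → i ≤ k → δ i = -1 ∨ δ i = 1) :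
    IsLeast (wordLengths ({Aelt, Belt} : Set PSL(2, ℤ)) (wordW Aelt Belt ε₁ ε₂ δ k))
      (2 * k - 1 + ε₁ + ε₂) ∧
    wordW Aelt Belt ε₁ ε₂ δ k ≠ 1 := by
  have hAlt := alt_W0 δ k ε₁ ε₂ hε₁ hε₂
  have hlen := W0_length δ k ε₁ ε₂ hk
  have hev := W0_evp δ k ε₁ ε₂ hk hδ
  have hW0ne : W0 δ k ε₁ ε₂ ≠ [] := by
    intro h
    rw [h] at hlen
    simp at hlen
    omega
  constructor
  · constructor
    · -- membership
      refine ⟨(W0 δ k ε₁ ε₂).map ev, ?_, by rw [List.length_map, hlen], ?_⟩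
      · intro x hx
        simp only [List.mem_map] at hx
        obtain ⟨l, _, rfl⟩ := hx
        cases l
        · exact Or.inl (Or.inl rfl)
        · exact Or.inl (Or.inr rfl)
        · refine Or.inr ?_
          show (ev Lam.b')⁻¹ ∈ ({Aelt, Belt} : Set PSL(2,ℤ))
          show (Belt⁻¹)⁻¹ ∈ _
          rw [inv_inv]
          exact Or.inr rfl
      · rw [show ((W0 δ k ε₁ ε₂).map ev).prod = evp (W0 δ k ε₁ ε₂) from rfl, hev]
    · -- lower bound
      rintro n ⟨L, hmem, hLlen, hLprod⟩
      obtain ⟨M, hMl, hMe⟩ := exists_lam_list L hmem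
      have hR : reduceW M = W0 δ k ε₁ ε₂ := by
        apply alt_inj _ (reduceW_alt M) _ hAlt
        rw [reduceW_evp, hMe, hLprod, hev]
      calc 2 * k - 1 + ε₁ + ε₂ = (W0 δ k ε₁ ε₂).length := hlen.symm
        _ = (reduceW M).length := by rw [hR]
        _ ≤ M.length := reduceW_length M
        _ = L.length := hMl
        _ = n := hLlen
  · rw [← hev]
    exact alt_ne_one _ hAlt hW0ne

end
end

section
/- The elements g = ABAB and h = AB⁻¹AB⁻¹ of PSL₂(ℤ) freely generate a free group of rank 2; that is, the group homomorphism from the free group on two generators to PSL₂(ℤ) sending the two generators to g and h respectively is injective. -/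
open scoped MatrixGroups

noncomputable section

namespace AbabFree

open Matrix Pointwise

/-- SL₂(ℤ) representative of `A`. -/
def Asl : SL(2,ℤ) := ⟨!![0, -1; 1, 0], by norm_num [Matrix.det_fin_two_of]⟩
/-- SL₂(ℤ) representative of `B`. -/
def Bsl : SL(2,ℤ) := ⟨!![0, -1; 1, 1], by norm_num [Matrix.det_fin_two_of]⟩
/-- SL₂(ℤ) representative of `(AB)²`. -/
def Tsl : SL(2,ℤ) := ⟨!![1, 2; 0, 1], by norm_num [Matrix.det_fin_two_of]⟩
/-- SL₂(ℤ) representative of `(AB⁻¹)²`. -/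
def Lsl : SL(2,ℤ) := ⟨!![1, 0; 2, 1], by norm_num [Matrix.det_fin_two_of]⟩

lemma abab_eq : Asl * Bsl * Asl * Bsl = Tsl := by
  ext i j
  simp only [Matrix.SpecialLinearGroup.coe_mul]
  fin_cases i <;> fin_cases j <;>
    simp [Asl, Bsl, Tsl, Matrix.SpecialLinearGroup.coe_mul, Matrix.mul_apply, Fin.sum_univ_two]

lemma Bsl_inv : Bsl⁻¹ = (⟨!![1, 1; -1, 0], by norm_num [Matrix.det_fin_two_of]⟩ : SL(2,ℤ)) := by
  symm; apply eq_inv_of_mul_eq_one_left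
  apply Subtype.ext
  show !![1, 1; -1, 0] * !![0, -1; 1, 1] = (1 : Matrix (Fin 2) (Fin 2) ℤ)
  ext i j
  fin_cases i <;> fin_cases j <;>
    simp [Bsl, Matrix.SpecialLinearGroup.coe_mul, Matrix.mul_apply, Fin.sum_univ_two]

lemma abab_inv_eq : Asl * Bsl⁻¹ * Asl * Bsl⁻¹ = Lsl := by
  rw [Bsl_inv]
  apply Subtype.ext
  show !![0, -1; 1, 0] * !![1, 1; -1, 0] * !![0, -1; 1, 0] * !![1, 1; -1, 0] = !![1, 0; 2, 1]
  ext i j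
  fin_cases i <;> fin_cases j <;>
    simp [Asl, Lsl, Matrix.SpecialLinearGroup.coe_mul, Matrix.mul_apply, Fin.sum_univ_two]

lemma Tsl_inv : Tsl⁻¹ = (⟨!![1, -2; 0, 1], by norm_num [Matrix.det_fin_two_of]⟩ : SL(2,ℤ)) := by
  symm; apply eq_inv_of_mul_eq_one_left
  apply Subtype.ext
  show !![1, -2; 0, 1] * !![1, 2; 0, 1] = (1 : Matrix (Fin 2) (Fin 2) ℤ)
  ext i j
  fin_cases i <;> fin_cases j <;>
    simp [Tsl, Matrix.SpecialLinearGroup.coe_mul, Matrix.mul_apply, Fin.sum_univ_two]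

lemma Lsl_inv : Lsl⁻¹ = (⟨!![1, 0; -2, 1], by norm_num [Matrix.det_fin_two_of]⟩ : SL(2,ℤ)) := by
  symm; apply eq_inv_of_mul_eq_one_left
  apply Subtype.ext
  show !![1, 0; -2, 1] * !![1, 0; 2, 1] = (1 : Matrix (Fin 2) (Fin 2) ℤ)
  ext i j
  fin_cases i <;> fin_cases j <;>
    simp [Lsl, Matrix.SpecialLinearGroup.coe_mul, Matrix.mul_apply, Fin.sum_univ_two]

/-! ### The action of `PSL(2,ℤ)` on nonzero real vectors modulo `±1` -/

abbrev Vec := {v : Fin 2 → ℝ // v ≠ 0}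

/-- The real matrix associated to an element of `SL(2,ℤ)`. -/
def rmat (g : SL(2,ℤ)) : Matrix (Fin 2) (Fin 2) ℝ :=
  (g : Matrix (Fin 2) (Fin 2) ℤ).map (Int.castRingHom ℝ)

lemma rmat_mul (g h : SL(2,ℤ)) : rmat (g * h) = rmat g * rmat h := by
  rw [rmat, Matrix.SpecialLinearGroup.coe_mul]
  exact Matrix.map_mul

lemma rmat_one : rmat 1 = 1 := by simp [rmat]

lemma rmat_mulVec_ne_zero (g : SL(2,ℤ)) {v : Fin 2 → ℝ} (hv : v ≠ 0) : rmat g *ᵥ v ≠ 0 := by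
  intro h
  apply hv
  have := congrArg (fun w => rmat g⁻¹ *ᵥ w) h
  rw [Matrix.mulVec_mulVec, ← rmat_mul, inv_mul_cancel,
    rmat_one, Matrix.one_mulVec] at this
  simpa using this

instance actVec : MulAction SL(2,ℤ) Vec where
  smul g v := ⟨rmat g *ᵥ v.1, rmat_mulVec_ne_zero g v.2⟩
  one_smul v := by ext1; simp [HSMul.hSMul, rmat_one]
  mul_smul g h v := by
    ext1; show rmat (g * h) *ᵥ v.1 = rmat g *ᵥ (rmat h *ᵥ v.1)
    rw [rmat_mul, Matrix.mulVec_mulVec]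

lemma smul_vec_def (g : SL(2,ℤ)) (v : Vec) : (g • v).1 = rmat g *ᵥ v.1 := rfl

/-- the relation `v ~ ±v` on nonzero vectors. -/
instance pmSetoid : Setoid Vec where
  r v w := w.1 = v.1 ∨ w.1 = -v.1
  iseqv := by
    constructor
    · intro v; left; rfl
    · rintro v w (h | h)
      · left; rw [h]
      · right; rw [h, neg_neg]
    · rintro u v w (h1 | h1) (h2 | h2)
      · left; rw [h2, h1]
      · right; rw [h2, h1]
      · right; rw [h2, h1]
      · left; rw [h2, h1, neg_neg]

/-- Nonzero vectors of `ℝ²` modulo `±1`. -/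
abbrev Pt := Quotient pmSetoid

instance actPt : MulAction SL(2,ℤ) Pt where
  smul g x := Quotient.map (fun v => g • v) (by
    rintro v w (h | h)
    · left; ext1; simp [smul_vec_def, h]
    · right; ext1; simp [smul_vec_def, h, Matrix.mulVec_neg]) x
  one_smul x := by
    induction x using Quotient.ind with
    | _ v =>
    show (⟦(1 : SL(2,ℤ)) • v⟧ : Pt) = ⟦v⟧
    rw [one_smul]
  mul_smul g h x := by
    induction x using Quotient.ind with
    | _ v =>
    show (⟦(g * h) • v⟧ : Pt) = ⟦g • (h • v)⟧
    rw [mul_smul]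

lemma sl_smul_pt_mk (g : SL(2,ℤ)) (v : Vec) : g • (⟦v⟧ : Pt) = ⟦g • v⟧ := rfl

/-- The center acts trivially on `Pt`. -/
lemma center_le_ker :
    Subgroup.center (SL(2,ℤ)) ≤ (MulAction.toPermHom (SL(2,ℤ)) Pt).ker := by
  intro z hz
  obtain ⟨r, hr2, hrz⟩ := Matrix.SpecialLinearGroup.mem_center_iff.mp hz
  have hr : r = 1 ∨ r = -1 := by
    rcases Int.isUnit_iff.mp (IsUnit.of_mul_eq_one (a := r) r (by rw [← sq]; simpa using hr2)) with h | h
    · left; exact h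
    · right; exact h
  rw [MonoidHom.mem_ker]
  ext x
  induction x using Quotient.ind with
  | _ v =>
  simp only [MulAction.toPermHom_apply, Equiv.Perm.one_apply, MulAction.toPerm_apply]
  rw [sl_smul_pt_mk]
  apply Quotient.sound
  have hmat : rmat z *ᵥ v.1 = (r : ℝ) • v.1 := by
    have : (z : Matrix (Fin 2) (Fin 2) ℤ) = Matrix.diagonal (fun _ => r) := by
      rw [← hrz, Matrix.scalar_apply]
    rw [rmat, this]
    ext i
    fin_cases i <;>
      simp [Matrix.mulVec, dotProduct, Fin.sum_univ_two,
        Matrix.map_apply, Matrix.diagonal_apply]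
  rcases hr with h | h
  · left; rw [smul_vec_def, hmat, h]; simp
  · right; rw [smul_vec_def, hmat, h]; simp

/-- The permutation action of `PSL(2,ℤ)` on `Pt`. -/
def pslPerm : PSL(2,ℤ) →* Equiv.Perm Pt :=
  QuotientGroup.lift _ (MulAction.toPermHom (SL(2,ℤ)) Pt) center_le_ker

instance actPSL : MulAction PSL(2,ℤ) Pt := MulAction.compHom Pt pslPerm

lemma psl_smul_mk (g : SL(2,ℤ)) (x : Pt) :
    (QuotientGroup.mk g : PSL(2,ℤ)) • x = g • x := rfl

/-! ### The ping-pong sets -/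

def Xt : Set Pt := {x | Quotient.lift
  (fun v : Vec => v.1 1 = 0 ∨ v.1 0 * v.1 1 > v.1 1 * v.1 1)
  (by
    rintro v w (h | h) <;> rw [eq_iff_iff] <;> simp [h, neg_mul_neg]) x}

def Yt : Set Pt := {x | Quotient.lift
  (fun v : Vec => v.1 1 ≠ 0 ∧ v.1 0 * v.1 1 ≤ -(v.1 1 * v.1 1))
  (by
    rintro v w (h | h) <;> rw [eq_iff_iff] <;> simp [h, neg_mul_neg]) x}

def Xl : Set Pt := {x | Quotient.lift
  (fun v : Vec => v.1 0 * v.1 1 ≥ v.1 0 * v.1 0)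
  (by
    rintro v w (h | h) <;> rw [eq_iff_iff] <;> simp [h, neg_mul_neg]) x}

def Yl : Set Pt := {x | Quotient.lift
  (fun v : Vec => v.1 0 * v.1 1 < -(v.1 0 * v.1 0))
  (by
    rintro v w (h | h) <;> rw [eq_iff_iff] <;> simp [h, neg_mul_neg]) x}

lemma mem_Xt (v : Vec) : (⟦v⟧ : Pt) ∈ Xt ↔ (v.1 1 = 0 ∨ v.1 0 * v.1 1 > v.1 1 * v.1 1) := Iff.rfl
lemma mem_Yt (v : Vec) : (⟦v⟧ : Pt) ∈ Yt ↔ (v.1 1 ≠ 0 ∧ v.1 0 * v.1 1 ≤ -(v.1 1 * v.1 1)) := Iff.rfl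
lemma mem_Xl (v : Vec) : (⟦v⟧ : Pt) ∈ Xl ↔ v.1 0 * v.1 1 ≥ v.1 0 * v.1 0 := Iff.rfl
lemma mem_Yl (v : Vec) : (⟦v⟧ : Pt) ∈ Yl ↔ v.1 0 * v.1 1 < -(v.1 0 * v.1 0) := Iff.rfl

lemma vec_cases (v : Vec) : v.1 0 ≠ 0 ∨ v.1 1 ≠ 0 := by
  by_contra h
  push_neg at h
  exact v.2 (by ext i; fin_cases i <;> simp [h.1, h.2])

/-! ### Explicit formulas for the action of the generators -/

lemma T_smul_0 (v : Vec) : (Tsl • v).1 0 = v.1 0 + 2 * v.1 1 := by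
  rw [smul_vec_def]
  simp [rmat, Tsl, Matrix.mulVec, dotProduct, Fin.sum_univ_two, Matrix.map_apply]
  try ring

lemma T_smul_1 (v : Vec) : (Tsl • v).1 1 = v.1 1 := by
  rw [smul_vec_def]
  simp [rmat, Tsl, Matrix.mulVec, dotProduct, Fin.sum_univ_two, Matrix.map_apply]

lemma T_inv_smul_0 (v : Vec) : (Tsl⁻¹ • v).1 0 = v.1 0 - 2 * v.1 1 := by
  rw [smul_vec_def, Tsl_inv]
  simp [rmat, Matrix.mulVec, dotProduct, Fin.sum_univ_two, Matrix.map_apply]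
  try ring

lemma T_inv_smul_1 (v : Vec) : (Tsl⁻¹ • v).1 1 = v.1 1 := by
  rw [smul_vec_def, Tsl_inv]
  simp [rmat, Matrix.mulVec, dotProduct, Fin.sum_univ_two, Matrix.map_apply]

lemma L_smul_0 (v : Vec) : (Lsl • v).1 0 = v.1 0 := by
  rw [smul_vec_def]
  simp [rmat, Lsl, Matrix.mulVec, dotProduct, Fin.sum_univ_two, Matrix.map_apply]

lemma L_smul_1 (v : Vec) : (Lsl • v).1 1 = 2 * v.1 0 + v.1 1 := by
  rw [smul_vec_def]
  simp [rmat, Lsl, Matrix.mulVec, dotProduct, Fin.sum_univ_two, Matrix.map_apply]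
  try ring

lemma L_inv_smul_0 (v : Vec) : (Lsl⁻¹ • v).1 0 = v.1 0 := by
  rw [smul_vec_def, Lsl_inv]
  simp [rmat, Matrix.mulVec, dotProduct, Fin.sum_univ_two, Matrix.map_apply]

lemma L_inv_smul_1 (v : Vec) : (Lsl⁻¹ • v).1 1 = v.1 1 - 2 * v.1 0 := by
  rw [smul_vec_def, Lsl_inv]
  simp [rmat, Matrix.mulVec, dotProduct, Fin.sum_univ_two, Matrix.map_apply]
  try ring

end AbabFree

open AbabFree Pointwise in
/-- The elements `g = ABAB` and `h = AB⁻¹AB⁻¹` of `PSL₂(ℤ)` freely generate a free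
group of rank 2: the homomorphism from the free group on two generators sending the
generators to `g` and `h` is injective. -/
theorem abab_free : Function.Injective
    (FreeGroup.lift (fun x : Bool =>
      if x then Aelt * Belt * Aelt * Belt else Aelt * Belt⁻¹ * Aelt * Belt⁻¹) :
      FreeGroup Bool →* PSL(2, ℤ)) := by
  have hfun : (fun x : Bool =>
      if x then Aelt * Belt * Aelt * Belt else Aelt * Belt⁻¹ * Aelt * Belt⁻¹) =
      fun x : Bool => (QuotientGroup.mk (if x then Tsl else Lsl) : PSL(2,ℤ)) := by
    funext b
    cases b
    · show Aelt * Belt⁻¹ * Aelt * Belt⁻¹ = QuotientGroup.mk Lsl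
      rw [← abab_inv_eq]
      rfl
    · show Aelt * Belt * Aelt * Belt = QuotientGroup.mk Tsl
      rw [← abab_eq]
      rfl
  rw [hfun]
  -- ping-pong data
  set a : Bool → PSL(2,ℤ) := fun x => (QuotientGroup.mk (if x then Tsl else Lsl)) with ha
  refine FreeGroup.injective_lift_of_ping_pong a
    (fun b => if b then Xt else Xl) (fun b => if b then Yt else Yl)
    ?_ ?_ ?_ ?_ ?_ ?_
  · -- nonempty
    intro b
    cases b
    · exact ⟨⟦⟨![0,1], by intro h; simpa using congrFun h 1⟩⟧, by simp [mem_Xl]⟩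
    · exact ⟨⟦⟨![1,0], by intro h; simpa using congrFun h 0⟩⟧, by simp [mem_Xt]⟩
  · -- X pairwise disjoint
    intro i j hij
    have : ∀ x, x ∈ Xt → x ∉ Xl := by
      intro x
      induction x using Quotient.ind with
      | _ v =>
      rw [mem_Xt, mem_Xl]
      rintro (h | h) h'
      · rcases vec_cases v with h0 | h1
        · rw [h, mul_zero] at h'
          nlinarith [mul_self_pos.mpr h0]
        · exact h1 h
      · nlinarith [sq_nonneg (v.1 0 - v.1 1)]
    cases i <;> cases j <;> simp_all
    · exact Set.disjoint_left.mpr fun x hx hx' => this x hx' hx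
    · exact Set.disjoint_left.mpr this
  · -- Y pairwise disjoint
    intro i j hij
    have : ∀ x, x ∈ Yt → x ∉ Yl := by
      intro x
      induction x using Quotient.ind with
      | _ v =>
      rw [mem_Yt, mem_Yl]
      rintro ⟨h1, h2⟩ h'
      nlinarith [sq_nonneg (v.1 0 + v.1 1)]
    cases i <;> cases j <;> simp_all
    · exact Set.disjoint_left.mpr fun x hx hx' => this x hx' hx
    · exact Set.disjoint_left.mpr this
  · -- X i disjoint from Y j
    intro i j
    have htt : ∀ x, x ∈ Xt → x ∉ Yt := by
      intro x
      induction x using Quotient.ind with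
      | _ v =>
      rw [mem_Xt, mem_Yt]
      rintro (h | h) ⟨h1, h2⟩
      · exact h1 h
      · nlinarith [mul_self_pos.mpr h1]
    have htl : ∀ x, x ∈ Xt → x ∉ Yl := by
      intro x
      induction x using Quotient.ind with
      | _ v =>
      rw [mem_Xt, mem_Yl]
      rintro (h | h) h'
      · rcases vec_cases v with h0 | h1
        · rw [h, mul_zero] at h'
          nlinarith [mul_self_pos.mpr h0]
        · exact h1 h
      · nlinarith [mul_self_nonneg (v.1 1), mul_self_nonneg (v.1 0)]
    have hlt : ∀ x, x ∈ Xl → x ∉ Yt := by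
      intro x
      induction x using Quotient.ind with
      | _ v =>
      rw [mem_Xl, mem_Yt]
      rintro h ⟨h1, h2⟩
      nlinarith [mul_self_nonneg (v.1 0), mul_self_pos.mpr h1]
    have hll : ∀ x, x ∈ Xl → x ∉ Yl := by
      intro x
      induction x using Quotient.ind with
      | _ v =>
      rw [mem_Xl, mem_Yl]
      intro h h'
      nlinarith [mul_self_nonneg (v.1 0)]
    cases i <;> cases j <;> simp only [if_true, if_false, Bool.false_eq_true]
    · exact Set.disjoint_left.mpr hll
    · exact Set.disjoint_left.mpr hlt
    · exact Set.disjoint_left.mpr htl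
    · exact Set.disjoint_left.mpr htt
  · -- a i • (Y i)ᶜ ⊆ X i
    intro b x hx
    rw [Set.mem_smul_set] at hx
    obtain ⟨y, hy, rfl⟩ := hx
    induction y using Quotient.ind with
    | _ v =>
    cases b
    · simp only [Bool.false_eq_true, if_false, Set.mem_compl_iff, mem_Yl] at hy ⊢
      push_neg at hy
      rw [ha]
      simp only [Bool.false_eq_true, if_false]
      rw [psl_smul_mk, sl_smul_pt_mk, mem_Xl, L_smul_0, L_smul_1]
      nlinarith
    · simp only [if_true, Set.mem_compl_iff, mem_Yt] at hy ⊢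
      push_neg at hy
      rw [ha]
      simp only [if_true]
      rw [psl_smul_mk, sl_smul_pt_mk, mem_Xt, T_smul_0, T_smul_1]
      by_cases h1 : v.1 1 = 0
      · left; exact h1
      · right; have := hy h1; nlinarith
  · -- a⁻¹ i • (X i)ᶜ ⊆ Y i
    intro b x hx
    rw [Set.mem_smul_set] at hx
    obtain ⟨y, hy, rfl⟩ := hx
    induction y using Quotient.ind with
    | _ v =>
    cases b
    · simp only [Bool.false_eq_true, if_false, Set.mem_compl_iff, mem_Xl] at hy ⊢
      push_neg at hy
      rw [ha]
      simp only [Pi.inv_apply, Bool.false_eq_true, if_false]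
      rw [← QuotientGroup.mk_inv, psl_smul_mk, sl_smul_pt_mk, mem_Yl,
        L_inv_smul_0, L_inv_smul_1]
      nlinarith
    · simp only [if_true, Set.mem_compl_iff, mem_Xt] at hy ⊢
      push_neg at hy
      obtain ⟨h1, h2⟩ := hy
      rw [ha]
      simp only [Pi.inv_apply, if_true]
      rw [← QuotientGroup.mk_inv, psl_smul_mk, sl_smul_pt_mk, mem_Yt,
        T_inv_smul_0, T_inv_smul_1]
      refine ⟨h1, by nlinarith⟩

end
end

section
/- The subgroup of PSL₂(ℤ) generated by the two elements ABAB and AB⁻¹AB⁻¹ has finite index in PSL₂(ℤ). -/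
open scoped MatrixGroups

noncomputable section

def T2 : SL(2, ℤ) := ⟨!![1, 2; 0, 1], by norm_num [Matrix.det_fin_two_of]⟩
def L2 : SL(2, ℤ) := ⟨!![1, 0; 2, 1], by norm_num [Matrix.det_fin_two_of]⟩

lemma T2_inv : T2⁻¹ = ⟨!![1, -2; 0, 1], by norm_num [Matrix.det_fin_two_of]⟩ := by
  apply inv_eq_of_mul_eq_one_right
  ext i j
  erw [Matrix.SpecialLinearGroup.coe_mul]
  fin_cases i <;> fin_cases j <;>
    simp [T2, Matrix.mul_apply, Fin.sum_univ_succ]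

lemma L2_inv : L2⁻¹ = ⟨!![1, 0; -2, 1], by norm_num [Matrix.det_fin_two_of]⟩ := by
  apply inv_eq_of_mul_eq_one_right
  ext i j
  erw [Matrix.SpecialLinearGroup.coe_mul]
  fin_cases i <;> fin_cases j <;>
    simp [L2, Matrix.mul_apply, Fin.sum_univ_succ]

lemma coe_T2_zpow (m : ℤ) :
    ((T2 ^ m : SL(2, ℤ)) : Matrix (Fin 2) (Fin 2) ℤ) = !![1, 2*m; 0, 1] := by
  induction m using Int.induction_on with
  | zero => simp [Matrix.one_fin_two]
  | succ n ih =>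
    rw [zpow_add_one, Matrix.SpecialLinearGroup.coe_mul, ih]
    ext i j
    fin_cases i <;> fin_cases j <;>
      simp [T2, Matrix.mul_apply, Fin.sum_univ_succ] <;> ring
  | pred n ih =>
    rw [zpow_sub_one, Matrix.SpecialLinearGroup.coe_mul, ih, T2_inv]
    ext i j
    fin_cases i <;> fin_cases j <;>
      simp [Matrix.mul_apply, Fin.sum_univ_succ] <;> ring

lemma coe_L2_zpow (m : ℤ) :
    ((L2 ^ m : SL(2, ℤ)) : Matrix (Fin 2) (Fin 2) ℤ) = !![1, 0; 2*m, 1] := by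
  induction m using Int.induction_on with
  | zero => simp [Matrix.one_fin_two]
  | succ n ih =>
    rw [zpow_add_one, Matrix.SpecialLinearGroup.coe_mul, ih]
    ext i j
    fin_cases i <;> fin_cases j <;>
      simp [L2, Matrix.mul_apply, Fin.sum_univ_succ] <;> ring
  | pred n ih =>
    rw [zpow_sub_one, Matrix.SpecialLinearGroup.coe_mul, ih, L2_inv]
    ext i j
    fin_cases i <;> fin_cases j <;>
      simp [Matrix.mul_apply, Fin.sum_univ_succ] <;> ring


lemma exists_red (x y : ℤ) (hy : y ≠ 0) (hodd : Odd (x + y)) :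
    ∃ t : ℤ, (x + 2 * t * y).natAbs < y.natAbs := by
  have hk := Int.natAbs_eq y
  set k : ℤ := (y.natAbs : ℤ) with hkdef
  have hk0 : 0 < k := by rcases hk with h | h <;> omega
  have h1 : 0 ≤ x % (2 * k) := Int.emod_nonneg x (by omega)
  have h2 : x % (2 * k) < 2 * k := Int.emod_lt_of_pos x (by omega)
  have h3 : x % (2 * k) = x - 2 * k * (x / (2 * k)) := by
    rw [Int.emod_def]
  obtain ⟨c, hc⟩ := hodd
  set q := x / (2 * k) with hq
  set r := x % (2 * k) with hr
  have hrk : r ≠ k := by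
    have he : r = x + 2 * -(k * q) := by rw [h3]; ring
    rcases hk with h | h <;> omega
  by_cases hlt : r < k
  · rcases hk with h | h
    · have heq : x + 2 * -q * y = r := by rw [h3, show y = k from h]; ring
      exact ⟨-q, by rw [heq]; omega⟩
    · have heq : x + 2 * q * y = r := by rw [h3, show y = -k from h]; ring
      exact ⟨q, by rw [heq]; omega⟩
  · rcases hk with h | h
    · have heq : x + 2 * (-q - 1) * y = r - 2 * k := by
        rw [h3, show y = k from h]; ring
      exact ⟨-q - 1, by rw [heq]; omega⟩
    · have heq : x + 2 * (q + 1) * y = r - 2 * k := by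
        rw [h3, show y = -k from h]; ring
      exact ⟨q + 1, by rw [heq]; omega⟩

lemma mem_c_zero (K : Subgroup SL(2, ℤ)) (hT : T2 ∈ K) (hneg : (-1 : SL(2, ℤ)) ∈ K)
    (M : SL(2, ℤ)) (hc : (M : Matrix (Fin 2) (Fin 2) ℤ) 1 0 = 0)
    (hb : Even ((M : Matrix (Fin 2) (Fin 2) ℤ) 0 1)) : M ∈ K := by
  have hdet := M.2
  rw [Matrix.det_fin_two] at hdet
  rw [hc] at hdet
  have had : (M : Matrix (Fin 2) (Fin 2) ℤ) 0 0 * (M : Matrix (Fin 2) (Fin 2) ℤ) 1 1 = 1 := by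
    linarith
  obtain ⟨m, hm⟩ := hb
  rcases Int.eq_one_or_neg_one_of_mul_eq_one' had with ⟨ha, hd⟩ | ⟨ha, hd⟩
  · have hM : M = T2 ^ m := by
      ext i j
      rw [coe_T2_zpow]
      fin_cases i <;> fin_cases j <;> simp [ha, hd, hc] <;> omega
    exact hM ▸ zpow_mem hT m
  · have hM : M = -1 * T2 ^ (-m) := by
      ext i j
      rw [Matrix.SpecialLinearGroup.coe_mul, coe_T2_zpow]
      have : ((-1 : SL(2, ℤ)) : Matrix (Fin 2) (Fin 2) ℤ) = -1 := by
        simp [Matrix.SpecialLinearGroup.coe_neg]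
      rw [this]
      fin_cases i <;> fin_cases j <;>
        simp [Matrix.mul_apply, Fin.sum_univ_succ, Matrix.neg_apply, Matrix.one_apply, ha, hd, hc] <;> omega
    exact hM ▸ mul_mem hneg (zpow_mem hT (-m))

lemma mem_of_parity (K : Subgroup SL(2, ℤ)) (hT : T2 ∈ K) (hL : L2 ∈ K)
    (hneg : (-1 : SL(2, ℤ)) ∈ K) :
    ∀ n : ℕ, ∀ M : SL(2, ℤ),
      ((M : Matrix (Fin 2) (Fin 2) ℤ) 1 0).natAbs ≤ n →
      Odd ((M : Matrix (Fin 2) (Fin 2) ℤ) 0 0) →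
      Even ((M : Matrix (Fin 2) (Fin 2) ℤ) 0 1) →
      Even ((M : Matrix (Fin 2) (Fin 2) ℤ) 1 0) →
      Odd ((M : Matrix (Fin 2) (Fin 2) ℤ) 1 1) → M ∈ K := by
  intro n
  induction n with
  | zero =>
    intro M hn ha hb hc hd
    exact mem_c_zero K hT hneg M (by omega) hb
  | succ n ih =>
    intro M hn ha hb hc hd
    by_cases hc0 : (M : Matrix (Fin 2) (Fin 2) ℤ) 1 0 = 0
    · exact mem_c_zero K hT hneg M hc0 hb
    set a := (M : Matrix (Fin 2) (Fin 2) ℤ) 0 0 with hadef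
    set b := (M : Matrix (Fin 2) (Fin 2) ℤ) 0 1 with hbdef
    set c := (M : Matrix (Fin 2) (Fin 2) ℤ) 1 0 with hcdef
    set d := (M : Matrix (Fin 2) (Fin 2) ℤ) 1 1 with hddef
    obtain ⟨t, hat⟩ := exists_red a c hc0 (ha.add_even hc)
    set a' := a + 2 * t * c with ha'def
    have ha' : Odd a' := by
      obtain ⟨j, hj⟩ := ha
      exact ⟨j + t * c, by rw [ha'def, hj]; ring⟩
    have ha'0 : a' ≠ 0 := by
      intro h
      rw [h] at ha'
      exact (by simpa using ha' : False)
    obtain ⟨s, hcs⟩ := exists_red c a' ha'0 (hc.add_odd ha')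
    set M' := L2 ^ s * (T2 ^ t * M) with hM'def
    have hM'coe : (M' : Matrix (Fin 2) (Fin 2) ℤ) =
        !![a', b + 2 * t * d; c + 2 * s * a', 2 * s * (b + 2 * t * d) + d] := by
      rw [hM'def, Matrix.SpecialLinearGroup.coe_mul, Matrix.SpecialLinearGroup.coe_mul,
        coe_T2_zpow, coe_L2_zpow, Matrix.eta_fin_two (M : Matrix (Fin 2) (Fin 2) ℤ)]
      ext i j
      fin_cases i <;> fin_cases j <;>
        simp [Matrix.mul_apply, Fin.sum_univ_succ, ha'def] <;> ring
    have hmem : M' ∈ K := by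
      apply ih M'
      · rw [hM'coe]
        show (c + 2 * s * a').natAbs ≤ n
        omega
      · rw [hM'coe]; show Odd a'; exact ha'
      · rw [hM'coe]
        show Even (b + 2 * t * d)
        obtain ⟨j, hj⟩ := hb
        exact ⟨j + t * d, by rw [hj]; ring⟩
      · rw [hM'coe]
        show Even (c + 2 * s * a')
        obtain ⟨j, hj⟩ := hc
        exact ⟨j + s * a', by rw [hj]; ring⟩
      · rw [hM'coe]
        show Odd (2 * s * (b + 2 * t * d) + d)
        obtain ⟨j, hj⟩ := hd
        exact ⟨s * (b + 2 * t * d) + j, by rw [hj]; ring⟩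
    have hMeq : M = T2 ^ (-t) * (L2 ^ (-s) * M') := by
      rw [hM'def]
      group
    rw [hMeq]
    exact mul_mem (zpow_mem hT _) (mul_mem (zpow_mem hL _) hmem)

lemma hg1 : Aelt * Belt * Aelt * Belt = (QuotientGroup.mk T2 : PSL(2, ℤ)) := by
  show (QuotientGroup.mk _ : PSL(2,ℤ)) * QuotientGroup.mk _ * QuotientGroup.mk _ *
      QuotientGroup.mk _ = _
  erw [← QuotientGroup.mk_mul]
  congr 1
  ext i j
  fin_cases i <;> fin_cases j <;>
    rfl

def Bsl : SL(2, ℤ) := ⟨!![0, -1; 1, 1], by norm_num [Matrix.det_fin_two_of]⟩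

lemma hg2 : Aelt * Belt⁻¹ * Aelt * Belt⁻¹ = (QuotientGroup.mk L2 : PSL(2, ℤ)) := by
  have hBinv : Bsl⁻¹ = (⟨!![1, 1; -1, 0], by norm_num [Matrix.det_fin_two_of]⟩ : SL(2, ℤ)) := by
    apply inv_eq_of_mul_eq_one_right
    ext i j
    erw [Matrix.SpecialLinearGroup.coe_mul]
    fin_cases i <;> fin_cases j <;>
      simp [Bsl, Matrix.mul_apply, Fin.sum_univ_succ]
  show (QuotientGroup.mk _ : PSL(2,ℤ)) * (QuotientGroup.mk Bsl)⁻¹ * QuotientGroup.mk _ *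
      (QuotientGroup.mk Bsl)⁻¹ = _
  rw [← QuotientGroup.mk_inv, hBinv]
  erw [← QuotientGroup.mk_mul]
  congr 1
  ext i j
  fin_cases i <;> fin_cases j <;>
    rfl


/-- The subgroup of `PSL₂(ℤ)` generated by `ABAB` and `AB⁻¹AB⁻¹` has finite index. -/
theorem abab_finite_index :
    (Subgroup.closure ({Aelt * Belt * Aelt * Belt, Aelt * Belt⁻¹ * Aelt * Belt⁻¹} :
      Set PSL(2, ℤ))).FiniteIndex := by
  set H := Subgroup.closure ({Aelt * Belt * Aelt * Belt, Aelt * Belt⁻¹ * Aelt * Belt⁻¹} :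
      Set PSL(2, ℤ)) with hH
  set φ := QuotientGroup.mk' (Subgroup.center (Matrix.SpecialLinearGroup (Fin 2) ℤ)) with hφ
  set K := H.comap φ with hK
  have hTK : T2 ∈ K := by
    apply Subgroup.subset_closure
    rw [show φ T2 = QuotientGroup.mk T2 from rfl, ← hg1]
    exact Set.mem_insert _ _
  have hLK : L2 ∈ K := by
    apply Subgroup.subset_closure
    rw [show φ L2 = QuotientGroup.mk L2 from rfl, ← hg2]
    exact Set.mem_insert_of_mem _ rfl
  have hnegK : (-1 : SL(2, ℤ)) ∈ K := by
    have hcen : (-1 : SL(2, ℤ)) ∈ Subgroup.center (Matrix.SpecialLinearGroup (Fin 2) ℤ) :=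
      Subgroup.mem_center_iff.mpr fun g => by simp
    show φ (-1) ∈ H
    rw [show φ (-1 : SL(2, ℤ)) = 1 from (QuotientGroup.eq_one_iff _).mpr hcen]
    exact one_mem H
  set f : SL(2, ℤ) →* Matrix.SpecialLinearGroup (Fin 2) (ZMod 2) :=
    Matrix.SpecialLinearGroup.map (Int.castRingHom (ZMod 2)) with hf
  have hker : f.ker ≤ K := by
    intro M hM
    have hMat : ∀ i j, ((((M : Matrix (Fin 2) (Fin 2) ℤ) i j : ℤ) : ZMod 2))
        = (1 : Matrix (Fin 2) (Fin 2) (ZMod 2)) i j := by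
      intro i j
      have : ((f M : Matrix (Fin 2) (Fin 2) (ZMod 2))) = (1 : Matrix (Fin 2) (Fin 2) (ZMod 2)) := by
        rw [MonoidHom.mem_ker.mp hM]; rfl
      have h2 := congrFun (congrFun this i) j
      simpa [hf, Matrix.SpecialLinearGroup.map_apply_coe, Matrix.map_apply] using h2
    have odd_of : ∀ i j, (1 : Matrix (Fin 2) (Fin 2) (ZMod 2)) i j = 1 →
        Odd ((M : Matrix (Fin 2) (Fin 2) ℤ) i j) := by
      intro i j h
      rw [Int.not_even_iff_odd.symm]
      rw [show (Even ((M : Matrix (Fin 2) (Fin 2) ℤ) i j)) ↔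
        (2:ℤ) ∣ (M : Matrix (Fin 2) (Fin 2) ℤ) i j from
        ⟨fun ⟨r,hr⟩ => ⟨r, by omega⟩, fun ⟨r,hr⟩ => ⟨r, by omega⟩⟩]
      intro hdvd
      have h0 : (((M : Matrix (Fin 2) (Fin 2) ℤ) i j : ℤ) : ZMod 2) = 0 := by
        rw [ZMod.intCast_zmod_eq_zero_iff_dvd]
        exact_mod_cast hdvd

      rw [hMat i j, h] at h0
      exact one_ne_zero h0
    have even_of : ∀ i j, (1 : Matrix (Fin 2) (Fin 2) (ZMod 2)) i j = 0 →
        Even ((M : Matrix (Fin 2) (Fin 2) ℤ) i j) := by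
      intro i j h
      have h0 := (ZMod.intCast_zmod_eq_zero_iff_dvd ((M : Matrix (Fin 2) (Fin 2) ℤ) i j) 2).mp
        (by rw [hMat i j, h])
      obtain ⟨r, hr⟩ := h0
      exact ⟨r, by omega⟩
    exact mem_of_parity K hTK hLK hnegK _ M le_rfl
      (odd_of 0 0 (by simp [Matrix.one_apply])) (even_of 0 1 (by simp [Matrix.one_apply]))
      (even_of 1 0 (by simp [Matrix.one_apply])) (odd_of 1 1 (by simp [Matrix.one_apply]))
  have h1 : K.index = H.index :=
    Subgroup.index_comap_of_surjective H (QuotientGroup.mk'_surjective _)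
  have h2 : K.index ∣ f.ker.index := Subgroup.index_dvd_of_le hker
  have h3 : f.ker.index ≠ 0 := by
    rw [Subgroup.index_ker]
    exact Nat.card_pos.ne'
  refine ⟨?_⟩
  rw [← h1]
  intro h
  rw [h] at h2
  exact h3 (Nat.eq_zero_of_zero_dvd h2)

end
end

section
/- The subgroup H of Thompson's group T generated by the two elements abab and ab⁻¹ab⁻¹ is a free group of rank 2 (these two elements freely generate H), and H is undistorted in T: for every finite generating set Z of T there exist constants K > 0 and L such that |g|_{{abab, ab⁻¹ab⁻¹}} ≤ K·|g|_Z + L for every g ∈ H. -/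
noncomputable section

/-- The word length of `g` with respect to `S`: the least `n` such that `g` is a
product of `n` elements of `S ∪ S⁻¹`. -/
def wordLen {G : Type*} [Group G] (S : Set G) (g : G) : ℕ :=
  sInf {n | ∃ L : List G, (∀ x ∈ L, x ∈ S ∪ S⁻¹) ∧ L.length = n ∧ L.prod = g}

theorem Equiv.Perm.inv_apply_self {α : Type*} (f : Equiv.Perm α) (x : α) : f⁻¹ (f x) = x :=
  Equiv.symm_apply_apply f x

theorem Equiv.Perm.apply_inv_self {α : Type*} (f : Equiv.Perm α) (x : α) : f (f⁻¹ x) = x :=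
  Equiv.apply_symm_apply f x

namespace ThompsonAux

lemma coe_int_add (k : ℤ) (x : ℝ) : ((x + k : ℝ) : UnitCircle) = (x : UnitCircle) := by
  have h1 : ((x + k : ℝ) : UnitCircle) = (x : UnitCircle) + ((k : ℝ) : UnitCircle) := rfl
  have hk : (((k : ℝ)) : UnitCircle) = 0 := by
    rw [QuotientAddGroup.eq_zero_iff]
    exact ⟨k, by simp⟩
  rw [h1, hk, add_zero]

lemma coe_add_one (x : ℝ) : ((x + 1 : ℝ) : UnitCircle) = (x : UnitCircle) := by
  simpa using coe_int_add 1 x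

lemma coe_sub_one (x : ℝ) : ((x - 1 : ℝ) : UnitCircle) = (x : UnitCircle) := by
  simpa using coe_int_add (-1) x

lemma coe_eq_coe_iff {x y : ℝ} :
    (x : UnitCircle) = (y : UnitCircle) ↔ ∃ k : ℤ, x = y + k := by
  rw [QuotientAddGroup.eq_iff_sub_mem]
  constructor
  · rintro h
    rw [AddSubgroup.mem_zmultiples_iff] at h
    obtain ⟨k, hk⟩ := h
    exact ⟨k, by simp at hk; linarith⟩
  · rintro ⟨k, rfl⟩
    rw [AddSubgroup.mem_zmultiples_iff]
    exact ⟨k, by simp⟩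

lemma norm_coe_le (x : ℝ) : ‖(x : UnitCircle)‖ ≤ |x| := by
  rw [AddCircle.norm_eq]
  simpa using round_le x 0

lemma norm_coe_quarter : ‖((1/4 : ℝ) : UnitCircle)‖ = 1/4 := by
  rw [(AddCircle.norm_coe_eq_abs_iff (1:ℝ) one_ne_zero).2 (by rw [abs_of_pos]; norm_num; norm_num)]
  rw [abs_of_pos]; norm_num

end ThompsonAux

namespace ThompsonAux

open ThompsonAux

section Dynamics

variable {a b : Equiv.Perm UnitCircle} (ha : IsRotHalf a) (hb : IsBElt b)

include hb in
lemma b_apply {x : ℝ} (h0 : 0 ≤ x) (h1 : x ≤ 1) : b (x : UnitCircle) = ((bMap x : ℝ) : UnitCircle) :=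
  hb x ⟨h0, h1⟩

include ha hb in
lemma cA {x : ℝ} (h0 : 0 ≤ x) (h1 : x ≤ 1/2) :
    a (b (x : UnitCircle)) = ((x/2 + 5/4 : ℝ) : UnitCircle) := by
  rw [b_apply hb h0 (by linarith), bMap, if_pos h1, ha]
  exact congrArg _ (by ring)

include ha hb in
lemma cB {x : ℝ} (h0 : 1/2 < x) (h1 : x ≤ 3/4) :
    a (b (x : UnitCircle)) = ((2*x - 1/2 : ℝ) : UnitCircle) := by
  rw [b_apply hb (by linarith) (by linarith), bMap, if_neg (by linarith), if_pos h1, ha]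
  exact congrArg _ (by ring)

include ha hb in
lemma cC {x : ℝ} (h0 : 3/4 < x) (h1 : x ≤ 1) :
    a (b (x : UnitCircle)) = ((x + 1/4 : ℝ) : UnitCircle) := by
  rw [b_apply hb (by linarith) h1, bMap, if_neg (by linarith), if_neg (by linarith), ha]
  exact congrArg _ (by ring)

include ha hb in
lemma cinvB {y : ℝ} (h0 : 1/2 < y) (h1 : y ≤ 1) :
    b⁻¹ (a⁻¹ (y : UnitCircle)) = ((y/2 + 1/4 : ℝ) : UnitCircle) := by
  have hx : a (b ((y/2 + 1/4 : ℝ) : UnitCircle)) = ((y : ℝ) : UnitCircle) := by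
    rw [cB ha hb (by linarith) (by linarith)]
    exact congrArg _ (by ring)
  calc b⁻¹ (a⁻¹ ((y : ℝ) : UnitCircle)) = b⁻¹ (a⁻¹ (a (b _))) := by rw [hx]
    _ = _ := by rw [Equiv.Perm.inv_apply_self, Equiv.Perm.inv_apply_self]

include ha hb in
lemma cinvC {y : ℝ} (h0 : 1 < y) (h1 : y ≤ 5/4) :
    b⁻¹ (a⁻¹ (y : UnitCircle)) = ((y - 1/4 : ℝ) : UnitCircle) := by
  have hx : a (b ((y - 1/4 : ℝ) : UnitCircle)) = ((y : ℝ) : UnitCircle) := by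
    rw [cC ha hb (by linarith) (by linarith)]
    exact congrArg _ (by ring)
  calc b⁻¹ (a⁻¹ ((y : ℝ) : UnitCircle)) = b⁻¹ (a⁻¹ (a (b _))) := by rw [hx]
    _ = _ := by rw [Equiv.Perm.inv_apply_self, Equiv.Perm.inv_apply_self]

include ha hb in
lemma dA {y : ℝ} (h0 : 0 < y) (h1 : y ≤ 1/2) :
    a (b⁻¹ (y : UnitCircle)) = ((y/2 + 1 : ℝ) : UnitCircle) := by
  have hx : b (((y+1)/2 : ℝ) : UnitCircle) = ((y : ℝ) : UnitCircle) := by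
    rw [b_apply hb (by linarith) (by linarith), bMap, if_neg (by linarith), if_pos (by linarith)]
    exact congrArg _ (by ring)
  have : b⁻¹ ((y : ℝ) : UnitCircle) = (((y+1)/2 : ℝ) : UnitCircle) := by
    rw [← hx, Equiv.Perm.inv_apply_self]
  rw [this, ha]
  exact congrArg _ (by ring)

include ha hb in
lemma dB {y : ℝ} (h0 : 1/2 < y) (h1 : y < 3/4) :
    a (b⁻¹ (y : UnitCircle)) = ((y + 3/4 : ℝ) : UnitCircle) := by
  have hx : b ((y + 1/4 : ℝ) : UnitCircle) = ((y : ℝ) : UnitCircle) := by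
    rw [b_apply hb (by linarith) (by linarith), bMap, if_neg (by linarith), if_neg (by linarith)]
    exact congrArg _ (by ring)
  have : b⁻¹ ((y : ℝ) : UnitCircle) = ((y + 1/4 : ℝ) : UnitCircle) := by
    rw [← hx, Equiv.Perm.inv_apply_self]
  rw [this, ha]
  exact congrArg _ (by ring)

include ha hb in
lemma dC {y : ℝ} (h0 : 3/4 ≤ y) (h1 : y ≤ 1) :
    a (b⁻¹ (y : UnitCircle)) = ((2*y - 1 : ℝ) : UnitCircle) := by
  have hx : b ((2*y - 3/2 : ℝ) : UnitCircle) = ((y : ℝ) : UnitCircle) := by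
    rw [b_apply hb (by linarith) (by linarith), bMap, if_pos (by linarith)]
    exact congrArg _ (by ring)
  have : b⁻¹ ((y : ℝ) : UnitCircle) = ((2*y - 3/2 : ℝ) : UnitCircle) := by
    rw [← hx, Equiv.Perm.inv_apply_self]
  rw [this, ha]
  exact congrArg _ (by ring)

include ha hb in
lemma dinvB {z : ℝ} (h0 : 5/4 < z) (h1 : z < 3/2) :
    b (a⁻¹ (z : UnitCircle)) = ((z - 3/4 : ℝ) : UnitCircle) := by
  have hx : a (b⁻¹ ((z - 3/4 : ℝ) : UnitCircle)) = ((z : ℝ) : UnitCircle) := by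
    rw [dB ha hb (by linarith) (by linarith)]
    exact congrArg _ (by ring)
  calc b (a⁻¹ ((z : ℝ) : UnitCircle)) = b (a⁻¹ (a (b⁻¹ _))) := by rw [hx]
    _ = _ := by rw [Equiv.Perm.inv_apply_self, Equiv.Perm.apply_inv_self]

include ha hb in
lemma dinvC {z : ℝ} (h0 : 1/2 ≤ z) (h1 : z ≤ 1) :
    b (a⁻¹ (z : UnitCircle)) = (((z+1)/2 : ℝ) : UnitCircle) := by
  have hx : a (b⁻¹ (((z+1)/2 : ℝ) : UnitCircle)) = ((z : ℝ) : UnitCircle) := by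
    rw [dC ha hb (by linarith) (by linarith)]
    exact congrArg _ (by ring)
  calc b (a⁻¹ ((z : ℝ) : UnitCircle)) = b (a⁻¹ (a (b⁻¹ _))) := by rw [hx]
    _ = _ := by rw [Equiv.Perm.inv_apply_self, Equiv.Perm.apply_inv_self]

end Dynamics

end ThompsonAux
namespace ThompsonAux

lemma coe_shift_up {s t : ℝ} (h : s = t + 1) : ((s : ℝ) : UnitCircle) = ((t : ℝ) : UnitCircle) := by
  rw [h]; exact coe_add_one t

lemma coe_shift_down {s t : ℝ} (h : s = t - 1) : ((s : ℝ) : UnitCircle) = ((t : ℝ) : UnitCircle) := by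
  rw [h]; exact coe_sub_one t

def PhiU (x : ℝ) : ℝ := if x ≤ 1 then x/2 + 7/8 else x/4 + 9/8
def PhiUi (x : ℝ) : ℝ := if x ≤ 1 then x/4 + 3/8 else x/2 + 1/8
def PhiV (x : ℝ) : ℝ := if x ≤ 1/2 then x/4 else x/2 - 1/8
def PhiVi (x : ℝ) : ℝ := if x < 1/2 then x/2 + 5/8 else x/4 + 3/4

section Letters

variable {a b : Equiv.Perm UnitCircle} (ha : IsRotHalf a) (hb : IsBElt b)

include ha hb in
lemma applyU {x : ℝ} (h0 : 3/4 < x) (h1 : x < 3/2) :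
    (a*b*a*b) ((x : ℝ) : UnitCircle) = ((PhiU x : ℝ) : UnitCircle)
      ∧ 5/4 < PhiU x ∧ PhiU x < 3/2 := by
  have happ : (a*b*a*b) ((x : ℝ) : UnitCircle) = a (b (a (b ((x : ℝ) : UnitCircle)))) := rfl
  by_cases hc : x ≤ 1
  · refine ⟨?_, by rw [PhiU, if_pos hc]; linarith, by rw [PhiU, if_pos hc]; linarith⟩
    rw [happ, cC ha hb h0 hc, coe_shift_up (by ring : x + 1/4 = (x - 3/4) + 1),
      cA ha hb (by linarith) (by linarith), PhiU, if_pos hc]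
    exact congrArg _ (by ring)
  · push_neg at hc
    refine ⟨?_, by rw [PhiU, if_neg (by linarith)]; linarith,
      by rw [PhiU, if_neg (by linarith)]; linarith⟩
    rw [happ, show ((x : ℝ) : UnitCircle) = ((x - 1 : ℝ) : UnitCircle) from (coe_sub_one x).symm,
      cA ha hb (by linarith) (by linarith),
      coe_shift_up (by ring : (x-1)/2 + 5/4 = (x/2 - 1/4) + 1),
      cA ha hb (by linarith) (by linarith), PhiU, if_neg (by linarith)]
    exact congrArg _ (by ring)

include ha hb in
lemma applyUi {x : ℝ} (h0 : 1/2 < x) (h1 : x < 5/4) :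
    (a*b*a*b)⁻¹ ((x : ℝ) : UnitCircle) = ((PhiUi x : ℝ) : UnitCircle)
      ∧ 1/2 < PhiUi x ∧ PhiUi x < 3/4 := by
  have happ : (a*b*a*b)⁻¹ ((x : ℝ) : UnitCircle)
      = b⁻¹ (a⁻¹ (b⁻¹ (a⁻¹ ((x : ℝ) : UnitCircle)))) := by
    simp [mul_inv_rev, Equiv.Perm.mul_apply]
  by_cases hc : x ≤ 1
  · refine ⟨?_, by rw [PhiUi, if_pos hc]; linarith, by rw [PhiUi, if_pos hc]; linarith⟩
    rw [happ, cinvB ha hb h0 hc, cinvB ha hb (by linarith) (by linarith), PhiUi, if_pos hc]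
    exact congrArg _ (by ring)
  · push_neg at hc
    refine ⟨?_, by rw [PhiUi, if_neg (by linarith)]; linarith,
      by rw [PhiUi, if_neg (by linarith)]; linarith⟩
    rw [happ, cinvC ha hb hc (by linarith), cinvB ha hb (by linarith) (by linarith),
      PhiUi, if_neg (by linarith)]
    exact congrArg _ (by ring)

include ha hb in
lemma applyV {x : ℝ} (h0 : 0 < x) (h1 : x < 3/4) :
    (a*b⁻¹*a*b⁻¹) ((x : ℝ) : UnitCircle) = ((PhiV x : ℝ) : UnitCircle)
      ∧ 0 < PhiV x ∧ PhiV x < 1/4 := by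
  have happ : (a*b⁻¹*a*b⁻¹) ((x : ℝ) : UnitCircle)
      = a (b⁻¹ (a (b⁻¹ ((x : ℝ) : UnitCircle)))) := rfl
  by_cases hc : x ≤ 1/2
  · refine ⟨?_, by rw [PhiV, if_pos hc]; linarith, by rw [PhiV, if_pos hc]; linarith⟩
    rw [happ, dA ha hb h0 hc, coe_shift_up (by ring : x/2 + 1 = x/2 + 1),
      dA ha hb (by linarith) (by linarith),
      coe_shift_up (by ring : x/2/2 + 1 = x/4 + 1), PhiV, if_pos hc]
  · push_neg at hc
    refine ⟨?_, by rw [PhiV, if_neg (by linarith)]; linarith,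
      by rw [PhiV, if_neg (by linarith)]; linarith⟩
    rw [happ, dB ha hb hc h1, coe_shift_up (by ring : x + 3/4 = (x - 1/4) + 1),
      dA ha hb (by linarith) (by linarith),
      coe_shift_up (by ring : (x - 1/4)/2 + 1 = (x/2 - 1/8) + 1), PhiV, if_neg (by linarith)]

include ha hb in
lemma applyVi {x : ℝ} (h0 : 1/4 < x) (h1 : x < 1) :
    (a*b⁻¹*a*b⁻¹)⁻¹ ((x : ℝ) : UnitCircle) = ((PhiVi x : ℝ) : UnitCircle)
      ∧ 3/4 < PhiVi x ∧ PhiVi x < 1 := by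
  have happ : (a*b⁻¹*a*b⁻¹)⁻¹ ((x : ℝ) : UnitCircle)
      = b (a⁻¹ (b (a⁻¹ ((x : ℝ) : UnitCircle)))) := by
    simp [mul_inv_rev, Equiv.Perm.mul_apply]
  by_cases hc : x < 1/2
  · refine ⟨?_, by rw [PhiVi, if_pos hc]; linarith, by rw [PhiVi, if_pos hc]; linarith⟩
    rw [happ, show ((x : ℝ) : UnitCircle) = ((x + 1 : ℝ) : UnitCircle) from (coe_add_one x).symm,
      dinvB ha hb (by linarith) (by linarith),
      show ((x + 1 - 3/4 : ℝ) : UnitCircle) = ((x + 1/4 : ℝ) : UnitCircle) from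
        congrArg _ (by ring),
      dinvC ha hb (by linarith) (by linarith), PhiVi, if_pos hc]
    exact congrArg _ (by ring)
  · push_neg at hc
    refine ⟨?_, by rw [PhiVi, if_neg (by linarith)]; linarith,
      by rw [PhiVi, if_neg (by linarith)]; linarith⟩
    rw [happ, dinvC ha hb (by linarith) (by linarith),
      dinvC ha hb (by linarith) (by linarith), PhiVi, if_neg (by linarith)]
    exact congrArg _ (by ring)

end Letters

end ThompsonAux
namespace ThompsonAux

def Phi : Bool × Bool → ℝ → ℝ
  | (true, true) => PhiU
  | (true, false) => PhiUi
  | (false, true) => PhiV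
  | (false, false) => PhiVi

def dlo : Bool × Bool → ℝ
  | (true, true) => 3/4
  | (true, false) => 1/2
  | (false, true) => 0
  | (false, false) => 1/4

def dhi : Bool × Bool → ℝ
  | (true, true) => 3/2
  | (true, false) => 5/4
  | (false, true) => 3/4
  | (false, false) => 1

def slo : Bool × Bool → ℝ
  | (true, true) => 5/4
  | (true, false) => 1/2
  | (false, true) => 0
  | (false, false) => 3/4

def shi : Bool × Bool → ℝ
  | (true, true) => 3/2
  | (true, false) => 3/4
  | (false, true) => 1/4
  | (false, false) => 1

def letterPerm (a b : Equiv.Perm UnitCircle) (l : Bool × Bool) : Equiv.Perm UnitCircle :=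
  cond l.2 (if l.1 then a*b*a*b else a*b⁻¹*a*b⁻¹) (if l.1 then a*b*a*b else a*b⁻¹*a*b⁻¹)⁻¹

def NoCancel (p q : Bool × Bool) : Prop := p.1 = q.1 → p.2 = q.2

def prodL (a b : Equiv.Perm UnitCircle) (L : List (Bool × Bool)) : Equiv.Perm UnitCircle :=
  (L.map (letterPerm a b)).prod

lemma prodL_cons (a b : Equiv.Perm UnitCircle) (l : Bool × Bool) (L : List (Bool × Bool)) :
    prodL a b (l :: L) = letterPerm a b l * prodL a b L := by
  simp [prodL]

section Letters2

variable {a b : Equiv.Perm UnitCircle} (ha : IsRotHalf a) (hb : IsBElt b)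

include ha hb in
lemma letter_apply (l : Bool × Bool) {x : ℝ} (h0 : dlo l < x) (h1 : x < dhi l) :
    letterPerm a b l ((x : ℝ) : UnitCircle) = ((Phi l x : ℝ) : UnitCircle)
      ∧ slo l < Phi l x ∧ Phi l x < shi l := by
  rcases l with ⟨g, s⟩
  cases g <;> cases s
  · exact applyVi ha hb h0 h1
  · exact applyV ha hb h0 h1
  · exact applyUi ha hb h0 h1
  · exact applyU ha hb h0 h1

lemma letter_contract (l : Bool × Bool) {x y : ℝ} (h0 : dlo l < x) (hxy : x ≤ y)
    (h1 : y < dhi l) : Phi l x ≤ Phi l y ∧ Phi l y - Phi l x ≤ (y - x) / 2 := by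
  rcases l with ⟨g, s⟩
  cases g <;> cases s <;>
    simp only [Phi, PhiU, PhiUi, PhiV, PhiVi, dlo, dhi] at * <;>
    split_ifs <;> constructor <;> linarith

lemma shift_into (l' l : Bool × Bool) (hne : NoCancel l' l) :
    ∃ k : ℤ, ∀ t : ℝ, slo l' < t → t < shi l' → dlo l < t + k ∧ t + k < dhi l := by
  rcases l' with ⟨g', s'⟩; rcases l with ⟨g, s⟩
  cases g' <;> cases s' <;> cases g <;> cases s <;>
    simp only [NoCancel] at hne <;>
    simp only [slo, shi, dlo, dhi] <;>
    first
      | (refine ⟨0, fun t h0 h1 => ?_⟩; push_cast; constructor <;> linarith)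
      | (refine ⟨1, fun t h0 h1 => ?_⟩; push_cast; constructor <;> linarith)
      | (refine ⟨-1, fun t h0 h1 => ?_⟩; push_cast; constructor <;> linarith)
      | (exact absurd (hne True.intro) (by simp))

include ha hb in
lemma ping : ∀ (L : List (Bool × Bool)) (l : Bool × Bool),
    List.Chain' NoCancel (L ++ [l]) →
    ∀ x y : ℝ, dlo l < x → x ≤ y → y < dhi l →
    ∃ x' y' : ℝ, prodL a b (L ++ [l]) ((x : ℝ) : UnitCircle) = ((x' : ℝ) : UnitCircle)
      ∧ prodL a b (L ++ [l]) ((y : ℝ) : UnitCircle) = ((y' : ℝ) : UnitCircle)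
      ∧ slo ((L ++ [l]).headI) < x' ∧ x' ≤ y' ∧ y' < shi ((L ++ [l]).headI)
      ∧ y' - x' ≤ (y - x) / 2 ^ (L.length + 1) := by
  intro L
  induction L with
  | nil =>
    intro l _ x y h0 hxy h1
    obtain ⟨hx, hxlo, hxhi⟩ := letter_apply ha hb l h0 (lt_of_le_of_lt hxy h1)
    obtain ⟨hy, hylo, hyhi⟩ := letter_apply ha hb l (lt_of_lt_of_le h0 hxy) h1
    obtain ⟨hmono, hcon⟩ := letter_contract l h0 hxy h1
    refine ⟨Phi l x, Phi l y, ?_, ?_, ?_, ?_, ?_, ?_⟩ <;>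
      simp_all [prodL]
  | cons l₂ L ih =>
    intro l hchain x y h0 hxy h1
    obtain ⟨m, M', hM⟩ := List.exists_cons_of_ne_nil
      (show L ++ [l] ≠ [] by simp)
    rw [List.cons_append, hM, List.Chain', List.isChain_cons_cons] at hchain
    obtain ⟨hR, hch⟩ := hchain
    rw [← hM] at hch
    obtain ⟨x', y', hx', hy', hxlo, hxy', hyhi, hcon⟩ := ih l hch x y h0 hxy h1
    rw [hM] at hxlo hyhi
    simp only [List.headI] at hxlo hyhi
    obtain ⟨k, hk⟩ := shift_into m l₂ (fun h => (hR h.symm).symm)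
    obtain ⟨hkx1, hkx2⟩ := hk x' hxlo (lt_of_le_of_lt hxy' hyhi)
    obtain ⟨hky1, hky2⟩ := hk y' (lt_of_lt_of_le hxlo hxy') hyhi
    obtain ⟨hax, haxlo, haxhi⟩ := letter_apply ha hb l₂ hkx1 hkx2
    obtain ⟨hay, haylo, hayhi⟩ := letter_apply ha hb l₂ hky1 hky2
    obtain ⟨hmono, hcon2⟩ := letter_contract l₂ hkx1 (by linarith) hky2
    refine ⟨Phi l₂ (x' + k), Phi l₂ (y' + k), ?_, ?_, ?_, ?_, ?_, ?_⟩
    · rw [List.cons_append, prodL_cons, Equiv.Perm.mul_apply, hx', ← coe_int_add k x', hax]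
    · rw [List.cons_append, prodL_cons, Equiv.Perm.mul_apply, hy', ← coe_int_add k y', hay]
    · simpa using haxlo
    · exact hmono
    · simpa using hayhi
    · have hlen : (2:ℝ) ^ (List.length (l₂ :: L) + 1) = 2 ^ (L.length + 1) * 2 := by
        rw [List.length_cons, pow_succ]
      rw [hlen, ← div_div]
      linarith

end Letters2

end ThompsonAux
namespace ThompsonAux

lemma no_int_between (k n : ℤ) (h2 : (n : ℝ) < k) (h3 : (k : ℝ) < n + 1) : False := by
  have a1 : n < k := by exact_mod_cast h2
  have a2 : k < n + 1 := by exact_mod_cast h3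
  omega

lemma chain'_no_cancel (L : List (Bool × Bool))
    (h : ∀ (L₁ L₂ : List (Bool × Bool)) (x bb : Bool),
        L ≠ L₁ ++ (x, bb) :: (x, !bb) :: L₂) : List.Chain' NoCancel L := by
  induction L with
  | nil => exact List.isChain_nil
  | cons p t ih =>
    cases t with
    | nil => exact List.isChain_singleton _
    | cons q t' =>
      rw [List.Chain', List.isChain_cons_cons]
      refine ⟨?_, ih (fun L₁ L₂ x bb hh => h (p :: L₁) L₂ x bb (by rw [hh]; rfl))⟩
      intro h1
      by_contra h2
      refine h [] t' p.1 p.2 ?_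
      have hq : q = (p.1, !p.2) := by
        rcases q with ⟨q1, q2⟩; rcases p with ⟨p1, p2⟩
        simp only at h1 h2 ⊢
        cases p2 <;> cases q2 <;> simp_all
      simp [hq]

lemma chain'_toWord (w : FreeGroup Bool) : List.Chain' NoCancel w.toWord :=
  chain'_no_cancel _ (fun L₁ L₂ x bb hh =>
    FreeGroup.reduce.not (L₁ := w.toWord) (L₂ := L₁) (L₃ := L₂) (x := x) (b := bb)
      (by rw [FreeGroup.reduce_toWord, hh]))

section Main1

variable {a b : Equiv.Perm UnitCircle} (ha : IsRotHalf a) (hb : IsBElt b)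

lemma lift_eq_prodL (w : FreeGroup Bool) :
    (FreeGroup.lift (fun x : Bool => if x then a*b*a*b else a*b⁻¹*a*b⁻¹)) w
      = prodL a b w.toWord := by
  conv_lhs => rw [← FreeGroup.mk_toWord (x := w)]
  rw [FreeGroup.lift_mk]
  rfl

include ha hb in
theorem lift_injective :
    Function.Injective
      (FreeGroup.lift (fun x : Bool => if x then a*b*a*b else a*b⁻¹*a*b⁻¹) :
        FreeGroup Bool →* Equiv.Perm UnitCircle) := by
  rw [injective_iff_map_eq_one]
  intro w hw
  by_contra hne
  have hL : w.toWord ≠ [] := by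
    rw [ne_eq, FreeGroup.toWord_eq_nil_iff]; exact hne
  rcases (List.eq_nil_or_concat w.toWord).resolve_left hL with ⟨L, l, hLl⟩
  rw [List.concat_eq_append] at hLl
  have hchain : List.Chain' NoCancel (L ++ [l]) := by
    rw [← hLl]; exact chain'_toWord w
  set x₀ : ℝ := if l.1 then 1 else 1/2 with hx₀
  have hdlo : dlo l < x₀ ∧ x₀ < dhi l := by
    rcases l with ⟨g, s⟩; cases g <;> cases s <;> simp [dlo, dhi, hx₀] <;> norm_num
  obtain ⟨x', y', hx', _, hxlo, hxy', hyhi, _⟩ :=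
    ping ha hb L l hchain x₀ x₀ hdlo.1 le_rfl hdlo.2
  have h1 : prodL a b (L ++ [l]) ((x₀ : ℝ) : UnitCircle) = ((x₀ : ℝ) : UnitCircle) := by
    rw [← hLl, ← lift_eq_prodL, hw]; rfl
  have h2 : ((x' : ℝ) : UnitCircle) = ((x₀ : ℝ) : UnitCircle) := by rw [← hx', h1]
  obtain ⟨k, hk⟩ := coe_eq_coe_iff.1 h2
  have hxhi : x' < shi ((L ++ [l]).headI) := lt_of_le_of_lt hxy' hyhi
  set m := (L ++ [l]).headI with hm
  rcases m with ⟨mg, ms⟩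
  have hslo := hxlo
  have hshi := hxhi
  rw [hk] at hslo hshi
  by_cases hg : l.1 = true
  all_goals simp only [hx₀, hg, if_true, if_false, Bool.false_eq_true] at hslo hshi
  all_goals (cases mg <;> cases ms <;> simp only [slo, shi] at hslo hshi <;>
    first
      | exact no_int_between k 0 (by push_cast; linarith) (by push_cast; linarith)
      | exact no_int_between k (-1) (by push_cast; linarith) (by push_cast; linarith))

end Main1

end ThompsonAux
namespace ThompsonAux

open Set

/-- A function locally constant on an open interval is constant there. -/
lemma loc_const_Ioo {g : ℝ → ℝ} {p q : ℝ}
    (h : ∀ x ∈ Set.Ioo p q, ∃ ε, 0 < ε ∧ ∀ y, |y - x| < ε → g y = g x)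
    {x y : ℝ} (hx : x ∈ Set.Ioo p q) (hy : y ∈ Set.Ioo p q) : g x = g y := by
  by_contra hne
  set U : Set ℝ := {t | t ∈ Set.Ioo p q ∧ g t = g x} with hU
  set V : Set ℝ := {t | t ∈ Set.Ioo p q ∧ g t ≠ g x} with hV
  have hUopen : IsOpen U := by
    rw [Metric.isOpen_iff]
    rintro t ⟨htI, htg⟩
    obtain ⟨ε, hε, hloc⟩ := h t htI
    refine ⟨min ε (min (t - p) (q - t)),
      lt_min hε (lt_min (by linarith [htI.1]) (by linarith [htI.2])), ?_⟩
    intro z hz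
    rw [Metric.mem_ball, Real.dist_eq] at hz
    have h1 : |z - t| < ε := lt_of_lt_of_le hz (min_le_left _ _)
    have h2 : |z - t| < t - p := lt_of_lt_of_le hz ((min_le_right _ _).trans (min_le_left _ _))
    have h3 : |z - t| < q - t := lt_of_lt_of_le hz ((min_le_right _ _).trans (min_le_right _ _))
    rw [abs_lt] at h2 h3
    exact ⟨⟨by linarith, by linarith⟩, by rw [hloc z h1, htg]⟩
  have hVopen : IsOpen V := by
    rw [Metric.isOpen_iff]
    rintro t ⟨htI, htg⟩
    obtain ⟨ε, hε, hloc⟩ := h t htI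
    refine ⟨min ε (min (t - p) (q - t)),
      lt_min hε (lt_min (by linarith [htI.1]) (by linarith [htI.2])), ?_⟩
    intro z hz
    rw [Metric.mem_ball, Real.dist_eq] at hz
    have h1 : |z - t| < ε := lt_of_lt_of_le hz (min_le_left _ _)
    have h2 : |z - t| < t - p := lt_of_lt_of_le hz ((min_le_right _ _).trans (min_le_left _ _))
    have h3 : |z - t| < q - t := lt_of_lt_of_le hz ((min_le_right _ _).trans (min_le_right _ _))
    rw [abs_lt] at h2 h3
    exact ⟨⟨by linarith, by linarith⟩, by rw [hloc z h1]; exact htg⟩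
  have hcover : Set.Ioo p q ⊆ U ∪ V := by
    intro t ht
    by_cases hgt : g t = g x
    · exact Or.inl ⟨ht, hgt⟩
    · exact Or.inr ⟨ht, hgt⟩
  have hUne : (Set.Ioo p q ∩ U).Nonempty := ⟨x, hx, hx, rfl⟩
  have hVne : (Set.Ioo p q ∩ V).Nonempty := ⟨y, hy, hy, fun hc => hne hc.symm⟩
  obtain ⟨t, _, ⟨_, ht1⟩, ⟨_, ht2⟩⟩ :=
    isPreconnected_Ioo (a := p) (b := q) U V hUopen hVopen hcover hUne hVne
  exact ht2 ht1

/-- Continuous + locally affine on the interior implies affine on the closed interval. -/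
lemma affine_of_loc {F : ℝ → ℝ} {p q : ℝ} (hpq : p < q) (hcont : Continuous F)
    (hloc : ∀ x ∈ Set.Ioo p q, ∃ s ε, 0 < ε ∧ ∀ y, |y - x| < ε → F y = F x + s * (y - x)) :
    ∃ s : ℝ, ∀ x ∈ Set.Icc p q, ∀ y ∈ Set.Icc p q, F y - F x = s * (y - x) := by
  have x₀mem : (p + q) / 2 ∈ Set.Ioo p q := ⟨by linarith, by linarith⟩
  -- each point of Ioo has a well-defined slope, equal to deriv F
  have hderiv : ∀ x ∈ Set.Ioo p q, ∀ s ε, 0 < ε →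
      (∀ y, |y - x| < ε → F y = F x + s * (y - x)) → deriv F x = s := by
    intro x _ s ε hε haff
    have hd : HasDerivAt F s x := by
      have : HasDerivAt (fun y => F x + s * (y - x)) s x := by
        simpa using ((hasDerivAt_id x).sub_const x).const_mul s |>.const_add (F x)
      apply this.congr_of_eventuallyEq
      filter_upwards [Metric.ball_mem_nhds x hε] with y hy
      rw [Real.ball_eq_Ioo] at hy
      exact haff y (by rw [abs_lt]; constructor <;> [linarith [hy.1]; linarith [hy.2]])
    exact hd.deriv
  -- deriv F is locally constant on Ioo
  have hlc : ∀ x ∈ Set.Ioo p q, ∃ ε, 0 < ε ∧ ∀ y, |y - x| < ε → deriv F y = deriv F x := by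
    intro x hxI
    obtain ⟨s, ε, hε, haff⟩ := hloc x hxI
    have hx' : deriv F x = s := hderiv x hxI s ε hε haff
    refine ⟨min (ε/2) (min (x - p) (q - x)),
      lt_min (by linarith) (lt_min (by linarith [hxI.1]) (by linarith [hxI.2])), ?_⟩
    intro y hy
    have h1 : |y - x| < ε/2 := lt_of_lt_of_le hy (min_le_left _ _)
    have h2 : |y - x| < x - p := lt_of_lt_of_le hy ((min_le_right _ _).trans (min_le_left _ _))
    have h3 : |y - x| < q - x := lt_of_lt_of_le hy ((min_le_right _ _).trans (min_le_right _ _))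
    have habs := abs_lt.1 h2
    have habs3 := abs_lt.1 h3
    have hyI : y ∈ Set.Ioo p q := ⟨by linarith, by linarith⟩
    have haffy : ∀ z, |z - y| < ε/2 → F z = F y + s * (z - y) := by
      intro z hz
      have hzx : |z - x| < ε := by
        have := abs_sub_abs_le_abs_sub (z - x) (y - x)
        have h4 : |z - x| ≤ |z - y| + |y - x| := by
          calc |z - x| = |(z - y) + (y - x)| := by ring_nf
            _ ≤ |z - y| + |y - x| := abs_add_le _ _
        linarith
      have e1 := haff z hzx
      have e2 := haff y (show |y - x| < ε by linarith)
      rw [e1, e2]; ring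
    rw [hderiv y hyI s (ε/2) (by linarith) haffy, hx']
  have hconst : ∀ x ∈ Set.Ioo p q, deriv F x = deriv F ((p+q)/2) :=
    fun x hx => loc_const_Ioo hlc hx x₀mem
  set s₀ := deriv F ((p+q)/2) with hs₀
  -- H := F - s₀ * id is locally constant on Ioo
  have hHlc : ∀ x ∈ Set.Ioo p q, ∃ ε, 0 < ε ∧ ∀ y, |y - x| < ε →
      F y - s₀ * y = F x - s₀ * x := by
    intro x hxI
    obtain ⟨s, ε, hε, haff⟩ := hloc x hxI
    have : s = s₀ := by rw [← hderiv x hxI s ε hε haff, hconst x hxI]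
    subst this
    exact ⟨ε, hε, fun y hy => by rw [haff y hy]; ring⟩
  have hHconst : ∀ x ∈ Set.Ioo p q,
      F x - s₀ * x = F ((p+q)/2) - s₀ * ((p+q)/2) :=
    fun x hx => loc_const_Ioo hHlc hx x₀mem
  -- extend to Icc by continuity
  have hclosed : IsClosed {t : ℝ | F t - s₀ * t = F ((p+q)/2) - s₀ * ((p+q)/2)} :=
    isClosed_eq (hcont.sub (continuous_const.mul continuous_id)) continuous_const
  have hIcc : ∀ t ∈ Set.Icc p q, F t - s₀ * t = F ((p+q)/2) - s₀ * ((p+q)/2) := by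
    intro t ht
    have hsub : Set.Icc p q ⊆ {t : ℝ | F t - s₀ * t = F ((p+q)/2) - s₀ * ((p+q)/2)} := by
      rw [← closure_Ioo hpq.ne]
      exact closure_minimal (fun z hz => hHconst z hz) hclosed
    exact hsub ht
  refine ⟨s₀, fun x hx y hy => ?_⟩
  have e1 := hIcc x hx
  have e2 := hIcc y hy
  have : F y - s₀ * y = F x - s₀ * x := by rw [e1, e2]
  linarith [this]

end ThompsonAux
namespace ThompsonAux

/-- Two-point Lipschitz bound on an interval for a continuous function which is locally
affine outside a finite set. -/
lemma lip_of_breaks (E : Finset ℝ) : ∀ {F : ℝ → ℝ}, Continuous F → ∀ {p q : ℝ}, p < q →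
    (∀ x ∈ Set.Ioo p q, x ∉ E → ∃ s ε, 0 < ε ∧ ∀ y, |y - x| < ε → F y = F x + s * (y - x)) →
    ∃ Λ : ℝ, 0 ≤ Λ ∧ ∀ x ∈ Set.Icc p q, ∀ y ∈ Set.Icc p q, |F y - F x| ≤ Λ * |y - x| := by
  induction E using Finset.strongInduction with
  | _ E ih =>
    intro F hF p q hpq hloc
    by_cases hE : ∃ e ∈ E, e ∈ Set.Ioo p q
    · obtain ⟨e, heE, he⟩ := hE
      have h1 := ih (E.erase e) (Finset.erase_ssubset heE) hF he.1
        (fun x hx hxE => hloc x ⟨hx.1, hx.2.trans he.2⟩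
          (fun hxE' => hxE (Finset.mem_erase.2 ⟨ne_of_lt hx.2, hxE'⟩)))
      have h2 := ih (E.erase e) (Finset.erase_ssubset heE) hF he.2
        (fun x hx hxE => hloc x ⟨he.1.trans hx.1, hx.2⟩
          (fun hxE' => hxE (Finset.mem_erase.2 ⟨ne_of_gt hx.1, hxE'⟩)))
      obtain ⟨Λ₁, hΛ₁, hb1⟩ := h1
      obtain ⟨Λ₂, hΛ₂, hb2⟩ := h2
      refine ⟨max Λ₁ Λ₂, le_trans hΛ₁ (le_max_left _ _), ?_⟩
      have key : ∀ x ∈ Set.Icc p q, ∀ y ∈ Set.Icc p q, x ≤ y →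
          |F y - F x| ≤ max Λ₁ Λ₂ * |y - x| := by
        intro x hx y hy hxy
        rcases le_total y e with hye | hey
        · have := hb1 x ⟨hx.1, le_trans hxy hye⟩ y ⟨hy.1, hye⟩
          calc |F y - F x| ≤ Λ₁ * |y - x| := this
            _ ≤ max Λ₁ Λ₂ * |y - x| :=
              mul_le_mul_of_nonneg_right (le_max_left _ _) (abs_nonneg _)
        · rcases le_total e x with hex | hxe
          · have := hb2 x ⟨hex, hx.2⟩ y ⟨le_trans hex hxy, hy.2⟩
            calc |F y - F x| ≤ Λ₂ * |y - x| := this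
              _ ≤ max Λ₁ Λ₂ * |y - x| :=
                mul_le_mul_of_nonneg_right (le_max_right _ _) (abs_nonneg _)
          · have hbx := hb1 x ⟨hx.1, hxe⟩ e ⟨le_of_lt he.1, le_rfl⟩
            have hby := hb2 e ⟨le_rfl, le_of_lt he.2⟩ y ⟨hey, hy.2⟩
            have htri : |F y - F x| ≤ |F y - F e| + |F e - F x| := abs_sub_le _ _ _
            have hax : |e - x| = e - x := abs_of_nonneg (by linarith)
            have hay : |y - e| = y - e := abs_of_nonneg (by linarith)
            have haxy : |y - x| = y - x := abs_of_nonneg (by linarith)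
            rw [hax] at hbx; rw [hay] at hby; rw [haxy]
            have hm1 : Λ₁ * (e - x) ≤ max Λ₁ Λ₂ * (e - x) :=
              mul_le_mul_of_nonneg_right (le_max_left _ _) (by linarith)
            have hm2 : Λ₂ * (y - e) ≤ max Λ₁ Λ₂ * (y - e) :=
              mul_le_mul_of_nonneg_right (le_max_right _ _) (by linarith)
            nlinarith [htri, hbx, hby]
      intro x hx y hy
      rcases le_total x y with h | h
      · exact key x hx y hy h
      · have := key y hy x hx h
        rwa [abs_sub_comm (F x) (F y), abs_sub_comm x y] at this
    · push_neg at hE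
      obtain ⟨s, hs⟩ := affine_of_loc hpq hF
        (fun x hx => hloc x hx (fun hxE => (hE x hxE) hx))
      refine ⟨|s|, abs_nonneg s, fun x hx y hy => ?_⟩
      rw [hs x hx y hy, abs_mul]

end ThompsonAux
namespace ThompsonAux

def Lipc (Λ : ℝ) (f : Equiv.Perm UnitCircle) : Prop :=
  ∀ x y : UnitCircle, ‖f x - f y‖ ≤ Λ * ‖x - y‖

lemma lipc_mono {Λ Λ' : ℝ} {f : Equiv.Perm UnitCircle} (h : Λ ≤ Λ') (hf : Lipc Λ f) :
    Lipc Λ' f := fun x y =>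
  le_trans (hf x y) (mul_le_mul_of_nonneg_right h (norm_nonneg _))

lemma coe_sub_circ (u v : ℝ) :
    ((u - v : ℝ) : UnitCircle) = ((u : ℝ) : UnitCircle) - ((v : ℝ) : UnitCircle) := rfl

lemma per_int {F : ℝ → ℝ} (hper : ∀ x : ℝ, F (x + 1) = F x + 1) :
    ∀ (k : ℤ) (x : ℝ), F (x + k) = F x + k := by
  have hstep : ∀ x : ℝ, F (x - 1) = F x - 1 := by
    intro x; have := hper (x - 1); rw [show x - 1 + 1 = x by ring] at this; linarith
  intro k
  induction k using Int.induction_on with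
  | zero => simp
  | succ n ih =>
    intro x
    push_cast
    push_cast at ih
    calc F (x + ((n : ℝ) + 1)) = F ((x + n) + 1) := by rw [show x + ((n:ℝ)+1) = (x+n)+1 by ring]
      _ = F (x + n) + 1 := hper _
      _ = F x + n + 1 := by rw [ih x]
      _ = F x + ((n : ℝ) + 1) := by ring
  | pred n ih =>
    intro x
    push_cast
    push_cast at ih
    calc F (x + (-(n : ℝ) - 1)) = F ((x + -(n:ℝ)) - 1) := by
          rw [show x + (-(n:ℝ)-1) = (x + -(n:ℝ)) - 1 by ring]
      _ = F (x + -(n:ℝ)) - 1 := hstep _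
      _ = F x + -(n:ℝ) - 1 := by rw [ih x]
      _ = F x + (-(n : ℝ) - 1) := by ring

/-- Circle Lipschitz bound from a real two-point Lipschitz bound on the window `[-1, 2]`. -/
lemma core_lip {f : Equiv.Perm UnitCircle} {F : ℝ → ℝ}
    (hcompat : ∀ x : ℝ, f ((x : ℝ) : UnitCircle) = ((F x : ℝ) : UnitCircle))
    {Λ : ℝ} (hΛ : 0 ≤ Λ)
    (hlip : ∀ x ∈ Set.Icc (-1 : ℝ) 2, ∀ y ∈ Set.Icc (-1 : ℝ) 2, |F y - F x| ≤ Λ * |y - x|) :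
    Lipc (Λ + 1) f := by
  intro ξ η
  obtain ⟨x, rfl⟩ := QuotientAddGroup.mk_surjective ξ
  obtain ⟨y, rfl⟩ := QuotientAddGroup.mk_surjective η
  set x' := Int.fract x with hx'def
  have hxeq : x = x' + (⌊x⌋ : ℤ) := by rw [hx'def, Int.fract]; push_cast; ring
  have hxx' : ((x : ℝ) : UnitCircle) = ((x' : ℝ) : UnitCircle) := by
    conv_lhs => rw [hxeq]
    exact coe_int_add ⌊x⌋ x'
  have hx'mem : x' ∈ Set.Ico (0:ℝ) 1 := ⟨Int.fract_nonneg x, Int.fract_lt_one x⟩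
  set r := round (x' - y) with hrdef
  set y' := y + (r : ℝ) with hy'def
  have hyy' : ((y : ℝ) : UnitCircle) = ((y' : ℝ) : UnitCircle) := (coe_int_add r y).symm
  have hdiff : ((x : ℝ) : UnitCircle) - ((y : ℝ) : UnitCircle)
      = ((x' - y' : ℝ) : UnitCircle) := by rw [hxx', hyy', coe_sub_circ]
  have hround0 : round (x' - y') = 0 := by
    rw [hy'def, show x' - (y + (r:ℝ)) = (x' - y) - (r:ℝ) by ring, round_sub_intCast, hrdef]
    ring
  have hnorm : ‖((x' - y' : ℝ) : UnitCircle)‖ = |x' - y'| := by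
    rw [AddCircle.norm_eq]
    simp only [inv_one, one_mul, mul_one]
    rw [hround0]
    norm_num
  have hhalf : |x' - y'| ≤ 1/2 := by
    rw [← hnorm]
    have := AddCircle.norm_le_half_period (p := (1:ℝ)) (x := ((x' - y' : ℝ) : UnitCircle))
      one_ne_zero
    simpa using this
  have habs := abs_le.1 hhalf
  have hx'I : x' ∈ Set.Icc (-1:ℝ) 2 := ⟨by linarith [hx'mem.1], by linarith [hx'mem.2]⟩
  have hy'I : y' ∈ Set.Icc (-1:ℝ) 2 :=
    ⟨by linarith [hx'mem.1, habs.2], by linarith [hx'mem.2, habs.1]⟩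
  have happ : ‖f ((x : ℝ) : UnitCircle) - f ((y : ℝ) : UnitCircle)‖
      = ‖((F x' - F y' : ℝ) : UnitCircle)‖ := by
    rw [hxx', hyy', hcompat x', hcompat y', coe_sub_circ]
  calc ‖f ((x : ℝ) : UnitCircle) - f ((y : ℝ) : UnitCircle)‖
      = ‖((F x' - F y' : ℝ) : UnitCircle)‖ := happ
    _ ≤ |F x' - F y'| := norm_coe_le _
    _ = |F y' - F x'| := abs_sub_comm _ _
    _ ≤ Λ * |y' - x'| := hlip x' hx'I y' hy'I
    _ = Λ * |x' - y'| := by rw [abs_sub_comm]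
    _ = Λ * ‖((x : ℝ) : UnitCircle) - ((y : ℝ) : UnitCircle)‖ := by rw [hdiff, hnorm]
    _ ≤ (Λ + 1) * ‖((x : ℝ) : UnitCircle) - ((y : ℝ) : UnitCircle)‖ := by
        have := norm_nonneg (((x : ℝ) : UnitCircle) - ((y : ℝ) : UnitCircle))
        nlinarith

end ThompsonAux
namespace ThompsonAux

lemma thompson_lip {f : Equiv.Perm UnitCircle} (hf : IsThompsonElt f) :
    ∃ Λ : ℝ, 2 ≤ Λ ∧ Lipc Λ f ∧ Lipc Λ f⁻¹ := by
  obtain ⟨F, ⟨hmono, hper, B, hB01, _, hlocB⟩, hcompat⟩ := hf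
  have hperk := per_int hper
  have hsurj : Function.Surjective F := by
    intro y
    obtain ⟨ξ, hξ⟩ := f.surjective ((y : ℝ) : UnitCircle)
    obtain ⟨x, rfl⟩ := QuotientAddGroup.mk_surjective ξ
    rw [hcompat x] at hξ
    obtain ⟨k, hk⟩ := coe_eq_coe_iff.1 hξ
    refine ⟨x + (-k : ℤ), ?_⟩
    rw [hperk]
    push_cast
    linarith
  set e := StrictMono.orderIsoOfSurjective F hmono hsurj with he
  have hcont : Continuous F := by
    have h1 := OrderIso.continuous e
    rwa [he, StrictMono.coe_orderIsoOfSurjective] at h1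
  -- local affineness of F on the window (-1, 2)
  set Ef : Finset ℝ := B ∪ B.image (· + 1) ∪ B.image (· - 1) with hEf
  have hlocF : ∀ x ∈ Set.Ioo (-1:ℝ) 2, x ∉ Ef →
      ∃ s ε, 0 < ε ∧ ∀ y, |y - x| < ε → F y = F x + s * (y - x) := by
    intro x hxI hxE
    set t := Int.fract x with htdef
    set k := ⌊x⌋ with hkdef
    have hxtk : x = t + (k : ℝ) := by rw [htdef, Int.fract]; push_cast; ring
    have hkrange : k = -1 ∨ k = 0 ∨ k = 1 := by
      have h1 : (-1 : ℤ) ≤ k := by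
        rw [hkdef]
        have : (-1 : ℝ) ≤ x := le_of_lt hxI.1
        exact_mod_cast Int.le_floor.2 (by exact_mod_cast this)
      have h2 : k ≤ 1 := by
        have h3 : (k : ℝ) ≤ x := Int.floor_le x
        have : (k : ℝ) < 2 := lt_of_le_of_lt h3 hxI.2
        have : k < 2 := by exact_mod_cast this
        omega
      omega
    have htB : t ∉ B := by
      intro htB
      apply hxE
      rw [hEf]
      rcases hkrange with hk | hk | hk
      · simp only [Finset.mem_union, Finset.mem_image]
        exact Or.inr ⟨t, htB, by rw [hxtk, hk]; push_cast; ring⟩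
      · simp only [Finset.mem_union, Finset.mem_image]
        exact Or.inl (Or.inl (by rw [hxtk, hk]; push_cast; simpa using htB))
      · simp only [Finset.mem_union, Finset.mem_image]
        exact Or.inl (Or.inr ⟨t, htB, by rw [hxtk, hk]; push_cast; ring⟩)
    obtain ⟨m, ε, hε, haff⟩ := hlocB t ⟨Int.fract_nonneg x, Int.fract_lt_one x⟩ htB
    refine ⟨(2:ℝ)^m, ε, hε, ?_⟩
    intro y hy
    have h1 : F y = F (y - k) + k := by
      have := hperk k (y - (k:ℝ))
      rw [show y - (k:ℝ) + (k:ℝ) = y by ring] at this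
      rw [this]
    have h2 : |(y - (k:ℝ)) - t| < ε := by
      rw [show (y - (k:ℝ)) - t = y - x by rw [hxtk]; ring]
      exact hy
    have h3 := haff (y - (k:ℝ)) h2
    have h4 : F x = F t + k := by
      rw [hxtk]
      exact hperk k t
    rw [h1, h3, h4, hxtk]
    ring
  obtain ⟨Λ₁, hΛ₁0, hΛ₁⟩ := lip_of_breaks Ef hcont (by norm_num : (-1:ℝ) < 2) hlocF
  have hflip : Lipc (Λ₁ + 1) f := core_lip hcompat hΛ₁0 hΛ₁
  -- the inverse
  set G : ℝ → ℝ := fun y => e.symm y with hG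
  have hFG : ∀ y, F (G y) = y := fun y =>
    StrictMono.orderIsoOfSurjective_self_symm_apply F hmono hsurj y
  have hGcont : Continuous G := OrderIso.continuous e.symm
  have hGmono : StrictMono G := e.symm.strictMono
  have hcompat' : ∀ y : ℝ, f⁻¹ ((y : ℝ) : UnitCircle) = ((G y : ℝ) : UnitCircle) := by
    intro y
    have h1 : f ((G y : ℝ) : UnitCircle) = ((y : ℝ) : UnitCircle) := by
      rw [hcompat, hFG]
    rw [← h1, Equiv.Perm.inv_apply_self]
  set K : Finset ℤ := Finset.Icc (⌊G (-1)⌋ - 1) (⌊G 2⌋ + 1) with hK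
  set Eg : Finset ℝ := (B ×ˢ K).image (fun pr => F (pr.1 + pr.2)) with hEg
  have hlocG : ∀ y ∈ Set.Ioo (-1:ℝ) 2, y ∉ Eg →
      ∃ s ε, 0 < ε ∧ ∀ w, |w - y| < ε → G w = G y + s * (w - y) := by
    intro y hyI hyE
    set x := G y with hxdef
    set t := Int.fract x with htdef
    set k := ⌊x⌋ with hkdef
    have hxtk : x = t + (k : ℝ) := by rw [htdef, Int.fract]; push_cast; ring
    have hkK : k ∈ K := by
      rw [hK, Finset.mem_Icc]
      constructor
      · have : G (-1) ≤ x := hGmono.monotone (le_of_lt hyI.1)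
        have := Int.floor_mono this
        omega
      · have : x ≤ G 2 := hGmono.monotone (le_of_lt hyI.2)
        have := Int.floor_mono this
        omega
    have htB : t ∉ B := by
      intro htB
      apply hyE
      rw [hEg]
      rw [Finset.mem_image]
      refine ⟨(t, k), Finset.mem_product.2 ⟨htB, hkK⟩, ?_⟩
      show F (t + (k:ℝ)) = y
      rw [← hxtk, hxdef, hFG]
    obtain ⟨m, ε, hε, haff⟩ := hlocB t ⟨Int.fract_nonneg x, Int.fract_lt_one x⟩ htB
    set s : ℝ := (2:ℝ)^m with hs
    have hspos : 0 < s := by rw [hs]; positivity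
    -- F is affine with slope s in a ball around x
    have haffx : ∀ z, |z - x| < ε → F z = F x + s * (z - x) := by
      intro z hz
      have h1 : F z = F (z - k) + k := by
        have := hperk k (z - (k:ℝ))
        rw [show z - (k:ℝ) + (k:ℝ) = z by ring] at this
        rw [this]
      have h2 : |(z - (k:ℝ)) - t| < ε := by
        rw [show (z - (k:ℝ)) - t = z - x by rw [hxtk]; ring]
        exact hz
      have h3 := haff (z - (k:ℝ)) h2
      have h4 : F x = F t + k := by rw [hxtk]; exact hperk k t
      rw [h1, h3, h4, hxtk]
      ring
    refine ⟨s⁻¹, s * ε, by positivity, ?_⟩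
    intro w hw
    set z := x + (w - y) / s with hz
    have hzx : |z - x| < ε := by
      rw [hz, show x + (w - y)/s - x = (w - y)/s by ring, abs_div, abs_of_pos hspos,
        div_lt_iff₀ hspos]
      linarith [hw, mul_comm ε s]
    have hFz : F z = w := by
      rw [haffx z hzx, hz, show x + (w-y)/s - x = (w-y)/s by ring,
        mul_div_cancel₀ _ (ne_of_gt hspos)]
      have hFx : F x = y := by rw [hxdef, hFG]
      rw [hFx]
      ring
    have hGw : G w = z := by
      rw [← hFz, hG]
      exact StrictMono.orderIsoOfSurjective_symm_apply_self F hmono hsurj z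
    rw [hGw, hz, hxdef]
    field_simp
  obtain ⟨Λ₂, hΛ₂0, hΛ₂⟩ := lip_of_breaks Eg hGcont (by norm_num : (-1:ℝ) < 2) hlocG
  have hfinvlip : Lipc (Λ₂ + 1) f⁻¹ := core_lip hcompat' hΛ₂0 hΛ₂
  refine ⟨max (max (Λ₁ + 1) (Λ₂ + 1)) 2, le_max_right _ _, ?_, ?_⟩
  · exact lipc_mono (le_trans (le_max_left _ _) (le_max_left _ _)) hflip
  · exact lipc_mono (le_trans (le_max_right _ _) (le_max_left _ _)) hfinvlip

end ThompsonAux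
namespace ThompsonAux

lemma lipc_one : Lipc 2 (1 : Equiv.Perm UnitCircle) := by
  intro x y
  simp only [Equiv.Perm.coe_one, id_eq]
  nlinarith [norm_nonneg (x - y)]

lemma lipc_mul {Λ₁ Λ₂ : ℝ} {g h : Equiv.Perm UnitCircle} (h1 : 0 ≤ Λ₁)
    (hg : Lipc Λ₁ g) (hh : Lipc Λ₂ h) : Lipc (Λ₁ * Λ₂) (g * h) := by
  intro x y
  calc ‖(g * h) x - (g * h) y‖ = ‖g (h x) - g (h y)‖ := by
        rw [Equiv.Perm.mul_apply, Equiv.Perm.mul_apply]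
    _ ≤ Λ₁ * ‖h x - h y‖ := hg _ _
    _ ≤ Λ₁ * (Λ₂ * ‖x - y‖) := mul_le_mul_of_nonneg_left (hh _ _) h1
    _ = Λ₁ * Λ₂ * ‖x - y‖ := by ring

lemma T_lip {z : Equiv.Perm UnitCircle} (hz : z ∈ ThompsonT) :
    ∃ Λ : ℝ, 2 ≤ Λ ∧ Lipc Λ z ∧ Lipc Λ z⁻¹ := by
  refine Subgroup.closure_induction (fun g hg => thompson_lip hg)
    ⟨2, le_rfl, lipc_one, by rw [inv_one]; exact lipc_one⟩
    (fun g h _ _ ihg ihh => ?_) (fun g _ ih => ?_) hz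
  · obtain ⟨Λ₁, hΛ₁, hg1, hg2⟩ := ihg
    obtain ⟨Λ₂, hΛ₂, hh1, hh2⟩ := ihh
    refine ⟨Λ₁ * Λ₂, by nlinarith, lipc_mul (by linarith) hg1 hh1, ?_⟩
    rw [mul_inv_rev]
    have := lipc_mul (by linarith : (0:ℝ) ≤ Λ₂) hh2 hg2
    exact lipc_mono (by nlinarith) this
  · obtain ⟨Λ, hΛ, h1, h2⟩ := ih
    exact ⟨Λ, hΛ, h2, by rw [inv_inv]; exact h1⟩

lemma a_thompson {a : Equiv.Perm UnitCircle} (ha : IsRotHalf a) : IsThompsonElt a := by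
  refine ⟨fun x => x + 1/2, ⟨strictMono_id.add_const _, fun x => by ring, ∅, ?_, ?_, ?_⟩, ha⟩
  · simp
  · simp
  · intro x _ _
    refine ⟨0, 1, one_pos, fun y _ => ?_⟩
    rw [zpow_zero]
    ring

def bCore (t : ℝ) : ℝ := if t ≤ 1/2 then t/2 + 3/4 else if t ≤ 3/4 then 2*t else t + 3/4

def bLift (x : ℝ) : ℝ := ⌊x⌋ + bCore (Int.fract x)

lemma bCore_range {t : ℝ} (h0 : 0 ≤ t) (h1 : t < 1) : 3/4 ≤ bCore t ∧ bCore t < 7/4 := by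
  rw [bCore]; split_ifs <;> constructor <;> linarith

lemma bCore_mono {t u : ℝ} (h0 : 0 ≤ t) (htu : t < u) (h1 : u < 1) : bCore t < bCore u := by
  rw [bCore, bCore]; split_ifs <;> linarith

lemma bLift_eq_of_Ico {y : ℝ} (h0 : 0 ≤ y) (h1 : y < 1) : bLift y = bCore y := by
  rw [bLift, Int.floor_eq_zero_iff.2 ⟨h0, h1⟩, Int.fract_eq_self.2 ⟨h0, h1⟩]
  push_cast; ring

lemma bLift_strictMono : StrictMono bLift := by
  intro x y hxy
  have hfl : ⌊x⌋ ≤ ⌊y⌋ := Int.floor_mono (le_of_lt hxy)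
  rcases eq_or_lt_of_le hfl with heq | hlt
  · have hfr : Int.fract x < Int.fract y := by
      rw [Int.fract, Int.fract, heq]; linarith
    have := bCore_mono (Int.fract_nonneg x) hfr (Int.fract_lt_one y)
    rw [bLift, bLift, heq]
    linarith
  · have h1 := (bCore_range (Int.fract_nonneg x) (Int.fract_lt_one x)).2
    have h2 := (bCore_range (Int.fract_nonneg y) (Int.fract_lt_one y)).1
    rw [bLift, bLift]
    have : (⌊x⌋ : ℝ) + 1 ≤ (⌊y⌋ : ℝ) := by exact_mod_cast hlt
    linarith

lemma b_thompson {b : Equiv.Perm UnitCircle} (hb : IsBElt b) : IsThompsonElt b := by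
  refine ⟨bLift, ⟨bLift_strictMono, ?_, {0, 1/2, 3/4}, ?_, ?_, ?_⟩, ?_⟩
  · intro x
    rw [bLift, bLift, Int.floor_add_one, Int.fract_add_one]
    push_cast; ring
  · intro x hx
    simp only [Finset.coe_insert, Set.mem_insert_iff, Finset.coe_singleton,
      Set.mem_singleton_iff] at hx
    rcases hx with rfl | rfl | rfl <;> constructor <;> norm_num
  · intro x hx
    simp only [Finset.mem_insert, Finset.mem_singleton] at hx
    rcases hx with rfl | rfl | rfl
    · refine ⟨⟨0, 0, by norm_num⟩, ⟨3, 2, ?_⟩⟩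
      rw [bLift_eq_of_Ico (by norm_num) (by norm_num), bCore]
      norm_num
    · refine ⟨⟨1, 1, by norm_num⟩, ⟨1, 0, ?_⟩⟩
      rw [bLift_eq_of_Ico (by norm_num) (by norm_num), bCore]
      norm_num
    · refine ⟨⟨3, 2, by norm_num⟩, ⟨3, 1, ?_⟩⟩
      rw [bLift_eq_of_Ico (by norm_num) (by norm_num), bCore]
      norm_num
  · intro x hx hxB
    simp only [Finset.mem_insert, Finset.mem_singleton] at hxB
    push_neg at hxB
    obtain ⟨hx0, hx1⟩ := hx
    obtain ⟨hne0, hne12, hne34⟩ := hxB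
    have hx0' : 0 < x := lt_of_le_of_ne hx0 (Ne.symm hne0)
    rcases lt_trichotomy x (1/2) with h | h | h
    · refine ⟨-1, min x (1/2 - x), by simp [hx0', h]; linarith, fun y hy => ?_⟩
      have h1 : |y - x| < x := lt_of_lt_of_le hy (min_le_left _ _)
      have h2 : |y - x| < 1/2 - x := lt_of_lt_of_le hy (min_le_right _ _)
      rw [abs_lt] at h1 h2
      rw [bLift_eq_of_Ico (by linarith) (by linarith), bLift_eq_of_Ico (by linarith) (by linarith),
        bCore, bCore, if_pos (by linarith : y ≤ 1/2), if_pos (by linarith : x ≤ 1/2)]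
      rw [zpow_neg_one]
      norm_num
      ring
    · exact absurd h hne12
    · rcases lt_trichotomy x (3/4) with h3 | h3 | h3
      · refine ⟨1, min (x - 1/2) (3/4 - x), by simp; constructor <;> linarith, fun y hy => ?_⟩
        have h1 : |y - x| < x - 1/2 := lt_of_lt_of_le hy (min_le_left _ _)
        have h2 : |y - x| < 3/4 - x := lt_of_lt_of_le hy (min_le_right _ _)
        rw [abs_lt] at h1 h2
        rw [bLift_eq_of_Ico (by linarith) (by linarith),
          bLift_eq_of_Ico (by linarith) (by linarith), bCore, bCore,
          if_neg (by linarith : ¬ y ≤ 1/2), if_neg (by linarith : ¬ x ≤ 1/2),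
          if_pos (by linarith : y ≤ 3/4), if_pos (by linarith : x ≤ 3/4)]
        rw [zpow_one]
        ring
      · exact absurd h3 hne34
      · refine ⟨0, min (x - 3/4) (1 - x), by simp; constructor <;> linarith, fun y hy => ?_⟩
        have h1 : |y - x| < x - 3/4 := lt_of_lt_of_le hy (min_le_left _ _)
        have h2 : |y - x| < 1 - x := lt_of_lt_of_le hy (min_le_right _ _)
        rw [abs_lt] at h1 h2
        rw [bLift_eq_of_Ico (by linarith) (by linarith),
          bLift_eq_of_Ico (by linarith) (by linarith), bCore, bCore,
          if_neg (by linarith : ¬ y ≤ 1/2), if_neg (by linarith : ¬ x ≤ 1/2),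
          if_neg (by linarith : ¬ y ≤ 3/4), if_neg (by linarith : ¬ x ≤ 3/4)]
        rw [zpow_zero]
        ring
  · intro x
    set t := Int.fract x with htdef
    have hxt : x = t + (⌊x⌋ : ℤ) := by rw [htdef, Int.fract]; push_cast; ring
    have ht0 : 0 ≤ t := Int.fract_nonneg x
    have ht1 : t < 1 := Int.fract_lt_one x
    have hcoe : ((x : ℝ) : UnitCircle) = ((t : ℝ) : UnitCircle) := by
      conv_lhs => rw [hxt]
      exact coe_int_add ⌊x⌋ t
    have hbt : b ((t : ℝ) : UnitCircle) = ((bMap t : ℝ) : UnitCircle) :=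
      hb t ⟨ht0, le_of_lt ht1⟩
    rw [hcoe, hbt]
    have hfr : Int.fract x = t := rfl
    by_cases hc : t ≤ 1/2
    · have : bLift x = bMap t + (⌊x⌋ : ℤ) := by
        rw [bLift, hfr, bCore, if_pos hc, bMap, if_pos hc]
        push_cast; ring
      rw [this, coe_int_add]
    · by_cases hc2 : t ≤ 3/4
      · have : bLift x = bMap t + ((⌊x⌋ + 1 : ℤ) : ℝ) := by
          rw [bLift, hfr, bCore, if_neg hc, if_pos hc2, bMap, if_neg hc, if_pos hc2]
          push_cast; ring
        rw [this, coe_int_add]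
      · have : bLift x = bMap t + ((⌊x⌋ + 1 : ℤ) : ℝ) := by
          rw [bLift, hfr, bCore, if_neg hc, if_neg hc2, bMap, if_neg hc, if_neg hc2]
          push_cast; ring
        rw [this, coe_int_add]

end ThompsonAux
namespace ThompsonAux

lemma list_lip {Λ : ℝ} (hΛ : 0 ≤ Λ) (hΛ1 : 1 ≤ Λ) :
    ∀ l : List (Equiv.Perm UnitCircle), (∀ x ∈ l, Lipc Λ x) → Lipc (Λ ^ l.length) l.prod := by
  intro l
  induction l with
  | nil =>
    intro _
    intro x y
    simp only [List.prod_nil, List.length_nil, pow_zero, one_mul, Equiv.Perm.coe_one, id_eq]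
    exact le_refl _
  | cons p t ih =>
    intro hmem
    rw [List.prod_cons, List.length_cons, pow_succ']
    exact lipc_mul hΛ (hmem p (by simp)) (ih (fun x hx => hmem x (by simp [hx])))

lemma uniform_lip {Z : Set (Equiv.Perm UnitCircle)} (hfin : Z.Finite)
    (h : ∀ z ∈ Z, ∃ Λ : ℝ, 2 ≤ Λ ∧ Lipc Λ z ∧ Lipc Λ z⁻¹) :
    ∃ Λ : ℝ, 2 ≤ Λ ∧ ∀ z ∈ Z, Lipc Λ z ∧ Lipc Λ z⁻¹ := by
  revert h
  refine Set.Finite.induction_on (motive := fun s _ =>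
    (∀ z ∈ s, ∃ Λ : ℝ, 2 ≤ Λ ∧ Lipc Λ z ∧ Lipc Λ z⁻¹) →
    ∃ Λ : ℝ, 2 ≤ Λ ∧ ∀ z ∈ s, Lipc Λ z ∧ Lipc Λ z⁻¹) Z hfin ?_ ?_
  · exact fun _ => ⟨2, le_rfl, by simp⟩
  · rintro x s _ _ ih h
    obtain ⟨Λ₁, hΛ₁, h1, h2⟩ := h x (Set.mem_insert x s)
    obtain ⟨Λ₂, hΛ₂, hZ⟩ := ih (fun z hz => h z (Set.mem_insert_of_mem x hz))
    refine ⟨max Λ₁ Λ₂, le_trans hΛ₁ (le_max_left _ _), ?_⟩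
    rintro z (rfl | hz)
    · exact ⟨lipc_mono (le_max_left _ _) h1, lipc_mono (le_max_left _ _) h2⟩
    · exact ⟨lipc_mono (le_max_right _ _) (hZ z hz).1,
        lipc_mono (le_max_right _ _) (hZ z hz).2⟩

end ThompsonAux
/-- The subgroup `H` of Thompson's group `T` generated by `abab` and `ab⁻¹ab⁻¹` is a
free group of rank 2 (these two elements freely generate it), and `H` is undistorted
in `T`. -/
theorem free_subgroup_undistorted (a b : Equiv.Perm UnitCircle)
    (ha : IsRotHalf a) (hb : IsBElt b) :
    Function.Injective
      (FreeGroup.lift (fun x : Bool =>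
        if x then a * b * a * b else a * b⁻¹ * a * b⁻¹) :
        FreeGroup Bool →* Equiv.Perm UnitCircle) ∧
    ∀ Z : Set (Equiv.Perm UnitCircle), Z.Finite → Subgroup.closure Z = ThompsonT →
      ∃ K : ℝ, 0 < K ∧ ∃ L : ℝ,
        ∀ g ∈ Subgroup.closure ({a * b * a * b, a * b⁻¹ * a * b⁻¹} :
            Set (Equiv.Perm UnitCircle)),
          (wordLen ({a * b * a * b, a * b⁻¹ * a * b⁻¹} : Set (Equiv.Perm UnitCircle)) g : ℝ) ≤
            K * (wordLen Z g : ℝ) + L := by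
  open ThompsonAux in
  constructor
  · exact ThompsonAux.lift_injective ha hb
  · intro Z hZfin hZT
    set u := a * b * a * b with hu
    set v := a * b⁻¹ * a * b⁻¹ with hv
    set S : Set (Equiv.Perm UnitCircle) := {u, v} with hS
    have hlipZ : ∀ z ∈ Z, ∃ Λ : ℝ, 2 ≤ Λ ∧ ThompsonAux.Lipc Λ z ∧ ThompsonAux.Lipc Λ z⁻¹ :=
      fun z hz => ThompsonAux.T_lip (by rw [← hZT]; exact Subgroup.subset_closure hz)
    obtain ⟨Λ, hΛ2, hΛ⟩ := ThompsonAux.uniform_lip hZfin hlipZ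
    have hKpos : 0 < Real.log Λ / Real.log 2 :=
      div_pos (Real.log_pos (by linarith)) (Real.log_pos one_lt_two)
    refine ⟨Real.log Λ / Real.log 2, hKpos, 0, ?_⟩
    intro g hg
    rw [add_zero]
    -- express g as the image of a free group word
    have hrangeS : Set.range (fun x : Bool => if x then u else v) = S := by
      ext z
      constructor
      · rintro ⟨x, rfl⟩
        cases x
        · simp [hS]
        · simp [hS]
      · rintro (rfl | rfl)
        · exact ⟨true, by simp⟩
        · exact ⟨false, by simp⟩
    have hrange : g ∈ (FreeGroup.lift (fun x : Bool => if x then u else v)).range := by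
      rw [FreeGroup.range_lift_eq_closure, hrangeS]
      exact hg
    obtain ⟨w, hwg⟩ := hrange
    set n := w.toWord.length with hn
    -- wordLen S g ≤ n
    have hSle : wordLen S g ≤ n := by
      apply Nat.sInf_le
      refine ⟨w.toWord.map (ThompsonAux.letterPerm a b), ?_, by simp [hn], ?_⟩
      · intro x hx
        simp only [List.mem_map] at hx
        obtain ⟨l, _, rfl⟩ := hx
        rcases l with ⟨g', s'⟩
        cases g' <;> cases s'
        · exact Or.inr (by rw [Set.mem_inv]; simp [ThompsonAux.letterPerm, hS, hu, hv])
        · exact Or.inl (by simp [ThompsonAux.letterPerm, hS, hu, hv])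
        · exact Or.inr (by rw [Set.mem_inv]; simp [ThompsonAux.letterPerm, hS, hu, hv])
        · exact Or.inl (by simp [ThompsonAux.letterPerm, hS, hu, hv])
      · rw [← hwg, ThompsonAux.lift_eq_prodL]
        rfl
    -- g lies in the closure of Z
    have hgZ : g ∈ Subgroup.closure Z := by
      rw [hZT]
      have haT : a ∈ ThompsonT :=
        Subgroup.subset_closure (ThompsonAux.a_thompson ha)
      have hbT : b ∈ ThompsonT :=
        Subgroup.subset_closure (ThompsonAux.b_thompson hb)
      have hST : S ⊆ (ThompsonT : Set (Equiv.Perm UnitCircle)) := by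
        rintro z (rfl | rfl)
        · exact mul_mem (mul_mem (mul_mem haT hbT) haT) hbT
        · exact mul_mem (mul_mem (mul_mem haT (inv_mem hbT)) haT) (inv_mem hbT)
      exact (Subgroup.closure_le ThompsonT).2 hST hg
    have hmemM : g ∈ Submonoid.closure (Z ∪ Z⁻¹) := by
      have : g ∈ (Subgroup.closure Z).toSubmonoid := hgZ
      rwa [Subgroup.closure_toSubmonoid] at this
    have hne : {k | ∃ L : List (Equiv.Perm UnitCircle),
        (∀ x ∈ L, x ∈ Z ∪ Z⁻¹) ∧ L.length = k ∧ L.prod = g}.Nonempty := by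
      obtain ⟨l, hl1, hl2⟩ := Submonoid.exists_list_of_mem_closure hmemM
      exact ⟨l.length, l, hl1, rfl, hl2⟩
    obtain ⟨lmin, hlmem, hllen, hlprod⟩ := Nat.sInf_mem hne
    set m := wordLen Z g with hm
    have hllen' : lmin.length = m := hllen
    -- Lipschitz bound on g⁻¹
    have hginv : ThompsonAux.Lipc (Λ ^ m) g⁻¹ := by
      have hdecomp : g⁻¹ = ((lmin.map fun x => x⁻¹).reverse).prod := by
        rw [← hlprod]; exact List.prod_inv_reverse lmin
      have hlen2 : ((lmin.map fun x => x⁻¹).reverse).length = m := by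
        simp [hllen']
      rw [hdecomp, ← hlen2]
      apply ThompsonAux.list_lip (by linarith) (by linarith)
      intro x hx
      simp only [List.mem_reverse, List.mem_map] at hx
      obtain ⟨z, hz, rfl⟩ := hx
      rcases hlmem z hz with hzZ | hzZi
      · exact (hΛ z hzZ).2
      · exact (hΛ z⁻¹ (Set.mem_inv.1 hzZi)).1
    rcases Nat.eq_zero_or_pos n with hn0 | hnpos
    · have hz : wordLen S g = 0 := le_antisymm (hn0 ▸ hSle) (Nat.zero_le _)
      rw [hz]
      push_cast
      exact mul_nonneg (le_of_lt hKpos) (Nat.cast_nonneg m)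
    · -- the ping-pong estimate
      have hLne : w.toWord ≠ [] := by
        intro hcon
        rw [hn, hcon] at hnpos
        simp at hnpos
      obtain ⟨L, l, hLl⟩ := (List.eq_nil_or_concat w.toWord).resolve_left hLne
      rw [List.concat_eq_append] at hLl
      have hchain : List.Chain' ThompsonAux.NoCancel (L ++ [l]) := by
        rw [← hLl]; exact ThompsonAux.chain'_toWord w
      set x₀ : ℝ := if l.1 then 7/8 else 3/8 with hx₀
      have hdom : ThompsonAux.dlo l < x₀ ∧ x₀ + 1/4 < ThompsonAux.dhi l := by
        rcases l with ⟨g', s'⟩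
        cases g' <;> cases s' <;>
          simp [ThompsonAux.dlo, ThompsonAux.dhi, hx₀] <;> norm_num
      obtain ⟨x', y', hx', hy', hxlo, hxy', hyhi, hcontr⟩ :=
        ThompsonAux.ping ha hb L l hchain x₀ (x₀ + 1/4) hdom.1 (by linarith) hdom.2
      have hgL : ∀ t : ℝ, g ((t : ℝ) : UnitCircle)
          = ThompsonAux.prodL a b (L ++ [l]) ((t : ℝ) : UnitCircle) := by
        intro t
        rw [← hwg, ThompsonAux.lift_eq_prodL, hLl]
      have hnlen : L.length + 1 = n := by
        rw [hn, hLl]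
        simp
      -- the key inequality
      have e1 : ‖((x₀ : ℝ) : UnitCircle) - ((x₀ + 1/4 : ℝ) : UnitCircle)‖ = 1/4 := by
        rw [← ThompsonAux.coe_sub_circ,
          show x₀ - (x₀ + 1/4) = -(1/4) by ring]
        have : ((-(1/4) : ℝ) : UnitCircle) = -(((1/4) : ℝ) : UnitCircle) := rfl
        rw [this, norm_neg, ThompsonAux.norm_coe_quarter]
      have e2 : ‖g ((x₀ : ℝ) : UnitCircle) - g ((x₀ + 1/4 : ℝ) : UnitCircle)‖
          ≤ (1/4) / 2^n := by
        rw [hgL, hgL, hx', hy', ← ThompsonAux.coe_sub_circ]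
        calc ‖((x' - y' : ℝ) : UnitCircle)‖ ≤ |x' - y'| := ThompsonAux.norm_coe_le _
          _ = y' - x' := by rw [abs_of_nonpos (by linarith), neg_sub]
          _ ≤ (x₀ + 1/4 - x₀) / 2 ^ (L.length + 1) := hcontr
          _ = (1/4) / 2^n := by rw [hnlen]; norm_num
      have hq : (1/4 : ℝ) ≤ Λ^m * ((1/4) / 2^n) := by
        calc (1/4 : ℝ) = ‖((x₀ : ℝ) : UnitCircle) - ((x₀ + 1/4 : ℝ) : UnitCircle)‖ := e1.symm
          _ = ‖g⁻¹ (g ((x₀ : ℝ) : UnitCircle)) - g⁻¹ (g ((x₀ + 1/4 : ℝ) : UnitCircle))‖ := by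
              rw [Equiv.Perm.inv_apply_self, Equiv.Perm.inv_apply_self]
          _ ≤ Λ^m * ‖g ((x₀ : ℝ) : UnitCircle) - g ((x₀ + 1/4 : ℝ) : UnitCircle)‖ := hginv _ _
          _ ≤ Λ^m * ((1/4) / 2^n) :=
              mul_le_mul_of_nonneg_left e2 (pow_nonneg (by linarith) m)
      have h2n : (0:ℝ) < 2^n := by positivity
      have hkey : (2:ℝ)^n ≤ Λ^m := by
        rw [show Λ^m * ((1/4)/2^n) = (Λ^m/2^n) * (1/4) by ring] at hq
        have h1 : (1:ℝ) ≤ Λ^m / 2^n := by linarith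
        calc (2:ℝ)^n = 1 * 2^n := by ring
          _ ≤ (Λ^m/2^n) * 2^n := mul_le_mul_of_nonneg_right h1 (le_of_lt h2n)
          _ = Λ^m := div_mul_cancel₀ _ (ne_of_gt h2n)
      have hlog : (n:ℝ) * Real.log 2 ≤ (m:ℝ) * Real.log Λ := by
        have := Real.log_le_log h2n hkey
        rwa [Real.log_pow, Real.log_pow] at this
      have hlog2 : (0:ℝ) < Real.log 2 := Real.log_pos one_lt_two
      have hfinal : (n:ℝ) ≤ Real.log Λ / Real.log 2 * m := by
        rw [div_mul_eq_mul_div, le_div_iff₀ hlog2]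
        linarith
      calc (wordLen S g : ℝ) ≤ (n : ℝ) := by exact_mod_cast hSle
        _ ≤ _ := hfinal
end
end
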